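/- arXiv:1807.00233 — 5 statements merged into one kernel-verified Lean document; each statement's English description precedes it below -/
import Mathlib

section
/- For every ω ∈ ℝ, every λ ∈ ℝ and every integer n ≥ 1, the quantity P_n(λ) admits the representation P_n(λ) = ∑_{k=0}^{n} α_{2k} λ^{2k}, where α_0 = 2 and, for each k ≥ 1, α_{2k} = ∑_{(k₁,k₂)} ∑_{1≤j₁<…<j_{k₁}≤n, 1≤l₁<…<l_{k₂}≤n} 1_♣(j,l) · ∫₀¹∫₀¹ v_{j₁}(x,y)⋯v_{j_{k₁}}(x,y) v_{l₁}(x,y)⋯v_{l_{k₂}}(x,y) dx dy, where the outer sum ranges over integers 0 ≤ k₁,k₂ ≤ n with k₁ + k₂ = 2k and k₁ − k₂ ≡ 0 (mod 4). -/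
open MeasureTheory Real
open scoped Matrix

/-- The skew-shift potential `v_j(x,y) = 2 cos(2π(j(j-1)/2·ω + j·y + x))`. -/
noncomputable def v (ω : ℝ) (j : ℕ) (x y : ℝ) : ℝ :=
  2 * Real.cos (2 * Real.pi * ((j : ℝ) * ((j : ℝ) - 1) / 2 * ω + (j : ℝ) * y + x))

/-- The zero-energy transfer matrix `A_j(x,y)`. -/
noncomputable def A (ω lam : ℝ) (j : ℕ) (x y : ℝ) : Matrix (Fin 2) (Fin 2) ℝ :=
  !![-(lam * v ω j x y), -1; 1, 0]

/-- The transfer matrix products `M_n(x,y) = A_n(x,y) ⋯ A_1(x,y)`. -/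
noncomputable def M (ω lam : ℝ) : ℕ → ℝ → ℝ → Matrix (Fin 2) (Fin 2) ℝ
  | 0, _, _ => 1
  | n + 1, x, y => A ω lam (n + 1) x y * M ω lam n x y

/-- `P_n(λ) = ∫₀¹∫₀¹ Tr(M_n(x,y)ᵀ M_n(x,y)) dx dy`. -/
noncomputable def P (ω : ℝ) (n : ℕ) (lam : ℝ) : ℝ :=
  ∫ x in (0:ℝ)..1, ∫ y in (0:ℝ)..1,
    Matrix.trace ((M ω lam n x y)ᵀ * M ω lam n x y)

/-- The parity ("clubsuit") condition on a pair of integer vectors: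
`j₁ - l₁` is even, and consecutive differences within `j` and within `l` are odd. -/
def club {k₁ k₂ : ℕ} (j : Fin k₁ → ℕ) (l : Fin k₂ → ℕ) : Prop :=
  (∀ (h₁ : 0 < k₁) (h₂ : 0 < k₂), Even ((j ⟨0, h₁⟩ : ℤ) - (l ⟨0, h₂⟩ : ℤ))) ∧
  (∀ s : ℕ, ∀ h : s + 1 < k₁, Odd ((j ⟨s + 1, h⟩ : ℤ) - (j ⟨s, by omega⟩ : ℤ))) ∧
  (∀ s : ℕ, ∀ h : s + 1 < k₂, Odd ((l ⟨s + 1, h⟩ : ℤ) - (l ⟨s, by omega⟩ : ℤ)))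

open scoped Classical in
/-- The coefficient `α_{2k}` of the polynomial `P_n`: `α₀ = 2`, and for `k ≥ 1` the sum
over `0 ≤ k₁,k₂ ≤ n` with `k₁+k₂ = 2k`, `k₁ - k₂ ≡ 0 (mod 4)`, of sums over strictly
increasing tuples `1 ≤ j₁ < … < j_{k₁} ≤ n`, `1 ≤ l₁ < … < l_{k₂} ≤ n` satisfying the
clubsuit condition, of `∫₀¹∫₀¹ v_{j₁}⋯v_{j_{k₁}} v_{l₁}⋯v_{l_{k₂}} dx dy`. -/
noncomputable def alpha (ω : ℝ) (n k : ℕ) : ℝ :=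
  if k = 0 then 2 else
    ∑ k₁ ∈ Finset.range (n + 1), ∑ k₂ ∈ Finset.range (n + 1),
      if k₁ + k₂ = 2 * k ∧ (4 : ℤ) ∣ ((k₁ : ℤ) - (k₂ : ℤ)) then
        ∑ j ∈ Fintype.piFinset (fun _ : Fin k₁ => Finset.Icc 1 n),
          ∑ l ∈ Fintype.piFinset (fun _ : Fin k₂ => Finset.Icc 1 n),
            if StrictMono j ∧ StrictMono l ∧ club j l then
              ∫ x in (0:ℝ)..1, ∫ y in (0:ℝ)..1,
                (∏ s, v ω (j s) x y) * (∏ s, v ω (l s) x y)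
            else 0
      else 0

namespace SkewAux

noncomputable def Emat : Matrix (Fin 2) (Fin 2) ℝ := !![1,0;0,0]
noncomputable def Jmat : Matrix (Fin 2) (Fin 2) ℝ := !![0,-1;1,0]

noncomputable def W : ℕ → Finset ℕ → Matrix (Fin 2) (Fin 2) ℝ
  | 0, _ => 1
  | n+1, S => (if n+1 ∈ S then Emat else Jmat) * W n S

noncomputable def rho (m : ℕ) : ℝ := if m % 4 = 0 then 1 else if m % 4 = 2 then -1 else 0

lemma J_sq : Jmat * Jmat = -1 := by
  ext i j
  fin_cases i <;> fin_cases j <;> simp [Jmat, Matrix.mul_apply, Fin.sum_univ_two]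

lemma J_pow_four : Jmat ^ 4 = 1 := by
  have : Jmat ^ 4 = (Jmat * Jmat) * (Jmat * Jmat) := by
    rw [show 4 = 2 + 2 by rfl, pow_add, pow_two]
  rw [this, J_sq]; simp

lemma J_pow_mod (m : ℕ) : Jmat ^ m = Jmat ^ (m % 4) := by
  conv_lhs => rw [← Nat.div_add_mod m 4]
  rw [pow_add, pow_mul, J_pow_four, one_pow, one_mul]

lemma E_J_E (m : ℕ) : Emat * Jmat ^ m * Emat = rho m • Emat := by
  rw [J_pow_mod m, rho]
  have h4 : m % 4 < 4 := Nat.mod_lt _ (by norm_num)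
  interval_cases h : m % 4 <;>
    · ext i j
      fin_cases i <;> fin_cases j <;>
        simp [Emat, Jmat, pow_succ, Matrix.mul_apply, Fin.sum_univ_two]

lemma trace_E_J (m : ℕ) : (Emat * Jmat ^ m).trace = rho m := by
  rw [J_pow_mod m, rho]
  have h4 : m % 4 < 4 := Nat.mod_lt _ (by norm_num)
  interval_cases h : m % 4 <;>
    simp [Emat, Jmat, pow_succ, Matrix.trace, Matrix.mul_apply, Fin.sum_univ_two,
      Matrix.diag]

lemma J_transpose : Jmatᵀ = Jmat ^ 3 := by
  ext i j
  fin_cases i <;> fin_cases j <;>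
    simp [Jmat, pow_succ, Matrix.mul_apply, Fin.sum_univ_two]

lemma J_pow_transpose (m : ℕ) : (Jmat ^ m)ᵀ = Jmat ^ (3 * m) := by
  rw [Matrix.transpose_pow, J_transpose, ← pow_mul, Nat.mul_comm]

lemma E_transpose : Ematᵀ = Emat := by
  ext i j; fin_cases i <;> fin_cases j <;> simp [Emat]

lemma transpose_JEJ (a b : ℕ) :
    (Jmat ^ a * Emat * Jmat ^ b)ᵀ = Jmat ^ (3*b) * (Emat * Jmat ^ (3*a)) := by
  rw [Matrix.transpose_mul, Matrix.transpose_mul, E_transpose, J_pow_transpose,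
    J_pow_transpose]

lemma trace_core (a b a' b' : ℕ) :
    ((Jmat ^ a * Emat * Jmat ^ b)ᵀ * (Jmat ^ a' * Emat * Jmat ^ b')).trace
      = rho (3 * a + a') * rho (3 * b + b') := by
  rw [transpose_JEJ, Matrix.mul_assoc, Matrix.trace_mul_comm]
  have h2 : Emat * Jmat ^ (3*a) * (Jmat ^ a' * Emat * Jmat ^ b') * Jmat ^ (3*b)
      = (Emat * Jmat ^ (3*a+a') * Emat) * Jmat ^ (b'+3*b) := by
    rw [pow_add, pow_add]
    simp only [Matrix.mul_assoc]
  rw [h2, E_J_E, Matrix.smul_mul, Matrix.trace_smul, trace_E_J]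
  rw [show b' + 3*b = 3*b + b' from Nat.add_comm _ _]
  rfl

lemma trace_core0 (a b m : ℕ) :
    ((Jmat ^ a * Emat * Jmat ^ b)ᵀ * Jmat ^ m).trace = rho (3 * a + m + 3 * b) := by
  rw [transpose_JEJ, Matrix.mul_assoc, Matrix.trace_mul_comm]
  have h2 : Emat * Jmat ^ (3*a) * Jmat ^ m * Jmat ^ (3*b)
      = Emat * Jmat ^ (3*a+m+3*b) := by
    rw [pow_add, pow_add]
    simp only [Matrix.mul_assoc]
  rw [h2, trace_E_J]

lemma trace_JJ (n : ℕ) : ((Jmat ^ n)ᵀ * Jmat ^ n).trace = 2 := by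
  rw [J_pow_transpose, ← pow_add]
  have : 3 * n + n = 4 * n := by ring
  rw [this, pow_mul, J_pow_four, one_pow, Matrix.trace_one]
  norm_num

lemma rho_odd {m : ℕ} (h : m % 2 = 1) : rho m = 0 := by
  unfold rho
  have h1 : m % 4 % 2 = 1 := by omega
  have : m % 4 ≠ 0 := by omega
  have : m % 4 ≠ 2 := by omega
  simp [*]

lemma rho_even (t : ℕ) : rho (2 * t) = (-1 : ℝ) ^ t := by
  unfold rho
  rcases Nat.even_or_odd t with ⟨u, hu⟩ | ⟨u, hu⟩
  · have h0 : 2 * t % 4 = 0 := by omega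
    have : Even t := ⟨u, hu⟩
    simp [h0, this.neg_one_pow]
  · have h2 : 2 * t % 4 = 2 := by omega
    have h2' : 2 * t % 4 ≠ 0 := by omega
    have : Odd t := ⟨u, hu⟩
    simp [h2, h2', this.neg_one_pow]


lemma W_congr {n : ℕ} {S T : Finset ℕ} (h : ∀ i, 1 ≤ i → i ≤ n → (i ∈ S ↔ i ∈ T)) :
    W n S = W n T := by
  induction n with
  | zero => rfl
  | succ n ih =>
    have h1 : (n+1 ∈ S) ↔ (n+1 ∈ T) := h _ (by omega) (by omega)
    have h2 : W n S = W n T := ih (fun i hi1 hi2 => h i hi1 (by omega))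
    simp only [W]
    by_cases hm : n+1 ∈ S
    · rw [if_pos hm, if_pos (h1.mp hm), h2]
    · rw [if_neg hm, if_neg (fun c => hm (h1.mpr c)), h2]

lemma W_empty (n : ℕ) : W n (∅ : Finset ℕ) = Jmat ^ n := by
  induction n with
  | zero => rfl
  | succ n ih => simp only [W, Finset.notMem_empty, if_false, ih, pow_succ']

lemma image_succ_tuple {k : ℕ} (j : Fin (k+1) → ℕ) :
    Finset.image j Finset.univ
      = insert (j (Fin.last k)) (Finset.image (j ∘ Fin.castSucc) Finset.univ) := by
  ext x
  simp only [Finset.mem_image, Finset.mem_insert, Finset.mem_univ, true_and,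
    Function.comp_apply]
  constructor
  · rintro ⟨s, rfl⟩
    rcases Fin.eq_castSucc_or_eq_last s with ⟨s', rfl⟩ | rfl
    · exact Or.inr ⟨s', rfl⟩
    · exact Or.inl rfl
  · rintro (rfl | ⟨s', rfl⟩)
    exacts [⟨_, rfl⟩, ⟨_, rfl⟩]

lemma W_step_top {n k : ℕ} {j : Fin (k+1) → ℕ} (hmono : StrictMono j)
    (hlast : j (Fin.last k) = n + 1) :
    W (n+1) (Finset.image j Finset.univ)
      = Emat * W n (Finset.image (j ∘ Fin.castSucc) Finset.univ) := by
  have hmem : n + 1 ∈ Finset.image j Finset.univ :=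
    Finset.mem_image.mpr ⟨_, Finset.mem_univ _, hlast⟩
  simp only [W]
  rw [if_pos hmem]
  congr 1
  apply W_congr
  intro i h1 h2
  simp only [Finset.mem_image, Finset.mem_univ, true_and, Function.comp_apply]
  constructor
  · rintro ⟨s, rfl⟩
    rcases Fin.eq_castSucc_or_eq_last s with ⟨s', rfl⟩ | rfl
    · exact ⟨s', rfl⟩
    · omega
  · rintro ⟨s', rfl⟩; exact ⟨_, rfl⟩

lemma W_step_J {n k : ℕ} {j : Fin (k+1) → ℕ} (hmono : StrictMono j)
    (hlast : j (Fin.last k) ≤ n) :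
    W (n+1) (Finset.image j Finset.univ) = Jmat * W n (Finset.image j Finset.univ) := by
  have hmem : n + 1 ∉ Finset.image j Finset.univ := by
    simp only [Finset.mem_image, Finset.mem_univ, true_and, not_exists]
    intro s hs
    have := hmono.monotone (Fin.le_last s)
    omega
  simp only [W]
  rw [if_neg hmem]

lemma W_spec {n : ℕ} : ∀ {k : ℕ} (j : Fin (k+1) → ℕ), StrictMono j → 1 ≤ j 0 →
    j (Fin.last k) ≤ n →
    (∀ (s : ℕ) (h : s + 1 < k + 1), Odd ((j ⟨s+1, h⟩ : ℤ) - (j ⟨s, by omega⟩ : ℤ))) →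
    ∃ e : ℕ, (j (Fin.last k) : ℤ) = (j 0 : ℤ) + k + 2 * e ∧
      W n (Finset.image j Finset.univ)
        = (-1 : ℝ) ^ e • (Jmat ^ (n - j (Fin.last k)) * Emat * Jmat ^ (j 0 - 1)) := by
  induction n with
  | zero =>
    intro k j hmono h1 hlast _
    exact absurd (le_trans h1 (le_trans (hmono.monotone (Fin.zero_le _)) hlast)) (by omega)
  | succ n ih =>
    intro k j hmono h1 hlast hodd
    by_cases hle : j (Fin.last k) ≤ n
    · obtain ⟨e, heq, hw⟩ := ih j hmono h1 hle hodd
      refine ⟨e, heq, ?_⟩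
      rw [W_step_J hmono hle, hw, Matrix.mul_smul]
      congr 1
      rw [show n + 1 - j (Fin.last k) = (n - j (Fin.last k)) + 1 by omega, pow_succ']
      simp only [Matrix.mul_assoc]
    · have hlast' : j (Fin.last k) = n + 1 := by omega
      rw [W_step_top hmono hlast']
      cases k with
      | zero =>
        have hj0 : j 0 = n + 1 := by
          have : (0 : Fin 1) = Fin.last 0 := rfl
          rw [this, hlast']
        refine ⟨0, by norm_num [show Fin.last 0 = (0 : Fin 1) from rfl], ?_⟩
        have hemp : Finset.image (j ∘ Fin.castSucc) Finset.univ = (∅ : Finset ℕ) := by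
          simp [Finset.univ_eq_empty]
        rw [hemp, W_empty, hlast', Nat.sub_self]
        simp [hj0]
      | succ k' =>
        set j' : Fin (k'+1) → ℕ := j ∘ Fin.castSucc with hj'
        have hmono' : StrictMono j' := hmono.comp Fin.strictMono_castSucc
        have h1' : 1 ≤ j' 0 := by
          simpa [hj', Fin.castSucc_zero] using h1
        have hgap : Odd ((j (Fin.last (k'+1)) : ℤ) - (j' (Fin.last k') : ℤ)) := by
          have := hodd k' (by omega)
          convert this using 3 <;> rfl
        have hlt : j' (Fin.last k') < n + 1 := by
          rw [← hlast']
          exact hmono (Fin.castSucc_lt_last _)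
        have hle' : j' (Fin.last k') ≤ n := by omega
        have hodd' : ∀ (s : ℕ) (h : s + 1 < k' + 1),
            Odd ((j' ⟨s+1, h⟩ : ℤ) - (j' ⟨s, by omega⟩ : ℤ)) := by
          intro s h
          have := hodd s (by omega)
          convert this using 3 <;> rfl
        obtain ⟨e', heq', hw'⟩ := ih j' hmono' h1' hle' hodd'
        -- the gap between j' last and n+1 is odd, so m := n - j' last is even
        obtain ⟨w, hwodd⟩ := hgap
        rw [hlast'] at hwodd
        set m : ℕ := n - j' (Fin.last k') with hm
        have hmz : (m : ℤ) = (n : ℤ) - (j' (Fin.last k') : ℤ) := by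
          push_cast [hm]; omega
        have hmeven : ∃ u, m = 2 * u := by
          refine ⟨m / 2, ?_⟩
          omega
        obtain ⟨u, hu⟩ := hmeven
        refine ⟨e' + u, ?_, ?_⟩
        · have hj0 : j' 0 = j 0 := by simp [hj', Fin.castSucc_zero]
          rw [hlast']
          rw [hj0] at heq'
          push_cast
          omega
        · rw [hw', Matrix.mul_smul, hlast', Nat.sub_self, pow_zero, one_mul]
          have hassoc : Emat * (Jmat ^ m * Emat * Jmat ^ (j' 0 - 1))
              = (Emat * Jmat ^ m * Emat) * Jmat ^ (j' 0 - 1) := by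
            simp only [Matrix.mul_assoc]
          rw [hassoc, E_J_E, hu, rho_even, Matrix.smul_mul, smul_smul, ← pow_add]
          have hj0 : j' 0 = j 0 := by simp [hj']
          rw [hj0]

lemma W_zero {n : ℕ} : ∀ {k : ℕ} (j : Fin (k+1) → ℕ), StrictMono j → 1 ≤ j 0 →
    j (Fin.last k) ≤ n →
    (∃ (s : ℕ) (h : s + 1 < k + 1), Even ((j ⟨s+1, h⟩ : ℤ) - (j ⟨s, by omega⟩ : ℤ))) →
    W n (Finset.image j Finset.univ) = 0 := by
  induction n with
  | zero =>
    intro k j hmono h1 hlast _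
    exact absurd (le_trans h1 (le_trans (hmono.monotone (Fin.zero_le _)) hlast)) (by omega)
  | succ n ih =>
    intro k j hmono h1 hlast hev
    by_cases hle : j (Fin.last k) ≤ n
    · rw [W_step_J hmono hle, ih j hmono h1 hle hev, mul_zero]
    · have hlast' : j (Fin.last k) = n + 1 := by omega
      rw [W_step_top hmono hlast']
      cases k with
      | zero => obtain ⟨s, hs, _⟩ := hev; omega
      | succ k' =>
        set j' : Fin (k'+1) → ℕ := j ∘ Fin.castSucc with hj'
        have hmono' : StrictMono j' := hmono.comp Fin.strictMono_castSucc
        have h1' : 1 ≤ j' 0 := by simpa [hj', Fin.castSucc_zero] using h1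
        have hlt : j' (Fin.last k') < n + 1 := by
          rw [← hlast']; exact hmono (Fin.castSucc_lt_last _)
        have hle' : j' (Fin.last k') ≤ n := by omega
        by_cases hlower : ∃ (s : ℕ) (h : s + 1 < k' + 1),
            Even ((j' ⟨s+1, h⟩ : ℤ) - (j' ⟨s, by omega⟩ : ℤ))
        · rw [ih j' hmono' h1' hle' hlower, mul_zero]
        · push_neg at hlower
          have hodd' : ∀ (s : ℕ) (h : s + 1 < k' + 1),
              Odd ((j' ⟨s+1, h⟩ : ℤ) - (j' ⟨s, by omega⟩ : ℤ)) := by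
            intro s h
            exact (Int.not_even_iff_odd).mp (hlower s h)
          -- the even gap must be the top one
          obtain ⟨s, hs, hevgap⟩ := hev
          have hstop : s = k' := by
            by_contra hne
            have hs' : s + 1 < k' + 1 := by omega
            exact absurd hevgap (by
              have := hodd' s hs'
              have heq : (j' ⟨s+1, hs'⟩ : ℤ) - (j' ⟨s, by omega⟩ : ℤ)
                  = (j ⟨s+1, hs⟩ : ℤ) - (j ⟨s, by omega⟩ : ℤ) := by
                congr 2 <;> rfl
              rw [heq] at this
              exact (Int.not_even_iff_odd).mpr this)
          subst hstop
          have hgap : Even ((j (Fin.last (s+1)) : ℤ) - (j' (Fin.last s) : ℤ)) := by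
            convert hevgap using 3 <;> rfl
          obtain ⟨e', heq', hw'⟩ := W_spec j' hmono' h1' hle' hodd'
          rw [hw', Matrix.mul_smul]
          set m : ℕ := n - j' (Fin.last s) with hm
          have hmodd : m % 2 = 1 := by
            obtain ⟨w, hw2⟩ := hgap
            rw [hlast'] at hw2
            omega
          have : Emat * (Jmat ^ m * Emat * Jmat ^ (j' 0 - 1))
              = (Emat * Jmat ^ m * Emat) * Jmat ^ (j' 0 - 1) := by
            simp only [Matrix.mul_assoc]
          rw [this, E_J_E, rho_odd hmodd, zero_smul, Matrix.zero_mul, smul_zero]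


lemma A_decomp (ω lam : ℝ) (i : ℕ) (x y : ℝ) :
    A ω lam i x y = (-(lam * v ω i x y)) • Emat + Jmat := by
  ext a b
  fin_cases a <;> fin_cases b <;> simp [A, Emat, Jmat]

lemma M_expand (ω lam : ℝ) (n : ℕ) (x y : ℝ) :
    M ω lam n x y = ∑ S ∈ (Finset.Icc 1 n).powerset,
      ((-lam) ^ S.card * ∏ i ∈ S, v ω i x y) • W n S := by
  induction n with
  | zero =>
    rw [show Finset.Icc 1 0 = (∅ : Finset ℕ) by simp]
    rw [Finset.powerset_empty, Finset.sum_singleton]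
    simp [M, W]
  | succ n ih =>
    have hnot : (n+1 : ℕ) ∉ Finset.Icc 1 n := by simp
    have hicc : Finset.Icc 1 (n+1) = insert (n+1) (Finset.Icc 1 n) := by
      ext i; simp; omega
    rw [show M ω lam (n+1) x y = A ω lam (n+1) x y * M ω lam n x y from rfl,
      ih, A_decomp, add_mul, Finset.mul_sum, Finset.mul_sum, hicc,
      Finset.sum_powerset_insert hnot, add_comm]
    congr 1
    · -- J part
      apply Finset.sum_congr rfl
      intro S hS
      have hSn : (n+1) ∉ S := fun c => hnot (Finset.mem_powerset.mp hS c)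
      have hW : W (n+1) S = Jmat * W n S := by
        simp only [W]; rw [if_neg hSn]
      rw [hW, Matrix.mul_smul]
    · -- E part
      apply Finset.sum_congr rfl
      intro S hS
      have hSn : (n+1) ∉ S := fun c => hnot (Finset.mem_powerset.mp hS c)
      have hW : W (n+1) (insert (n+1) S) = Emat * W n S := by
        simp only [W]
        rw [if_pos (Finset.mem_insert_self _ _)]
        congr 1
        apply W_congr
        intro i h1 h2
        simp only [Finset.mem_insert]
        constructor
        · rintro (rfl | h); · omega
          · exact h
        · intro h; exact Or.inr h
      rw [hW, Finset.card_insert_of_notMem hSn, Finset.prod_insert hSn,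
        Matrix.mul_smul, Matrix.smul_mul, smul_smul]
      congr 1
      ring


open Complex in
lemma exp_sum_eval {ι : Type*} [Fintype ι] [DecidableEq ι]
    (c : ι → ℝ) (d : ι → ℕ) (t : Finset ι) (y : ℝ) :
    (∏ i ∈ t, Complex.exp ((((2 * Real.pi * (c i + (d i : ℝ) * y)) : ℝ) : ℂ) * Complex.I)) *
      (∏ i ∈ Finset.univ \ t, Complex.exp (-((((2 * Real.pi * (c i + (d i : ℝ) * y)) : ℝ) : ℂ)) * Complex.I))
    = Complex.exp ((((∑ i ∈ t, c i - ∑ i ∈ Finset.univ \ t, c i) : ℝ) : ℂ) * (2 * (Real.pi:ℂ) * Complex.I))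
      * Complex.exp ((((∑ i ∈ t, (d i : ℤ)) - ∑ i ∈ Finset.univ \ t, (d i : ℤ) : ℤ) : ℂ)
          * (2 * (Real.pi:ℂ) * Complex.I) * (y : ℂ)) := by
  rw [← Complex.exp_sum, ← Complex.exp_sum, ← Complex.exp_add, ← Complex.exp_add]
  congr 1
  have h1 : ∀ u : Finset ι,
      ∑ i ∈ u, (((2 * Real.pi * (c i + (d i : ℝ) * y)) : ℝ) : ℂ) * Complex.I
      = (((∑ i ∈ u, c i : ℝ)) : ℂ) * (2 * (Real.pi:ℂ) * Complex.I)
        + (((∑ i ∈ u, (d i : ℤ)) : ℤ) : ℂ) * (2 * (Real.pi:ℂ) * Complex.I) * (y:ℂ) := by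
    intro u
    calc ∑ i ∈ u, (((2 * Real.pi * (c i + (d i : ℝ) * y)) : ℝ) : ℂ) * Complex.I
        = ∑ i ∈ u, ((c i : ℂ) * (2 * (Real.pi:ℂ) * Complex.I)
            + ((d i : ℕ) : ℂ) * ((2 * (Real.pi:ℂ) * Complex.I) * (y:ℂ))) := by
          refine Finset.sum_congr rfl fun i _ => ?_
          push_cast
          ring
      _ = _ := by
          rw [Finset.sum_add_distrib, ← Finset.sum_mul, ← Finset.sum_mul]
          push_cast
          ring
  have h2 : ∑ i ∈ Finset.univ \ t, -((((2 * Real.pi * (c i + (d i : ℝ) * y)) : ℝ) : ℂ)) * Complex.I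
      = -(∑ i ∈ Finset.univ \ t, (((2 * Real.pi * (c i + (d i : ℝ) * y)) : ℝ) : ℂ) * Complex.I) := by
    rw [← Finset.sum_neg_distrib]
    refine Finset.sum_congr rfl fun i _ => by ring
  rw [h2, h1, h1]
  push_cast
  ring

open Complex in
lemma cos_prod_integral_zero {ι : Type*} [Fintype ι] [DecidableEq ι]
    (c : ι → ℝ) (d : ι → ℕ) (hodd : ¬ (2 ∣ ∑ i, d i)) :
    ∫ y in (0:ℝ)..1, ∏ i, 2 * Real.cos (2 * Real.pi * (c i + (d i : ℝ) * y)) = 0 := by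
  set B : Finset ι → ℤ := fun t => (∑ i ∈ t, (d i : ℤ)) - ∑ i ∈ Finset.univ \ t, (d i : ℤ) with hB
  set C : Finset ι → ℝ := fun t => ∑ i ∈ t, c i - ∑ i ∈ Finset.univ \ t, c i with hC
  have hBne : ∀ t : Finset ι, B t ≠ 0 := by
    intro t
    have hsplit : ∑ i ∈ Finset.univ \ t, d i + ∑ i ∈ t, d i = ∑ i, d i :=
      Finset.sum_sdiff (Finset.subset_univ t)
    have h1 : (∑ i ∈ t, (d i : ℤ)) = ((∑ i ∈ t, d i : ℕ) : ℤ) := by push_cast; rfl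
    have h2 : (∑ i ∈ Finset.univ \ t, (d i : ℤ)) = ((∑ i ∈ Finset.univ \ t, d i : ℕ) : ℤ) := by
      push_cast; rfl
    simp only [hB, h1, h2]
    omega
  have key : ((∫ y in (0:ℝ)..1, ∏ i, 2 * Real.cos (2 * Real.pi * (c i + (d i : ℝ) * y)) : ℝ) : ℂ) = 0 := by
    rw [← intervalIntegral.integral_ofReal]
    have hpt : ∀ y : ℝ, ((∏ i, 2 * Real.cos (2 * Real.pi * (c i + (d i : ℝ) * y)) : ℝ) : ℂ)
        = ∑ t ∈ (Finset.univ : Finset ι).powerset,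
            Complex.exp (((C t : ℝ) : ℂ) * (2 * (Real.pi:ℂ) * Complex.I))
              * Complex.exp (((B t : ℤ) : ℂ) * (2 * (Real.pi:ℂ) * Complex.I) * (y : ℂ)) := by
      intro y
      rw [Complex.ofReal_prod]
      have : ∀ i : ι, ((2 * Real.cos (2 * Real.pi * (c i + (d i : ℝ) * y)) : ℝ) : ℂ)
          = Complex.exp ((((2 * Real.pi * (c i + (d i : ℝ) * y)) : ℝ) : ℂ) * Complex.I)
            + Complex.exp (-((((2 * Real.pi * (c i + (d i : ℝ) * y)) : ℝ) : ℂ)) * Complex.I) := by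
        intro i
        push_cast
        rw [← Complex.two_cos]
      rw [Finset.prod_congr rfl (fun i _ => this i), Finset.prod_add]
      exact Finset.sum_congr rfl fun t _ => exp_sum_eval c d t y
    rw [intervalIntegral.integral_congr (fun y _ => hpt y)]
    rw [intervalIntegral.integral_finset_sum]
    · apply Finset.sum_eq_zero
      intro t _
      rw [intervalIntegral.integral_const_mul]
      have hne : ((B t : ℤ) : ℂ) * (2 * (Real.pi:ℂ) * Complex.I) ≠ 0 := by
        apply mul_ne_zero
        · exact_mod_cast Int.cast_ne_zero.mpr (hBne t)
        · simp [Real.pi_ne_zero, Complex.I_ne_zero]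
      rw [integral_exp_mul_complex hne]
      rw [Complex.ofReal_one, Complex.ofReal_zero, mul_one, mul_zero, Complex.exp_zero]
      rw [Complex.exp_int_mul_two_pi_mul_I]
      simp
    · intro t _
      apply Continuous.intervalIntegrable
      fun_prop
  exact_mod_cast key


lemma tuple_chain {k : ℕ} (j : Fin k → ℕ) (hk : 0 < k)
    (hodd : ∀ (s : ℕ) (h : s + 1 < k), Odd ((j ⟨s+1, h⟩ : ℤ) - (j ⟨s, by omega⟩ : ℤ))) :
    ∀ (s : ℕ) (h : s < k), Even ((j ⟨s, h⟩ : ℤ) - (j ⟨0, hk⟩ : ℤ) - s) := by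
  intro s
  induction s with
  | zero => intro h; simp
  | succ s ih =>
    intro h
    have h1 : s < k := by omega
    obtain ⟨a, ha⟩ := ih h1
    obtain ⟨b, hb⟩ := hodd s h
    have hb' : (j ⟨s+1, h⟩ : ℤ) - (j ⟨s, h1⟩ : ℤ) = 2 * b + 1 := hb
    have ha' : (j ⟨s, h1⟩ : ℤ) - (j ⟨0, hk⟩ : ℤ) - s = a + a := ha
    refine ⟨a + b, ?_⟩
    push_cast
    push_cast at ha' hb'
    omega

lemma tuple_parity {k : ℕ} (j : Fin k → ℕ) (hk : 0 < k)
    (hodd : ∀ (s : ℕ) (h : s + 1 < k), Odd ((j ⟨s+1, h⟩ : ℤ) - (j ⟨s, by omega⟩ : ℤ))) :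
    ∃ t : ℤ, 2 * (∑ s, (j s : ℤ))
      = 2 * k * (j ⟨0, hk⟩ : ℤ) + (k : ℤ) * ((k : ℤ) - 1) + 4 * t := by
  have hsum_even : Even (∑ s : Fin k, ((j s : ℤ) - (j ⟨0, hk⟩ : ℤ) - ((s : ℕ) : ℤ))) := by
    apply Finset.even_sum
    intro s _
    have := tuple_chain j hk hodd s s.isLt
    simpa using this
  obtain ⟨w, hw⟩ := hsum_even
  have hsplit : ∑ s : Fin k, ((j s : ℤ) - (j ⟨0, hk⟩ : ℤ) - ((s : ℕ) : ℤ))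
      = (∑ s, (j s : ℤ)) - k * (j ⟨0, hk⟩ : ℤ) - ∑ s : Fin k, ((s : ℕ) : ℤ) := by
    rw [Finset.sum_sub_distrib, Finset.sum_sub_distrib, Finset.sum_const,
      Finset.card_univ, Fintype.card_fin, nsmul_eq_mul]
  have hT : (∑ s : Fin k, ((s : ℕ) : ℤ)) * 2 = (k : ℤ) * ((k : ℤ) - 1) := by
    have h1 : (∑ s : Fin k, ((s : ℕ) : ℤ)) = ((∑ i ∈ Finset.range k, i : ℕ) : ℤ) := by
      rw [Fin.sum_univ_eq_sum_range (fun i => (i : ℤ)) k]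
      push_cast
      rfl
    have h2 := Finset.sum_range_id_mul_two k
    rw [h1]
    have : (((∑ i ∈ Finset.range k, i) * 2 : ℕ) : ℤ) = ((k * (k-1) : ℕ) : ℤ) := by
      exact_mod_cast h2
    push_cast [Nat.cast_sub (by omega : 1 ≤ k)] at this
    push_cast
    omega
  exact ⟨w, by rw [hsplit] at hw; linarith [hw, hT]⟩

open scoped Classical

noncomputable def ItgT (ω : ℝ) {k₁ k₂ : ℕ} (j : Fin k₁ → ℕ) (l : Fin k₂ → ℕ) : ℝ :=
  ∫ x in (0:ℝ)..1, ∫ y in (0:ℝ)..1,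
    (∏ s, v ω (j s) x y) * (∏ s, v ω (l s) x y)

noncomputable def cT (n : ℕ) {k₁ k₂ : ℕ} (j : Fin k₁ → ℕ) (l : Fin k₂ → ℕ) : ℝ :=
  ((W n (Finset.image j Finset.univ))ᵀ * W n (Finset.image l Finset.univ)).trace

lemma ItgT_zero (ω : ℝ) {k₁ k₂ : ℕ} (j : Fin k₁ → ℕ) (l : Fin k₂ → ℕ)
    (hsum : ¬ (2 ∣ ((∑ s, j s) + ∑ s, l s))) : ItgT ω j l = 0 := by
  unfold ItgT
  have inner : ∀ x : ℝ,
      (∫ y in (0:ℝ)..1, (∏ s, v ω (j s) x y) * (∏ s, v ω (l s) x y)) = 0 := by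
    intro x
    have hrw : ∀ y : ℝ, (∏ s, v ω (j s) x y) * (∏ s, v ω (l s) x y)
        = ∏ i : Fin k₁ ⊕ Fin k₂,
            2 * Real.cos (2 * Real.pi *
              ((Sum.elim (fun s => (j s : ℝ) * ((j s : ℝ) - 1) / 2 * ω + x)
                  (fun s => (l s : ℝ) * ((l s : ℝ) - 1) / 2 * ω + x) i)
                + ((Sum.elim j l i : ℕ) : ℝ) * y)) := by
      intro y
      rw [Fintype.prod_sum_type]
      congr 1
      · refine Finset.prod_congr rfl fun s _ => ?_
        unfold v
        congr 2
        simp only [Sum.elim_inl]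
        ring
      · refine Finset.prod_congr rfl fun s _ => ?_
        unfold v
        congr 2
        simp only [Sum.elim_inr]
        ring
    simp only [hrw]
    apply cos_prod_integral_zero
    rw [Fintype.sum_sum_type]
    exact hsum
  simp only [inner]
  simp

lemma cT_zero_left (ω : ℝ) {n k₁ k₂ : ℕ} (j : Fin (k₁+1) → ℕ) (l : Fin k₂ → ℕ)
    (hj : StrictMono j) (h1 : 1 ≤ j 0) (hlast : j (Fin.last k₁) ≤ n)
    (hev : ∃ (s : ℕ) (h : s + 1 < k₁ + 1), Even ((j ⟨s+1, h⟩ : ℤ) - (j ⟨s, by omega⟩ : ℤ))) :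
    cT n j l = 0 := by
  unfold cT
  rw [W_zero j hj h1 hlast hev]
  simp

lemma cT_zero_right (ω : ℝ) {n k₁ k₂ : ℕ} (j : Fin k₁ → ℕ) (l : Fin (k₂+1) → ℕ)
    (hl : StrictMono l) (h1 : 1 ≤ l 0) (hlast : l (Fin.last k₂) ≤ n)
    (hev : ∃ (s : ℕ) (h : s + 1 < k₂ + 1), Even ((l ⟨s+1, h⟩ : ℤ) - (l ⟨s, by omega⟩ : ℤ))) :
    cT n j l = 0 := by
  unfold cT
  rw [W_zero l hl h1 hlast hev]
  simp


lemma zmod4_parity : ∀ (S K1 K2 J L W : ZMod 4),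
    2*S = 2*K1*J + K1*(K1-1) + 2*K2*L + K2*(K2-1) →
    K1 - K2 = 2 → J = L + 2*W → S = 1 ∨ S = 3 := by decide

lemma zmod4_noteven : ∀ m : ZMod 4, 2*m ≠ 1 ∧ 2*m ≠ 3 := by decide

lemma int_parity_bridge (S K1 K2 J L t : ℤ)
    (h1 : 2*S = 2*K1*J + K1*(K1-1) + 2*K2*L + K2*(K2-1) + 4*t)
    (h2' : ∃ z, K1 - K2 = 4*z + 2) (h3' : ∃ w, J - L = 2*w) : ¬ (2 ∣ S) := by
  obtain ⟨z, h2⟩ := h2'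
  obtain ⟨w, h3⟩ := h3'
  have c1 : ((2*S : ℤ) : ZMod 4)
      = ((2*K1*J + K1*(K1-1) + 2*K2*L + K2*(K2-1) + 4*t : ℤ) : ZMod 4) := by
    exact_mod_cast congrArg (Int.cast : ℤ → ZMod 4) h1
  have h4 : ((4 : ℤ) : ZMod 4) = 0 := by decide
  push_cast at c1
  have h40 : (4 : ZMod 4) = 0 := by decide
  rw [h40, zero_mul, add_zero] at c1
  have c2 : (K1 : ZMod 4) - (K2 : ZMod 4) = 2 := by
    have := congrArg (Int.cast : ℤ → ZMod 4) h2
    push_cast at this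
    rw [h40] at this
    rw [this]; ring
  have c3 : (J : ZMod 4) = (L : ZMod 4) + 2 * (w : ZMod 4) := by
    have := congrArg (Int.cast : ℤ → ZMod 4) h3
    push_cast at this
    linear_combination this
  have hS := zmod4_parity (S : ZMod 4) _ _ _ _ _ c1 c2 c3
  rintro ⟨m, hm⟩
  have : ((S : ℤ) : ZMod 4) = 2 * (m : ZMod 4) := by
    rw [hm]; push_cast; ring
  rcases hS with h | h <;> rw [h] at this
  · exact (zmod4_noteven (m : ZMod 4)).1 this.symm
  · exact (zmod4_noteven (m : ZMod 4)).2 this.symm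


lemma pair_eval (ω : ℝ) (n : ℕ) {k₁ k₂ : ℕ} (j : Fin k₁ → ℕ) (l : Fin k₂ → ℕ)
    (hj : StrictMono j) (hl : StrictMono l)
    (hjm : ∀ s, j s ∈ Finset.Icc 1 n) (hlm : ∀ s, l s ∈ Finset.Icc 1 n)
    (hne : ¬ (k₁ = 0 ∧ k₂ = 0)) :
    cT n j l * ItgT ω j l
      = if club j l ∧ (4:ℤ) ∣ ((k₁ : ℤ) - (k₂ : ℤ)) then ItgT ω j l else 0 := by
  cases k₁ with
  | zero =>
    cases k₂ with
    | zero => exact absurd ⟨rfl, rfl⟩ hne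
    | succ b =>
      have hl1 : 1 ≤ l 0 := (Finset.mem_Icc.mp (hlm 0)).1
      have hln : l (Fin.last b) ≤ n := (Finset.mem_Icc.mp (hlm _)).2
      have himg : Finset.image j Finset.univ = (∅ : Finset ℕ) := by
        simp [Finset.univ_eq_empty]
      by_cases hgl : ∀ (s : ℕ) (h : s + 1 < b + 1),
          Odd ((l ⟨s+1, h⟩ : ℤ) - (l ⟨s, by omega⟩ : ℤ))
      · obtain ⟨e', heq', hw'⟩ := W_spec (n := n) l hl hl1 hln hgl
        have hcT : cT n j l = (-1:ℝ)^e' *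
            rho (3*(n - l (Fin.last b)) + n + 3*(l 0 - 1)) := by
          unfold cT
          rw [himg, W_empty, hw', Matrix.mul_smul, Matrix.trace_smul, smul_eq_mul]
          congr 1
          have hflip : (Jmat^n)ᵀ * (Jmat ^ (n - l (Fin.last b)) * Emat * Jmat ^ (l 0 - 1))
              = ((Jmat ^ (n - l (Fin.last b)) * Emat * Jmat ^ (l 0 - 1))ᵀ * Jmat^n)ᵀ := by
            rw [Matrix.transpose_mul, Matrix.transpose_transpose]
          rw [hflip, Matrix.trace_transpose, trace_core0]
        by_cases hdvd : (4:ℤ) ∣ (((0:ℕ) : ℤ) - ((b+1 : ℕ) : ℤ))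
        · have hclub : club j l := ⟨fun h₁ _ => absurd h₁ (by omega),
            fun s h => absurd h (by omega), hgl⟩
          rw [if_pos ⟨hclub, hdvd⟩, hcT]
          obtain ⟨z, hz⟩ := hdvd
          push_cast at hz
          obtain ⟨s2, hs2⟩ : ∃ s2, 3*(n - l (Fin.last b)) + n + 3*(l 0 - 1) = 2*s2 := by
            refine ⟨(3*(n - l (Fin.last b)) + n + 3*(l 0 - 1))/2, ?_⟩
            omega
          rw [hs2, rho_even, ← pow_add]
          rw [Even.neg_one_pow (by rw [Nat.even_iff]; omega), one_mul]
        · rw [if_neg (fun hc => hdvd hc.2)]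
          rcases Nat.even_or_odd (b+1) with hpar | hpar
          · -- k₂ ≡ 2 mod 4: integral vanishes
            have hIz : ItgT ω j l = 0 := by
              apply ItgT_zero
              obtain ⟨t2, ht2⟩ := tuple_parity l (by omega) hgl
              have hl00 : (⟨0, by omega⟩ : Fin (b+1)) = 0 := by
                apply Fin.ext; simp
              rw [hl00] at ht2
              have hbridge : ¬ ((2:ℤ) ∣ (∑ s, (l s : ℤ))) := by
                apply int_parity_bridge _ ((b:ℤ)+1) 0 ((l 0 : ℤ)) ((l 0 : ℤ)) t2
                · push_cast at ht2 ⊢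
                  linarith [ht2]
                · obtain ⟨c, hc⟩ := hpar
                  exact ⟨((b:ℤ)+1-2)/4, by omega⟩
                · exact ⟨0, by ring⟩
              intro hd
              apply hbridge
              have h0 : (∑ s : Fin 0, j s) = 0 := by simp
              rw [h0, zero_add] at hd
              have : ((2:ℤ)) ∣ ((∑ s, l s : ℕ) : ℤ) := by exact_mod_cast hd
              rwa [show ((∑ s, l s : ℕ) : ℤ) = ∑ s, (l s : ℤ) from by push_cast; rfl] at this
            rw [hIz, mul_zero]
          · -- k₂ odd: cT = 0
            obtain ⟨c, hc⟩ := hpar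
            have hrz : rho (3*(n - l (Fin.last b)) + n + 3*(l 0 - 1)) = 0 :=
              rho_odd (by omega)
            rw [hcT, hrz, mul_zero, zero_mul]
      · have hcf : ¬ (club j l ∧ (4:ℤ) ∣ (((0:ℕ):ℤ) - ((b+1:ℕ):ℤ))) :=
          fun hc => hgl hc.1.2.2
        rw [if_neg hcf]
        push_neg at hgl
        obtain ⟨s, h, hnot⟩ := hgl
        rw [cT_zero_right ω j l hl hl1 hln ⟨s, h, Int.not_odd_iff_even.mp hnot⟩, zero_mul]
  | succ a =>
    have hj1 : 1 ≤ j 0 := (Finset.mem_Icc.mp (hjm 0)).1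
    have hjn : j (Fin.last a) ≤ n := (Finset.mem_Icc.mp (hjm _)).2
    by_cases hgj : ∀ (s : ℕ) (h : s + 1 < a + 1),
        Odd ((j ⟨s+1, h⟩ : ℤ) - (j ⟨s, by omega⟩ : ℤ))
    case neg =>
      have hcf : ¬ (club j l ∧ (4:ℤ) ∣ (((a+1:ℕ):ℤ) - ((k₂:ℕ):ℤ))) :=
        fun hc => hgj hc.1.2.1
      rw [if_neg hcf]
      push_neg at hgj
      obtain ⟨s, h, hnot⟩ := hgj
      rw [cT_zero_left ω j l hj hj1 hjn ⟨s, h, Int.not_odd_iff_even.mp hnot⟩, zero_mul]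
    case pos =>
    obtain ⟨e, heq, hw⟩ := W_spec (n := n) j hj hj1 hjn hgj
    have hj00 : (⟨0, by omega⟩ : Fin (a+1)) = 0 := by apply Fin.ext; simp
    cases k₂ with
    | zero =>
      have himg : Finset.image l Finset.univ = (∅ : Finset ℕ) := by
        simp [Finset.univ_eq_empty]
      have hcT : cT n j l = (-1:ℝ)^e *
          rho (3*(n - j (Fin.last a)) + n + 3*(j 0 - 1)) := by
        unfold cT
        rw [himg, W_empty, hw, Matrix.transpose_smul, Matrix.smul_mul,
          Matrix.trace_smul, smul_eq_mul, trace_core0]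
      by_cases hdvd : (4:ℤ) ∣ (((a+1:ℕ):ℤ) - ((0:ℕ):ℤ))
      · have hclub : club j l := ⟨fun _ h₂ => absurd h₂ (by omega), hgj,
          fun s h => absurd h (by omega)⟩
        rw [if_pos ⟨hclub, hdvd⟩, hcT]
        obtain ⟨z, hz⟩ := hdvd
        push_cast at hz
        obtain ⟨s2, hs2⟩ : ∃ s2, 3*(n - j (Fin.last a)) + n + 3*(j 0 - 1) = 2*s2 := by
          refine ⟨(3*(n - j (Fin.last a)) + n + 3*(j 0 - 1))/2, ?_⟩
          omega
        rw [hs2, rho_even, ← pow_add]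
        rw [Even.neg_one_pow (by rw [Nat.even_iff]; omega), one_mul]
      · rw [if_neg (fun hc => hdvd hc.2)]
        rcases Nat.even_or_odd (a+1) with hpar | hpar
        · have hIz : ItgT ω j l = 0 := by
            apply ItgT_zero
            obtain ⟨t1, ht1⟩ := tuple_parity j (by omega) hgj
            rw [hj00] at ht1
            have hbridge : ¬ ((2:ℤ) ∣ (∑ s, (j s : ℤ))) := by
              apply int_parity_bridge _ ((a:ℤ)+1) 0 ((j 0 : ℤ)) ((j 0 : ℤ)) t1
              · push_cast at ht1 ⊢
                linarith [ht1]
              · obtain ⟨c, hc⟩ := hpar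
                exact ⟨((a:ℤ)+1-2)/4, by omega⟩
              · exact ⟨0, by ring⟩
            intro hd
            apply hbridge
            have h0 : (∑ s : Fin 0, l s) = 0 := by simp
            rw [h0, add_zero] at hd
            have : ((2:ℤ)) ∣ ((∑ s, j s : ℕ) : ℤ) := by exact_mod_cast hd
            rwa [show ((∑ s, j s : ℕ) : ℤ) = ∑ s, (j s : ℤ) from by push_cast; rfl] at this
          rw [hIz, mul_zero]
        · obtain ⟨c, hc⟩ := hpar
          have hrz : rho (3*(n - j (Fin.last a)) + n + 3*(j 0 - 1)) = 0 :=
            rho_odd (by omega)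
          rw [hcT, hrz, mul_zero, zero_mul]
    | succ b =>
      have hl1 : 1 ≤ l 0 := (Finset.mem_Icc.mp (hlm 0)).1
      have hln : l (Fin.last b) ≤ n := (Finset.mem_Icc.mp (hlm _)).2
      have hl00 : (⟨0, by omega⟩ : Fin (b+1)) = 0 := by apply Fin.ext; simp
      by_cases hgl : ∀ (s : ℕ) (h : s + 1 < b + 1),
          Odd ((l ⟨s+1, h⟩ : ℤ) - (l ⟨s, by omega⟩ : ℤ))
      case neg =>
        have hcf : ¬ (club j l ∧ (4:ℤ) ∣ (((a+1:ℕ):ℤ) - ((b+1:ℕ):ℤ))) :=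
          fun hc => hgl hc.1.2.2
        rw [if_neg hcf]
        push_neg at hgl
        obtain ⟨s, h, hnot⟩ := hgl
        rw [cT_zero_right ω j l hl hl1 hln ⟨s, h, Int.not_odd_iff_even.mp hnot⟩, zero_mul]
      case pos =>
      obtain ⟨e', heq', hw'⟩ := W_spec (n := n) l hl hl1 hln hgl
      have hcT : cT n j l = ((-1:ℝ)^e * (-1:ℝ)^e') *
          (rho (3*(n - j (Fin.last a)) + (n - l (Fin.last b)))
            * rho (3*(j 0 - 1) + (l 0 - 1))) := by
        unfold cT
        rw [hw, hw', Matrix.transpose_smul, Matrix.smul_mul, Matrix.mul_smul,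
          smul_smul, Matrix.trace_smul, smul_eq_mul, trace_core]
      by_cases hpar : Even ((j 0 : ℤ) - (l 0 : ℤ))
      case neg =>
        have hcf : ¬ (club j l ∧ (4:ℤ) ∣ (((a+1:ℕ):ℤ) - ((b+1:ℕ):ℤ))) := by
          rintro ⟨⟨c1, _, _⟩, _⟩
          apply hpar
          have := c1 (by omega) (by omega)
          rwa [hj00, hl00] at this
        rw [if_neg hcf, hcT]
        obtain ⟨w, hww⟩ := Int.not_even_iff_odd.mp hpar
        have hrz : rho (3*(j 0 - 1) + (l 0 - 1)) = 0 := rho_odd (by omega)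
        rw [hrz, mul_zero, mul_zero, zero_mul]
      case pos =>
      obtain ⟨w, hww⟩ := hpar
      have hclub : club j l := by
        refine ⟨fun h₁ h₂ => ?_, hgj, hgl⟩
        have : (⟨0, h₁⟩ : Fin (a+1)) = 0 := by apply Fin.ext; simp
        rw [this]
        have : (⟨0, h₂⟩ : Fin (b+1)) = 0 := by apply Fin.ext; simp
        rw [this]
        exact ⟨w, hww⟩
      by_cases hdvd : (4:ℤ) ∣ (((a+1:ℕ):ℤ) - ((b+1:ℕ):ℤ))
      · rw [if_pos ⟨hclub, hdvd⟩, hcT]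
        obtain ⟨z, hz⟩ := hdvd
        push_cast at hz
        obtain ⟨s2, hs2⟩ : ∃ s2,
            3*(n - j (Fin.last a)) + (n - l (Fin.last b)) = 2*s2 := by
          refine ⟨(3*(n - j (Fin.last a)) + (n - l (Fin.last b)))/2, ?_⟩
          omega
        obtain ⟨u2, hu2⟩ : ∃ u2, 3*(j 0 - 1) + (l 0 - 1) = 2*u2 := by
          refine ⟨(3*(j 0 - 1) + (l 0 - 1))/2, ?_⟩
          omega
        rw [hs2, hu2, rho_even, rho_even, ← pow_add, ← pow_add, ← pow_add]
        rw [Even.neg_one_pow (by rw [Nat.even_iff]; omega), one_mul]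
      · rw [if_neg (fun hc => hdvd hc.2)]
        rcases Nat.even_or_odd (a+b) with hpar2 | hpar2
        · -- k₁+k₂ ≡ 2 mod 4 (both same parity): integral vanishes
          have hIz : ItgT ω j l = 0 := by
            apply ItgT_zero
            obtain ⟨t1, ht1⟩ := tuple_parity j (by omega) hgj
            obtain ⟨t2, ht2⟩ := tuple_parity l (by omega) hgl
            rw [hj00] at ht1
            rw [hl00] at ht2
            have hbridge : ¬ ((2:ℤ) ∣ ((∑ s, (j s : ℤ)) + ∑ s, (l s : ℤ))) := by
              apply int_parity_bridge _ ((a:ℤ)+1) ((b:ℤ)+1) ((j 0 : ℤ)) ((l 0 : ℤ)) (t1+t2)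
              · push_cast at ht1 ht2 ⊢
                linarith [ht1, ht2]
              · obtain ⟨c, hc⟩ := hpar2
                exact ⟨((a:ℤ)-(b:ℤ)-2)/4, by omega⟩
              · exact ⟨w, by omega⟩
            intro hd
            apply hbridge
            have : ((2:ℤ)) ∣ (((∑ s, j s) + ∑ s, l s : ℕ) : ℤ) := by exact_mod_cast hd
            rwa [show (((∑ s, j s) + ∑ s, l s : ℕ) : ℤ)
              = (∑ s, (j s : ℤ)) + ∑ s, (l s : ℤ) from by push_cast; rfl] at this
          rw [hIz, mul_zero]
        · -- k₁+k₂ odd: cT = 0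
          obtain ⟨c, hc⟩ := hpar2
          have hrz : rho (3*(n - j (Fin.last a)) + (n - l (Fin.last b))) = 0 :=
            rho_odd (by omega)
          rw [hcT, hrz, zero_mul, mul_zero, zero_mul]


lemma trace_expand (ω lam : ℝ) (n : ℕ) (x y : ℝ) :
    ((M ω lam n x y)ᵀ * M ω lam n x y).trace
    = ∑ S ∈ (Finset.Icc 1 n).powerset, ∑ T ∈ (Finset.Icc 1 n).powerset,
        (((-lam) ^ (S.card + T.card) * ((W n S)ᵀ * W n T).trace) *
          ((∏ i ∈ S, v ω i x y) * (∏ i ∈ T, v ω i x y))) := by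
  rw [M_expand, Matrix.transpose_sum, Finset.sum_mul_sum, Matrix.trace_sum]
  refine Finset.sum_congr rfl fun S hS => ?_
  rw [Matrix.trace_sum]
  refine Finset.sum_congr rfl fun T hT => ?_
  rw [Matrix.transpose_smul, Matrix.smul_mul, Matrix.mul_smul, smul_smul,
    Matrix.trace_smul, smul_eq_mul, pow_add]
  ring

lemma v_continuous (ω : ℝ) (i : ℕ) : Continuous fun p : ℝ × ℝ => v ω i p.1 p.2 := by
  unfold v; fun_prop

lemma integral2_sum {κ : Type*} (s : Finset κ) (F : κ → ℝ → ℝ → ℝ)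
    (hF : ∀ a ∈ s, Continuous fun p : ℝ × ℝ => F a p.1 p.2) :
    (∫ x in (0:ℝ)..1, ∫ y in (0:ℝ)..1, ∑ a ∈ s, F a x y)
      = ∑ a ∈ s, ∫ x in (0:ℝ)..1, ∫ y in (0:ℝ)..1, F a x y := by
  have h1 : ∀ x : ℝ, (∫ y in (0:ℝ)..1, ∑ a ∈ s, F a x y)
      = ∑ a ∈ s, ∫ y in (0:ℝ)..1, F a x y := by
    intro x
    apply intervalIntegral.integral_finset_sum
    intro a ha
    exact Continuous.intervalIntegrable
      ((hF a ha).comp (by fun_prop : Continuous fun y : ℝ => ((x, y) : ℝ × ℝ))) _ _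
  simp only [h1]
  apply intervalIntegral.integral_finset_sum
  intro a ha
  apply Continuous.intervalIntegrable
  exact intervalIntegral.continuous_parametric_intervalIntegral_of_continuous
    (hF a ha) continuous_const

lemma sum_powersetCard_eq_tuples (n k : ℕ) (f : Finset ℕ → ℝ) :
    ∑ S ∈ (Finset.Icc 1 n).powersetCard k, f S
    = ∑ j ∈ Fintype.piFinset (fun _ : Fin k => Finset.Icc 1 n),
        if StrictMono j then f (Finset.image j Finset.univ) else 0 := by
  rw [← Finset.sum_filter]
  refine Finset.sum_bij'
    (i := fun S hS => ⇑(S.orderEmbOfFin (Finset.mem_powersetCard.mp hS).2))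
    (j := fun g _ => Finset.image g Finset.univ)
    (hi := ?_) (hj := ?_) ?_ ?_ ?_
  · intro S hS
    obtain ⟨hsub, hcard⟩ := Finset.mem_powersetCard.mp hS
    rw [Finset.mem_filter]
    constructor
    · rw [Fintype.mem_piFinset]
      intro s
      exact hsub (Finset.orderEmbOfFin_mem S hcard s)
    · exact (S.orderEmbOfFin hcard).strictMono
  · intro g hg
    rw [Finset.mem_filter] at hg
    obtain ⟨hpi, hsm⟩ := hg
    rw [Finset.mem_powersetCard]
    constructor
    · intro x hx
      obtain ⟨s, _, rfl⟩ := Finset.mem_image.mp hx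
      exact Fintype.mem_piFinset.mp hpi s
    · rw [Finset.card_image_of_injective _ hsm.injective, Finset.card_univ,
        Fintype.card_fin]
  · intro S hS
    obtain ⟨hsub, hcard⟩ := Finset.mem_powersetCard.mp hS
    apply Finset.eq_of_subset_of_card_le
    · intro x hx
      obtain ⟨s, _, rfl⟩ := Finset.mem_image.mp hx
      exact Finset.orderEmbOfFin_mem S hcard s
    · rw [Finset.card_image_of_injective _ (S.orderEmbOfFin hcard).injective,
        Finset.card_univ, Fintype.card_fin, hcard]
  · intro g hg
    rw [Finset.mem_filter] at hg
    exact (Finset.orderEmbOfFin_unique _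
      (fun s => Finset.mem_image_of_mem g (Finset.mem_univ s)) hg.2).symm
  · intro S hS
    obtain ⟨hsub, hcard⟩ := Finset.mem_powersetCard.mp hS
    congr 1
    symm
    apply Finset.eq_of_subset_of_card_le
    · intro x hx
      obtain ⟨s, _, rfl⟩ := Finset.mem_image.mp hx
      exact Finset.orderEmbOfFin_mem S hcard s
    · rw [Finset.card_image_of_injective _ (S.orderEmbOfFin hcard).injective,
        Finset.card_univ, Fintype.card_fin, hcard]

noncomputable def AIn (ω : ℝ) (n k₁ k₂ : ℕ) : ℝ :=
  ∑ j ∈ Fintype.piFinset (fun _ : Fin k₁ => Finset.Icc 1 n),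
    ∑ l ∈ Fintype.piFinset (fun _ : Fin k₂ => Finset.Icc 1 n),
      if StrictMono j ∧ StrictMono l ∧ club j l then ItgT ω j l else 0

noncomputable def Dt (ω : ℝ) (n k₁ k₂ : ℕ) : ℝ :=
  ∑ j ∈ Fintype.piFinset (fun _ : Fin k₁ => Finset.Icc 1 n),
    ∑ l ∈ Fintype.piFinset (fun _ : Fin k₂ => Finset.Icc 1 n),
      if StrictMono j then (if StrictMono l then cT n j l * ItgT ω j l else 0) else 0

lemma Dt_eval (ω : ℝ) (n k₁ k₂ : ℕ) (hk : ¬ (k₁ = 0 ∧ k₂ = 0)) :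
    Dt ω n k₁ k₂ = if (4:ℤ) ∣ ((k₁:ℤ) - (k₂:ℤ)) then AIn ω n k₁ k₂ else 0 := by
  unfold Dt AIn
  by_cases hdvd : (4:ℤ) ∣ ((k₁:ℤ) - (k₂:ℤ))
  · rw [if_pos hdvd]
    refine Finset.sum_congr rfl fun j hj => Finset.sum_congr rfl fun l hl => ?_
    have hjm : ∀ s, j s ∈ Finset.Icc 1 n := fun s => Fintype.mem_piFinset.mp hj s
    have hlm : ∀ s, l s ∈ Finset.Icc 1 n := fun s => Fintype.mem_piFinset.mp hl s
    by_cases h1 : StrictMono j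
    · by_cases h2 : StrictMono l
      · rw [if_pos h1, if_pos h2, pair_eval ω n j l h1 h2 hjm hlm hk]
        by_cases h3 : club j l
        · rw [if_pos ⟨h3, hdvd⟩, if_pos ⟨h1, h2, h3⟩]
        · rw [if_neg (fun hc => h3 hc.1), if_neg (fun hc => h3 hc.2.2)]
      · rw [if_pos h1, if_neg h2, if_neg (fun hc => h2 hc.2.1)]
    · rw [if_neg h1, if_neg (fun hc => h1 hc.1)]
  · rw [if_neg hdvd]
    apply Finset.sum_eq_zero
    intro j hj
    apply Finset.sum_eq_zero
    intro l hl
    have hjm : ∀ s, j s ∈ Finset.Icc 1 n := fun s => Fintype.mem_piFinset.mp hj s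
    have hlm : ∀ s, l s ∈ Finset.Icc 1 n := fun s => Fintype.mem_piFinset.mp hl s
    by_cases h1 : StrictMono j
    · by_cases h2 : StrictMono l
      · rw [if_pos h1, if_pos h2, pair_eval ω n j l h1 h2 hjm hlm hk,
          if_neg (fun hc => hdvd hc.2)]
      · rw [if_pos h1, if_neg h2]
    · rw [if_neg h1]

lemma Dt_00 (ω : ℝ) (n : ℕ) : Dt ω n 0 0 = 2 := by
  unfold Dt
  have huniv : Fintype.piFinset (fun _ : Fin 0 => Finset.Icc 1 n)
      = (Finset.univ : Finset (Fin 0 → ℕ)) := by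
    ext g; simp [Fintype.mem_piFinset]
  rw [huniv]
  rw [Finset.univ_unique, Finset.sum_singleton, Finset.sum_singleton]
  have hsm : ∀ g : Fin 0 → ℕ, StrictMono g := fun g => Subsingleton.strictMono _
  have hcT : ∀ g g' : Fin 0 → ℕ, cT n g g' = 2 := by
    intro g g'
    unfold cT
    rw [show Finset.image g Finset.univ = (∅ : Finset ℕ) from by
      simp [Finset.univ_eq_empty],
      show Finset.image g' Finset.univ = (∅ : Finset ℕ) from by
      simp [Finset.univ_eq_empty], W_empty, trace_JJ]
  have hItg : ∀ g g' : Fin 0 → ℕ, ItgT ω g g' = 1 := by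
    intro g g'
    unfold ItgT
    simp
  split_ifs with h1
  · rw [hcT, hItg, mul_one]
  · exact absurd (hsm _) h1


lemma P_eq_Dt (ω lam : ℝ) (n : ℕ) :
    P ω n lam = ∑ k₁ ∈ Finset.range (n + 1), ∑ k₂ ∈ Finset.range (n + 1),
      (-lam) ^ (k₁ + k₂) * Dt ω n k₁ k₂ := by
  have hcard : (Finset.Icc 1 n).card = n := by
    rw [Nat.card_Icc]; omega
  set pow := (Finset.Icc 1 n).powerset with hpow
  set F : Finset ℕ × Finset ℕ → ℝ → ℝ → ℝ := fun p x y =>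
    ((-lam) ^ (p.1.card + p.2.card) * ((W n p.1)ᵀ * W n p.2).trace) *
      ((∏ i ∈ p.1, v ω i x y) * (∏ i ∈ p.2, v ω i x y)) with hF
  have hpt : ∀ x y : ℝ, ((M ω lam n x y)ᵀ * M ω lam n x y).trace
      = ∑ p ∈ pow ×ˢ pow, F p x y := by
    intro x y
    rw [trace_expand ω lam n x y, ← Finset.sum_product']
  have hcont : ∀ p ∈ pow ×ˢ pow, Continuous fun q : ℝ × ℝ => F p q.1 q.2 := by
    intro p _
    apply Continuous.mul continuous_const
    apply Continuous.mul
    · apply continuous_finset_prod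
      intro i _
      exact v_continuous ω i
    · apply continuous_finset_prod
      intro i _
      exact v_continuous ω i
  have step1 : P ω n lam = ∑ p ∈ pow ×ˢ pow,
      ((-lam) ^ (p.1.card + p.2.card) * ((W n p.1)ᵀ * W n p.2).trace) *
        ∫ x in (0:ℝ)..1, ∫ y in (0:ℝ)..1,
          (∏ i ∈ p.1, v ω i x y) * (∏ i ∈ p.2, v ω i x y) := by
    unfold P
    simp only [hpt]
    rw [integral2_sum _ _ hcont]
    refine Finset.sum_congr rfl fun p _ => ?_
    simp only [hF]
    simp only [intervalIntegral.integral_const_mul]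
  rw [step1, Finset.sum_product]
  simp only [hpow]
  rw [Finset.sum_powerset, hcard]
  refine Finset.sum_congr rfl fun k₁ hk₁ => ?_
  have hswap : ∀ S : Finset ℕ, (∑ T ∈ (Finset.Icc 1 n).powerset,
      ((-lam) ^ (S.card + T.card) * ((W n S)ᵀ * W n T).trace) *
        ∫ x in (0:ℝ)..1, ∫ y in (0:ℝ)..1,
          (∏ i ∈ S, v ω i x y) * (∏ i ∈ T, v ω i x y))
      = ∑ k₂ ∈ Finset.range (n+1), ∑ T ∈ Finset.powersetCard k₂ (Finset.Icc 1 n),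
        ((-lam) ^ (S.card + T.card) * ((W n S)ᵀ * W n T).trace) *
          ∫ x in (0:ℝ)..1, ∫ y in (0:ℝ)..1,
            (∏ i ∈ S, v ω i x y) * (∏ i ∈ T, v ω i x y) := by
    intro S
    rw [Finset.sum_powerset, hcard]
  simp only [hswap]
  rw [Finset.sum_comm]
  refine Finset.sum_congr rfl fun k₂ hk₂ => ?_
  -- now: ∑_{S ∈ pcard k₁} ∑_{T ∈ pcard k₂} ... = (-lam)^(k₁+k₂) * Dt
  have hDt : (-lam) ^ (k₁ + k₂) * Dt ω n k₁ k₂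
      = ∑ j ∈ Fintype.piFinset (fun _ : Fin k₁ => Finset.Icc 1 n),
          ∑ l ∈ Fintype.piFinset (fun _ : Fin k₂ => Finset.Icc 1 n),
            if StrictMono j then
              (if StrictMono l then
                (-lam) ^ (k₁ + k₂) * (cT n j l * ItgT ω j l) else 0) else 0 := by
    unfold Dt
    simp only [Finset.mul_sum, mul_ite, mul_zero]
  rw [hDt]
  rw [sum_powersetCard_eq_tuples n k₁]
  refine Finset.sum_congr rfl fun j hj => ?_
  by_cases hSMj : StrictMono j
  · rw [if_pos hSMj]
    rw [sum_powersetCard_eq_tuples n k₂]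
    refine Finset.sum_congr rfl fun l hl => ?_
    by_cases hSMl : StrictMono l
    · rw [if_pos hSMl, if_pos hSMj, if_pos hSMl]
      have hc1 : (Finset.image j Finset.univ).card = k₁ := by
        rw [Finset.card_image_of_injective _ hSMj.injective, Finset.card_univ,
          Fintype.card_fin]
      have hc2 : (Finset.image l Finset.univ).card = k₂ := by
        rw [Finset.card_image_of_injective _ hSMl.injective, Finset.card_univ,
          Fintype.card_fin]
      have hIm : (∫ x in (0:ℝ)..1, ∫ y in (0:ℝ)..1,
          (∏ i ∈ Finset.image j Finset.univ, v ω i x y) *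
            (∏ i ∈ Finset.image l Finset.univ, v ω i x y)) = ItgT ω j l := by
        unfold ItgT
        have h1 : ∀ x y : ℝ, (∏ i ∈ Finset.image j Finset.univ, v ω i x y)
            = ∏ s, v ω (j s) x y := by
          intro x y
          apply Finset.prod_image
          intro a _ b _ hab
          exact hSMj.injective hab
        have h2 : ∀ x y : ℝ, (∏ i ∈ Finset.image l Finset.univ, v ω i x y)
            = ∏ s, v ω (l s) x y := by
          intro x y
          apply Finset.prod_image
          intro a _ b _ hab
          exact hSMl.injective hab
        simp only [h1, h2]
      rw [hc1, hc2, hIm]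
      have hcTeq : ((W n (Finset.image j Finset.univ))ᵀ *
          W n (Finset.image l Finset.univ)).trace = cT n j l := rfl
      rw [hcTeq, mul_assoc]
    · rw [if_neg hSMl, if_neg hSMl]
      simp
  · rw [if_neg hSMj]
    exact (Finset.sum_eq_zero fun l _ => if_neg hSMj).symm

end SkewAux

open scoped Classical in
/-- `P_n(λ) = ∑_{k=0}^n α_{2k} λ^{2k}` with the coefficients `α_{2k}` above. -/
theorem stmt_0 (ω lam : ℝ) (n : ℕ) (hn : 1 ≤ n) :
    P ω n lam = ∑ k ∈ Finset.range (n + 1), alpha ω n k * lam ^ (2 * k) := by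
  rw [SkewAux.P_eq_Dt]
  have hterm : ∀ k₁ ∈ Finset.range (n+1), ∀ k₂ ∈ Finset.range (n+1),
      (-lam) ^ (k₁ + k₂) * SkewAux.Dt ω n k₁ k₂
      = (if k₁ = 0 ∧ k₂ = 0 then (2:ℝ) else 0)
        + (if (¬(k₁ = 0 ∧ k₂ = 0)) ∧ (4:ℤ) ∣ ((k₁:ℤ) - (k₂:ℤ))
            then lam ^ (k₁ + k₂) * SkewAux.AIn ω n k₁ k₂ else 0) := by
    intro k₁ _ k₂ _
    by_cases h00 : k₁ = 0 ∧ k₂ = 0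
    · obtain ⟨rfl, rfl⟩ := h00
      rw [SkewAux.Dt_00]
      norm_num
    · rw [SkewAux.Dt_eval ω n k₁ k₂ h00, if_neg h00]
      by_cases hdvd : (4:ℤ) ∣ ((k₁:ℤ) - (k₂:ℤ))
      · rw [if_pos hdvd, if_pos ⟨h00, hdvd⟩, zero_add]
        have heven : Even (k₁ + k₂) := by
          rcases hdvd with ⟨z, hz⟩
          rw [Nat.even_iff]
          omega
        rw [heven.neg_pow]
      · rw [if_neg hdvd, if_neg (fun hc => hdvd hc.2), mul_zero, zero_add]
  rw [Finset.sum_congr rfl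
    (fun k₁ hk₁ => Finset.sum_congr rfl (fun k₂ hk₂ => hterm k₁ hk₁ k₂ hk₂))]
  simp only [Finset.sum_add_distrib]
  have h2 : (∑ k₁ ∈ Finset.range (n+1), ∑ k₂ ∈ Finset.range (n+1),
      (if k₁ = 0 ∧ k₂ = 0 then (2:ℝ) else 0)) = 2 := by
    rw [Finset.sum_eq_single 0]
    · rw [Finset.sum_eq_single 0]
      · rw [if_pos ⟨rfl, rfl⟩]
      · intro b _ hb
        rw [if_neg (fun hc => hb hc.2)]
      · intro habs
        exact absurd (Finset.mem_range.mpr (by omega)) habs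
    · intro b _ hb
      apply Finset.sum_eq_zero
      intro k₂ _
      rw [if_neg (fun hc => hb hc.1)]
    · intro habs
      exact absurd (Finset.mem_range.mpr (by omega)) habs
  rw [h2]
  -- right-hand side
  have h0 : alpha ω n 0 * lam ^ (2 * 0) = 2 := by simp [alpha]
  have halpha : ∀ i : ℕ, alpha ω n (i+1) * lam ^ (2 * (i+1))
      = ∑ k₁ ∈ Finset.range (n+1), ∑ k₂ ∈ Finset.range (n+1),
          (if (k₁ + k₂ = 2*(i+1) ∧ (4:ℤ) ∣ ((k₁:ℤ) - (k₂:ℤ)))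
            then lam ^ (2*(i+1)) * SkewAux.AIn ω n k₁ k₂ else 0) := by
    intro i
    have ha : alpha ω n (i+1)
        = ∑ k₁ ∈ Finset.range (n+1), ∑ k₂ ∈ Finset.range (n+1),
            (if (k₁ + k₂ = 2*(i+1) ∧ (4:ℤ) ∣ ((k₁:ℤ) - (k₂:ℤ)))
              then SkewAux.AIn ω n k₁ k₂ else 0) := by
      rw [alpha, if_neg (Nat.succ_ne_zero i)]
      rfl
    rw [ha, Finset.sum_mul]
    refine Finset.sum_congr rfl fun k₁ _ => ?_
    rw [Finset.sum_mul]
    refine Finset.sum_congr rfl fun k₂ _ => ?_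
    split_ifs with h
    · ring
    · rw [zero_mul]
  have hcollapse : ∀ k₁ ∈ Finset.range (n+1), ∀ k₂ ∈ Finset.range (n+1),
      (∑ i ∈ Finset.range n,
        if (k₁ + k₂ = 2*(i+1) ∧ (4:ℤ) ∣ ((k₁:ℤ) - (k₂:ℤ)))
          then lam ^ (2*(i+1)) * SkewAux.AIn ω n k₁ k₂ else 0)
      = (if (¬(k₁ = 0 ∧ k₂ = 0)) ∧ (4:ℤ) ∣ ((k₁:ℤ) - (k₂:ℤ))
          then lam ^ (k₁ + k₂) * SkewAux.AIn ω n k₁ k₂ else 0) := by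
    intro k₁ hk₁ k₂ hk₂
    rw [Finset.mem_range] at hk₁ hk₂
    by_cases hdvd : (4:ℤ) ∣ ((k₁:ℤ) - (k₂:ℤ))
    · by_cases h00 : k₁ = 0 ∧ k₂ = 0
      · obtain ⟨rfl, rfl⟩ := h00
        rw [if_neg (fun hc => hc.1 ⟨rfl, rfl⟩)]
        apply Finset.sum_eq_zero
        intro i _
        rw [if_neg (fun hc => by have := hc.1; omega)]
      · have heven : (k₁ + k₂) % 2 = 0 := by
          rcases hdvd with ⟨z, hz⟩; omega
        have hpos : k₁ + k₂ ≠ 0 := fun h => h00 (by omega)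
        rw [if_pos ⟨h00, hdvd⟩]
        rw [Finset.sum_eq_single ((k₁+k₂)/2 - 1)]
        · rw [if_pos ⟨by omega, hdvd⟩,
            show 2*((k₁+k₂)/2 - 1 + 1) = k₁ + k₂ by omega]
        · intro b _ hb
          rw [if_neg (fun hc => hb (by have := hc.1; omega))]
        · intro habs
          exact absurd (Finset.mem_range.mpr (by omega)) habs
    · rw [if_neg (fun hc => hdvd hc.2)]
      apply Finset.sum_eq_zero
      intro i _
      rw [if_neg (fun hc => hdvd hc.2)]
  have hrhs : (∑ k ∈ Finset.range (n+1), alpha ω n k * lam ^ (2*k))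
      = 2 + ∑ k₁ ∈ Finset.range (n+1), ∑ k₂ ∈ Finset.range (n+1),
          (if (¬(k₁ = 0 ∧ k₂ = 0)) ∧ (4:ℤ) ∣ ((k₁:ℤ) - (k₂:ℤ))
            then lam ^ (k₁ + k₂) * SkewAux.AIn ω n k₁ k₂ else 0) := by
    rw [Finset.sum_range_succ', h0]
    simp only [halpha]
    rw [Finset.sum_comm]
    rw [Finset.sum_congr rfl fun k₁ _ => Finset.sum_comm]
    rw [Finset.sum_congr rfl
      (fun k₁ hk₁ => Finset.sum_congr rfl (fun k₂ hk₂ => hcollapse k₁ hk₁ k₂ hk₂))]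
    rw [add_comm]
  rw [hrhs]
end

section
/- For every ω ∈ ℝ, every λ ∈ ℝ and every integer n ≥ 1, there exist real numbers α_0, α_2, …, α_{2n} such that P_n(λ') = ∑_{k=0}^{n} α_{2k} (λ')^{2k} for all λ' ∈ ℝ, and moreover α_2 = 2n. -/
open MeasureTheory Real
open scoped Matrix

section SkewAux
open Polynomial

/-- top and bottom rows of `M_n` as polynomials in `λ`. -/
noncomputable def rows (ω : ℝ) : ℕ → ℝ → ℝ → (Fin 2 → ℝ[X]) × (Fin 2 → ℝ[X])
  | 0, _, _ => (![1, 0], ![0, 1])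
  | n + 1, x, y =>
      (fun j => -(C (v ω (n + 1) x y) * X * (rows ω n x y).1 j) - (rows ω n x y).2 j,
       (rows ω n x y).1)

lemma rows_snd_succ (ω : ℝ) (n : ℕ) (x y : ℝ) :
    (rows ω (n + 1) x y).2 = (rows ω n x y).1 := by simp [rows]

lemma M_entry (ω lam : ℝ) (n : ℕ) (x y : ℝ) :
    (∀ j, M ω lam n x y 0 j = eval lam ((rows ω n x y).1 j)) ∧
    (∀ j, M ω lam n x y 1 j = eval lam ((rows ω n x y).2 j)) := by
  induction n with
  | zero =>
      constructor <;> intro j <;> fin_cases j <;>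
        simp [M, rows, Matrix.one_apply]
  | succ n ih =>
      constructor <;> intro j
      · show (A ω lam (n+1) x y * M ω lam n x y) 0 j = _
        rw [Matrix.mul_apply, Fin.sum_univ_two, (ih.1 j), (ih.2 j)]
        simp [A, rows]
        ring
      · show (A ω lam (n+1) x y * M ω lam n x y) 1 j = _
        rw [Matrix.mul_apply, Fin.sum_univ_two, (ih.1 j), (ih.2 j)]
        simp [A, rows]

noncomputable def Tq (ω : ℝ) (n : ℕ) (x y : ℝ) : ℝ[X] :=
  ∑ j : Fin 2, ((rows ω n x y).1 j ^ 2 + (rows ω n x y).2 j ^ 2)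

lemma trace_eq (ω lam : ℝ) (n : ℕ) (x y : ℝ) :
    Matrix.trace ((M ω lam n x y)ᵀ * M ω lam n x y) = eval lam (Tq ω n x y) := by
  have h := M_entry ω lam n x y
  simp [Matrix.trace, Matrix.mul_apply, Fin.sum_univ_two, Matrix.diag, Tq,
    h.1 0, h.1 1, h.2 0, h.2 1]
  ring

lemma coeff_CXmul_zero (a : ℝ) (p : ℝ[X]) : (C a * X * p).coeff 0 = 0 := by
  rw [mul_assoc, coeff_C_mul, Polynomial.mul_coeff_zero, coeff_X_zero]; ring

lemma coeff_CXmul_succ (a : ℝ) (p : ℝ[X]) (m : ℕ) :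
    (C a * X * p).coeff (m + 1) = a * p.coeff m := by
  rw [mul_assoc, coeff_C_mul, coeff_X_mul]

lemma rows_natDegree (ω : ℝ) (n : ℕ) (x y : ℝ) :
    (∀ j, ((rows ω n x y).1 j).natDegree ≤ n) ∧
    (∀ j, ((rows ω n x y).2 j).natDegree ≤ n) := by
  induction n with
  | zero =>
      constructor <;> intro j <;> fin_cases j <;> simp [rows]
  | succ n ih =>
      constructor <;> intro j
      · refine le_trans (natDegree_sub_le _ _) (max_le ?_ ((ih.2 j).trans (Nat.le_succ n)))
        rw [natDegree_neg]
        refine le_trans (natDegree_mul_le) ?_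
        have : (C (v ω (n+1) x y) * X).natDegree ≤ 1 :=
          le_trans natDegree_mul_le (by simp)
        have h2 := ih.1 j
        omega
      · rw [rows_snd_succ]
        exact (ih.1 j).trans (Nat.le_succ n)

lemma Tq_natDegree (ω : ℝ) (n : ℕ) (x y : ℝ) : (Tq ω n x y).natDegree ≤ 2 * n := by
  refine natDegree_sum_le_of_forall_le _ _ fun j _ => ?_
  refine le_trans (natDegree_add_le _ _) (max_le ?_ ?_) <;>
    refine le_trans (natDegree_pow_le) ?_
  · have := (rows_natDegree ω n x y).1 j; omega
  · have := (rows_natDegree ω n x y).2 j; omega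

lemma v_cont (ω : ℝ) (j : ℕ) : Continuous fun q : ℝ × ℝ => v ω j q.1 q.2 := by
  unfold v; fun_prop

lemma rows_coeff_cont (ω : ℝ) (n : ℕ) :
    (∀ m j, Continuous fun q : ℝ × ℝ => ((rows ω n q.1 q.2).1 j).coeff m) ∧
    (∀ m j, Continuous fun q : ℝ × ℝ => ((rows ω n q.1 q.2).2 j).coeff m) := by
  induction n with
  | zero =>
      constructor <;> intro m j <;> fin_cases j <;> simp [rows] <;> fun_prop
  | succ n ih =>
      constructor <;> intro m j
      · have : (fun q : ℝ × ℝ => ((rows ω (n+1) q.1 q.2).1 j).coeff m) =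
            fun q : ℝ × ℝ =>
              -((C (v ω (n + 1) q.1 q.2) * X * (rows ω n q.1 q.2).1 j).coeff m)
                - ((rows ω n q.1 q.2).2 j).coeff m := by
          funext q; simp [rows]
        rw [this]
        match m with
        | 0 =>
            simp only [coeff_CXmul_zero]
            exact (continuous_const.neg).sub (ih.2 0 j)
        | m + 1 =>
            simp only [coeff_CXmul_succ]
            exact ((v_cont ω (n+1)).mul (ih.1 m j)).neg.sub (ih.2 (m+1) j)
      · have : (fun q : ℝ × ℝ => ((rows ω (n+1) q.1 q.2).2 j).coeff m) =
            fun q : ℝ × ℝ => ((rows ω n q.1 q.2).1 j).coeff m := by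
          funext q; simp [rows]
        rw [this]; exact ih.1 m j

lemma Tq_coeff_cont (ω : ℝ) (n m : ℕ) :
    Continuous fun q : ℝ × ℝ => (Tq ω n q.1 q.2).coeff m := by
  have : (fun q : ℝ × ℝ => (Tq ω n q.1 q.2).coeff m) =
      fun q : ℝ × ℝ => ∑ j : Fin 2,
        ((∑ x ∈ Finset.HasAntidiagonal.antidiagonal m,
            ((rows ω n q.1 q.2).1 j).coeff x.1 * ((rows ω n q.1 q.2).1 j).coeff x.2) +
         (∑ x ∈ Finset.HasAntidiagonal.antidiagonal m,
            ((rows ω n q.1 q.2).2 j).coeff x.1 * ((rows ω n q.1 q.2).2 j).coeff x.2)) := by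
    funext q
    simp [Tq, finset_sum_coeff, coeff_add, sq, coeff_mul]
  rw [this]
  refine continuous_finset_sum _ fun j _ => Continuous.add ?_ ?_ <;>
    refine continuous_finset_sum _ fun p _ => Continuous.mul ?_ ?_
  · exact (rows_coeff_cont ω n).1 p.1 j
  · exact (rows_coeff_cont ω n).1 p.2 j
  · exact (rows_coeff_cont ω n).2 p.1 j
  · exact (rows_coeff_cont ω n).2 p.2 j

lemma v_add_one (ω : ℝ) (j : ℕ) (x y : ℝ) : v ω j (x + 1) y = v ω j x y := by
  unfold v
  rw [show 2 * π * ((j : ℝ) * ((j : ℝ) - 1) / 2 * ω + (j : ℝ) * y + (x + 1)) =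
      2 * π * ((j : ℝ) * ((j : ℝ) - 1) / 2 * ω + (j : ℝ) * y + x) + 2 * π by ring,
    Real.cos_add_two_pi]

lemma v_add_half (ω : ℝ) (j : ℕ) (x y : ℝ) : v ω j (x + 1/2) y = -v ω j x y := by
  unfold v
  rw [show 2 * π * ((j : ℝ) * ((j : ℝ) - 1) / 2 * ω + (j : ℝ) * y + (x + 1/2)) =
      2 * π * ((j : ℝ) * ((j : ℝ) - 1) / 2 * ω + (j : ℝ) * y + x) + π by ring,
    Real.cos_add_pi]
  ring

lemma rows_periodic (ω : ℝ) (n : ℕ) (x y : ℝ) :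
    rows ω n (x + 1) y = rows ω n x y := by
  induction n with
  | zero => simp [rows]
  | succ n ih => simp [rows, ih, v_add_one]

/-- `p` has coefficients of `q` with alternating signs. -/
def NR (p q : ℝ[X]) : Prop := ∀ m, p.coeff m = (-1) ^ m * q.coeff m

lemma NR.add {p q p' q' : ℝ[X]} (h : NR p q) (h' : NR p' q') : NR (p + p') (q + q') := by
  intro m; simp [coeff_add, h m, h' m]; ring

lemma NR.mul {p q p' q' : ℝ[X]} (h : NR p q) (h' : NR p' q') : NR (p * p') (q * q') := by
  intro m
  rw [coeff_mul, coeff_mul, Finset.mul_sum]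
  refine Finset.sum_congr rfl fun z hz => ?_
  rw [Finset.HasAntidiagonal.mem_antidiagonal] at hz
  rw [h z.1, h' z.2, ← hz, pow_add]; ring

lemma rows_neg (ω : ℝ) (n : ℕ) (x y : ℝ) :
    (∀ j, NR ((rows ω n (x + 1/2) y).1 j) ((rows ω n x y).1 j)) ∧
    (∀ j, NR ((rows ω n (x + 1/2) y).2 j) ((rows ω n x y).2 j)) := by
  induction n with
  | zero =>
      constructor <;> intro j <;> fin_cases j <;> intro m <;>
        rcases m with _ | m <;> simp [rows, coeff_one]
  | succ n ih =>
      constructor <;> intro j <;> intro m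
      · have hl : ((rows ω (n+1) (x + 1/2) y).1 j).coeff m =
            -((C (v ω (n + 1) (x + 1/2) y) * X * (rows ω n (x + 1/2) y).1 j).coeff m)
              - ((rows ω n (x + 1/2) y).2 j).coeff m := by simp [rows]
        have hr : ((rows ω (n+1) x y).1 j).coeff m =
            -((C (v ω (n + 1) x y) * X * (rows ω n x y).1 j).coeff m)
              - ((rows ω n x y).2 j).coeff m := by simp [rows]
        rw [hl, hr, v_add_half]
        match m with
        | 0 =>
            rw [coeff_CXmul_zero, coeff_CXmul_zero, ih.2 j 0]
            simp
        | m + 1 =>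
            rw [coeff_CXmul_succ, coeff_CXmul_succ, ih.1 j m, ih.2 j (m+1), pow_succ]
            ring
      · rw [rows_snd_succ, rows_snd_succ]; exact ih.1 j m

lemma Tq_neg (ω : ℝ) (n : ℕ) (x y : ℝ) (m : ℕ) :
    (Tq ω n (x + 1/2) y).coeff m = (-1) ^ m * (Tq ω n x y).coeff m := by
  have : NR (Tq ω n (x + 1/2) y) (Tq ω n x y) := by
    unfold Tq
    rw [Fin.sum_univ_two, Fin.sum_univ_two]
    have h := rows_neg ω n x y
    refine NR.add (NR.add ?_ ?_) (NR.add ?_ ?_) <;> rw [sq, sq]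
    · exact (h.1 0).mul (h.1 0)
    · exact (h.2 0).mul (h.2 0)
    · exact (h.1 1).mul (h.1 1)
    · exact (h.2 1).mul (h.2 1)
  exact this m

lemma Tq_periodic (ω : ℝ) (n : ℕ) (x y : ℝ) :
    Tq ω n (x + 1) y = Tq ω n x y := by unfold Tq; rw [rows_periodic]

/-- constant (λ⁰) coefficients of the rows. -/
def s0 : ℕ → (Fin 2 → ℝ) × (Fin 2 → ℝ)
  | 0 => (![1, 0], ![0, 1])
  | n + 1 => (fun j => -((s0 n).2 j), (s0 n).1)

lemma rows_coeff_zero (ω : ℝ) (n : ℕ) (x y : ℝ) :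
    (∀ j, ((rows ω n x y).1 j).coeff 0 = (s0 n).1 j) ∧
    (∀ j, ((rows ω n x y).2 j).coeff 0 = (s0 n).2 j) := by
  induction n with
  | zero => constructor <;> intro j <;> fin_cases j <;> simp [rows, s0]
  | succ n ih =>
      constructor <;> intro j
      · have : ((rows ω (n+1) x y).1 j).coeff 0 =
            -((C (v ω (n + 1) x y) * X * (rows ω n x y).1 j).coeff 0)
              - ((rows ω n x y).2 j).coeff 0 := by simp [rows]
        rw [this, coeff_CXmul_zero, ih.2 j]
        simp [s0]
      · rw [rows_snd_succ, ih.1 j]; simp [s0]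

lemma s0_norm (n : ℕ) :
    (∑ j : Fin 2, ((s0 n).1 j) ^ 2 = 1) ∧ (∑ j : Fin 2, ((s0 n).2 j) ^ 2 = 1) := by
  induction n with
  | zero => constructor <;> simp [s0, Fin.sum_univ_two]
  | succ n ih =>
      constructor
      · simp only [s0, neg_sq]; exact ih.2
      · exact ih.1

lemma coeff_CXmul_one (a : ℝ) (p : ℝ[X]) : (C a * X * p).coeff 1 = a * p.coeff 0 :=
  coeff_CXmul_succ a p 0

lemma rows_coeff_one (ω : ℝ) (n : ℕ) :
    ∃ β γ : ℕ → Fin 2 → ℝ, ∀ x y (j : Fin 2),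
      ((rows ω n x y).1 j).coeff 1 = ∑ m ∈ Finset.range n, β m j * v ω (m + 1) x y ∧
      ((rows ω n x y).2 j).coeff 1 = ∑ m ∈ Finset.range n, γ m j * v ω (m + 1) x y := by
  induction n with
  | zero =>
      refine ⟨0, 0, fun x y j => ?_⟩
      fin_cases j <;> simp [rows, coeff_one]
  | succ n ih =>
      obtain ⟨β, γ, h⟩ := ih
      refine ⟨fun m j => if m = n then -((s0 n).1 j) else -(γ m j),
              fun m j => if m = n then 0 else β m j, fun x y j => ?_⟩
      beta_reduce
      constructor
      · have h1 : ((rows ω (n+1) x y).1 j).coeff 1 =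
            -((C (v ω (n + 1) x y) * X * (rows ω n x y).1 j).coeff 1)
              - ((rows ω n x y).2 j).coeff 1 := by simp [rows]
        have h2 : ∀ m ∈ Finset.range n,
            (if m = n then -((s0 n).1 j) else -(γ m j)) * v ω (m + 1) x y
              = -(γ m j * v ω (m + 1) x y) := by
          intro m hm
          rw [if_neg (Nat.ne_of_lt (Finset.mem_range.mp hm))]; ring
        rw [h1, coeff_CXmul_one, (rows_coeff_zero ω n x y).1 j, (h x y j).2,
          Finset.sum_range_succ, Finset.sum_congr rfl h2, if_pos rfl]
        rw [Finset.sum_neg_distrib]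
        ring
      · have h2 : ∀ m ∈ Finset.range n,
            (if m = n then (0:ℝ) else β m j) * v ω (m + 1) x y
              = β m j * v ω (m + 1) x y := by
          intro m hm
          rw [if_neg (Nat.ne_of_lt (Finset.mem_range.mp hm))]
        rw [rows_snd_succ, (h x y j).1, Finset.sum_range_succ,
          Finset.sum_congr rfl h2, if_pos rfl]
        simp

lemma int_cos (k c : ℝ) (hk : k ≠ 0) :
    ∫ y in (0:ℝ)..1, Real.cos (k * y + c) = (Real.sin (k + c) - Real.sin c) / k := by
  have hD : ∀ y ∈ Set.uIcc (0:ℝ) 1, HasDerivAt (fun t => Real.sin (k * t + c) / k)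
      (Real.cos (k * y + c)) y := by
    intro y _
    have h1 : HasDerivAt (fun t : ℝ => k * t + c) k y := by
      simpa using ((hasDerivAt_id y).const_mul k).add_const c
    have h2 := (h1.sin).div_const k
    have : Real.cos (k * y + c) * k / k = Real.cos (k * y + c) := by
      field_simp
    rwa [this] at h2
  have hi : IntervalIntegrable (fun y => Real.cos (k * y + c)) volume 0 1 :=
    Continuous.intervalIntegrable (by fun_prop) 0 1
  rw [intervalIntegral.integral_eq_sub_of_hasDerivAt hD hi]
  rw [show k * 1 + c = k + c by ring, show k * 0 + c = c by ring]
  ring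

lemma int_cos_int (m : ℤ) (hm : m ≠ 0) (c : ℝ) :
    ∫ y in (0:ℝ)..1, Real.cos (2 * π * ((m : ℝ) * y + c)) = 0 := by
  have h : ∀ y : ℝ, 2 * π * ((m : ℝ) * y + c) = (2 * π * (m : ℝ)) * y + 2 * π * c := by
    intro y; ring
  have hm' : (m : ℝ) ≠ 0 := Int.cast_ne_zero.mpr hm
  have hk : 2 * π * (m : ℝ) ≠ 0 :=
    mul_ne_zero (mul_ne_zero two_ne_zero Real.pi_ne_zero) hm'
  simp only [h]
  rw [int_cos _ _ hk]
  have : 2 * π * (m : ℝ) + 2 * π * c = 2 * π * c + (m : ℤ) * (2 * π) := by push_cast; ring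
  rw [this, Real.sin_add_int_mul_two_pi, sub_self, zero_div]

lemma two_cos_mul_two_cos (a b : ℝ) :
    (2 * Real.cos a) * (2 * Real.cos b) = 2 * Real.cos (a - b) + 2 * Real.cos (a + b) := by
  rw [Real.cos_sub, Real.cos_add]; ring

lemma v_mul_v (ω : ℝ) (j k : ℕ) (x y : ℝ) :
    v ω j x y * v ω k x y =
      2 * Real.cos (2 * π * ((((j : ℤ) - (k : ℤ) : ℤ) : ℝ) * y +
        ((j : ℝ) * ((j : ℝ) - 1) / 2 - (k : ℝ) * ((k : ℝ) - 1) / 2) * ω)) +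
      2 * Real.cos (2 * π * ((((j : ℤ) + (k : ℤ) : ℤ) : ℝ) * y +
        (((j : ℝ) * ((j : ℝ) - 1) / 2 + (k : ℝ) * ((k : ℝ) - 1) / 2) * ω + 2 * x))) := by
  unfold v
  rw [two_cos_mul_two_cos]
  congr 2 <;> push_cast <;> ring

lemma v_mul_v_int (ω : ℝ) (j k : ℕ) (hj : 1 ≤ j) (hk : 1 ≤ k) (hjk : j ≠ k) (x : ℝ) :
    ∫ y in (0:ℝ)..1, v ω j x y * v ω k x y = 0 := by
  simp only [v_mul_v]
  rw [intervalIntegral.integral_add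
    ((Continuous.intervalIntegrable (by fun_prop) 0 1))
    ((Continuous.intervalIntegrable (by fun_prop) 0 1)),
    intervalIntegral.integral_const_mul, intervalIntegral.integral_const_mul,
    int_cos_int _ (by omega) _, int_cos_int _ (by omega) _]
  ring

lemma v_sq_int (ω : ℝ) (j : ℕ) (hj : 1 ≤ j) (x : ℝ) :
    ∫ y in (0:ℝ)..1, v ω j x y * v ω j x y = 2 := by
  simp only [v_mul_v]
  rw [intervalIntegral.integral_add
    ((Continuous.intervalIntegrable (by fun_prop) 0 1))
    ((Continuous.intervalIntegrable (by fun_prop) 0 1)),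
    intervalIntegral.integral_const_mul, intervalIntegral.integral_const_mul,
    int_cos_int ((j:ℤ) + (j:ℤ)) (by omega) _]
  simp only [sub_self, Int.cast_zero, zero_mul, zero_add, mul_zero, add_zero, Real.cos_zero]
  rw [intervalIntegral.integral_const]
  simp

lemma coeff_CXmul_two (a : ℝ) (p : ℝ[X]) : (C a * X * p).coeff 2 = a * p.coeff 1 :=
  coeff_CXmul_succ a p 1

/-- the λ²-coefficient of `p^2`. -/
noncomputable def k2 (p : ℝ[X]) : ℝ := 2 * p.coeff 0 * p.coeff 2 + (p.coeff 1) ^ 2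

lemma k2_eq (p : ℝ[X]) : (p ^ 2).coeff 2 = k2 p := by
  rw [sq, coeff_mul, Finset.Nat.sum_antidiagonal_eq_sum_range_succ_mk]
  simp [Finset.sum_range_succ, k2]
  ring

lemma cont_coeff_y1 (ω : ℝ) (n : ℕ) (x : ℝ) (m : ℕ) (j : Fin 2) :
    Continuous fun y => ((rows ω n x y).1 j).coeff m :=
  ((rows_coeff_cont ω n).1 m j).comp (continuous_const.prodMk continuous_id)

lemma cont_coeff_y2 (ω : ℝ) (n : ℕ) (x : ℝ) (m : ℕ) (j : Fin 2) :
    Continuous fun y => ((rows ω n x y).2 j).coeff m :=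
  ((rows_coeff_cont ω n).2 m j).comp (continuous_const.prodMk continuous_id)

lemma v_cont_y (ω : ℝ) (j : ℕ) (x : ℝ) : Continuous fun y => v ω j x y := by
  unfold v; fun_prop

lemma cont_k2_y1 (ω : ℝ) (n : ℕ) (x : ℝ) (j : Fin 2) :
    Continuous fun y => k2 ((rows ω n x y).1 j) := by
  unfold k2
  exact (((continuous_const.mul (cont_coeff_y1 ω n x 0 j)).mul
    (cont_coeff_y1 ω n x 2 j)).add ((cont_coeff_y1 ω n x 1 j).pow 2))

lemma cont_k2_y2 (ω : ℝ) (n : ℕ) (x : ℝ) (j : Fin 2) :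
    Continuous fun y => k2 ((rows ω n x y).2 j) := by
  unfold k2
  exact (((continuous_const.mul (cont_coeff_y2 ω n x 0 j)).mul
    (cont_coeff_y2 ω n x 2 j)).add ((cont_coeff_y2 ω n x 1 j).pow 2))

lemma int_v_coeff1_top (ω : ℝ) (n : ℕ) (x : ℝ) (j : Fin 2) :
    (∫ y in (0:ℝ)..1, v ω (n + 1) x y * ((rows ω n x y).1 j).coeff 1 = 0) ∧
    (∫ y in (0:ℝ)..1, v ω (n + 1) x y * ((rows ω n x y).2 j).coeff 1 = 0) := by
  obtain ⟨β, γ, h⟩ := rows_coeff_one ω n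
  constructor
  · have e : (fun y => v ω (n + 1) x y * ((rows ω n x y).1 j).coeff 1) =
        fun y => ∑ m ∈ Finset.range n, β m j * (v ω (n + 1) x y * v ω (m + 1) x y) := by
      funext y
      rw [(h x y j).1, Finset.mul_sum]
      exact Finset.sum_congr rfl fun m _ => by ring
    rw [e, intervalIntegral.integral_finset_sum fun m _ =>
      Continuous.intervalIntegrable (by
        exact continuous_const.mul ((v_cont_y ω (n+1) x).mul (v_cont_y ω (m+1) x))) 0 1]
    refine Finset.sum_eq_zero fun m hm => ?_
    rw [intervalIntegral.integral_const_mul,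
      v_mul_v_int ω (n+1) (m+1) (by omega) (by omega)
        (by have := Finset.mem_range.mp hm; omega) x, mul_zero]
  · have e : (fun y => v ω (n + 1) x y * ((rows ω n x y).2 j).coeff 1) =
        fun y => ∑ m ∈ Finset.range n, γ m j * (v ω (n + 1) x y * v ω (m + 1) x y) := by
      funext y
      rw [(h x y j).2, Finset.mul_sum]
      exact Finset.sum_congr rfl fun m _ => by ring
    rw [e, intervalIntegral.integral_finset_sum fun m _ =>
      Continuous.intervalIntegrable (by
        exact continuous_const.mul ((v_cont_y ω (n+1) x).mul (v_cont_y ω (m+1) x))) 0 1]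
    refine Finset.sum_eq_zero fun m hm => ?_
    rw [intervalIntegral.integral_const_mul,
      v_mul_v_int ω (n+1) (m+1) (by omega) (by omega)
        (by have := Finset.mem_range.mp hm; omega) x, mul_zero]

noncomputable def Kf (ω : ℝ) (n : ℕ) (x : ℝ) : ℝ :=
  ∫ y in (0:ℝ)..1, ∑ j : Fin 2, k2 ((rows ω n x y).1 j)

noncomputable def Lf (ω : ℝ) (n : ℕ) (x : ℝ) : ℝ :=
  ∫ y in (0:ℝ)..1, ∑ j : Fin 2, k2 ((rows ω n x y).2 j)

lemma key_pointwise (ω : ℝ) (n : ℕ) (x y : ℝ) :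
    ∑ j : Fin 2, k2 ((rows ω (n + 1) x y).1 j)
      = (∑ j : Fin 2, k2 ((rows ω n x y).2 j))
        + (v ω (n + 1) x y * v ω (n + 1) x y) * (∑ j : Fin 2, ((s0 n).1 j) ^ 2)
        + ((2 * (s0 n).2 0) * (v ω (n + 1) x y * ((rows ω n x y).1 0).coeff 1)
          + (2 * (s0 n).1 0) * (v ω (n + 1) x y * ((rows ω n x y).2 0).coeff 1)
          + (2 * (s0 n).2 1) * (v ω (n + 1) x y * ((rows ω n x y).1 1).coeff 1)
          + (2 * (s0 n).1 1) * (v ω (n + 1) x y * ((rows ω n x y).2 1).coeff 1)) := by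
  have e : ∀ j : Fin 2, (rows ω (n + 1) x y).1 j =
      -(C (v ω (n + 1) x y) * X * (rows ω n x y).1 j) - (rows ω n x y).2 j :=
    fun j => by simp [rows]
  simp only [Fin.sum_univ_two, k2, e, coeff_sub, coeff_neg, coeff_CXmul_zero,
    coeff_CXmul_one, coeff_CXmul_two, (rows_coeff_zero ω n x y).1,
    (rows_coeff_zero ω n x y).2]
  ring

lemma Kf_succ (ω : ℝ) (n : ℕ) (x : ℝ) : Kf ω (n + 1) x = Lf ω n x + 2 := by
  unfold Kf
  have e : (fun y => ∑ j : Fin 2, k2 ((rows ω (n + 1) x y).1 j)) =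
      fun y => (∑ j : Fin 2, k2 ((rows ω n x y).2 j))
        + ((v ω (n + 1) x y * v ω (n + 1) x y) * (∑ j : Fin 2, ((s0 n).1 j) ^ 2)
        + ((2 * (s0 n).2 0) * (v ω (n + 1) x y * ((rows ω n x y).1 0).coeff 1)
          + ((2 * (s0 n).1 0) * (v ω (n + 1) x y * ((rows ω n x y).2 0).coeff 1)
          + ((2 * (s0 n).2 1) * (v ω (n + 1) x y * ((rows ω n x y).1 1).coeff 1)
          + (2 * (s0 n).1 1) * (v ω (n + 1) x y * ((rows ω n x y).2 1).coeff 1))))) := by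
    funext y; rw [key_pointwise]; ring
  rw [e]
  have c1 : Continuous fun y => ∑ j : Fin 2, k2 ((rows ω n x y).2 j) :=
    continuous_finset_sum _ fun j _ => cont_k2_y2 ω n x j
  have cv := v_cont_y ω (n + 1) x
  have c2 : Continuous fun y => (v ω (n+1) x y * v ω (n+1) x y) * (∑ j : Fin 2, ((s0 n).1 j) ^ 2) :=
    (cv.mul cv).mul continuous_const
  have c30 : Continuous fun y => (2 * (s0 n).2 0) * (v ω (n+1) x y * ((rows ω n x y).1 0).coeff 1) :=
    continuous_const.mul (cv.mul (cont_coeff_y1 ω n x 1 0))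
  have c31 : Continuous fun y => (2 * (s0 n).1 0) * (v ω (n+1) x y * ((rows ω n x y).2 0).coeff 1) :=
    continuous_const.mul (cv.mul (cont_coeff_y2 ω n x 1 0))
  have c32 : Continuous fun y => (2 * (s0 n).2 1) * (v ω (n+1) x y * ((rows ω n x y).1 1).coeff 1) :=
    continuous_const.mul (cv.mul (cont_coeff_y1 ω n x 1 1))
  have c33 : Continuous fun y => (2 * (s0 n).1 1) * (v ω (n+1) x y * ((rows ω n x y).2 1).coeff 1) :=
    continuous_const.mul (cv.mul (cont_coeff_y2 ω n x 1 1))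
  rw [intervalIntegral.integral_add (c1.intervalIntegrable 0 1)
      ((c2.fun_add (c30.fun_add (c31.fun_add (c32.fun_add c33)))).intervalIntegrable 0 1),
    intervalIntegral.integral_add (c2.intervalIntegrable 0 1)
      ((c30.fun_add (c31.fun_add (c32.fun_add c33))).intervalIntegrable 0 1),
    intervalIntegral.integral_add (c30.intervalIntegrable 0 1)
      ((c31.fun_add (c32.fun_add c33)).intervalIntegrable 0 1),
    intervalIntegral.integral_add (c31.intervalIntegrable 0 1)
      ((c32.fun_add c33).intervalIntegrable 0 1),
    intervalIntegral.integral_add (c32.intervalIntegrable 0 1) (c33.intervalIntegrable 0 1)]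
  rw [intervalIntegral.integral_mul_const, v_sq_int ω (n+1) (by omega) x, (s0_norm n).1,
    intervalIntegral.integral_const_mul, intervalIntegral.integral_const_mul,
    intervalIntegral.integral_const_mul, intervalIntegral.integral_const_mul,
    (int_v_coeff1_top ω n x 0).1, (int_v_coeff1_top ω n x 0).2,
    (int_v_coeff1_top ω n x 1).1, (int_v_coeff1_top ω n x 1).2]
  unfold Lf
  ring

lemma Lf_succ (ω : ℝ) (n : ℕ) (x : ℝ) : Lf ω (n + 1) x = Kf ω n x := by
  unfold Lf Kf
  simp only [rows_snd_succ]

lemma KL (ω : ℝ) (n : ℕ) (x : ℝ) : Kf ω n x + Lf ω n x = 2 * n := by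
  induction n with
  | zero =>
      have h1 : Kf ω 0 x = 0 := by
        unfold Kf
        have : (fun y => ∑ j : Fin 2, k2 ((rows ω 0 x y).1 j)) = fun _ => 0 := by
          funext y
          simp [rows, k2, Fin.sum_univ_two, coeff_one]
        rw [this, intervalIntegral.integral_zero]
      have h2 : Lf ω 0 x = 0 := by
        unfold Lf
        have : (fun y => ∑ j : Fin 2, k2 ((rows ω 0 x y).2 j)) = fun _ => 0 := by
          funext y
          simp [rows, k2, Fin.sum_univ_two, coeff_one]
        rw [this, intervalIntegral.integral_zero]
      simp [h1, h2]
  | succ n ih =>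
      rw [Kf_succ, Lf_succ]
      push_cast
      linarith

lemma int_Tq_coeff2 (ω : ℝ) (n : ℕ) (x : ℝ) :
    ∫ y in (0:ℝ)..1, (Tq ω n x y).coeff 2 = 2 * n := by
  have e : (fun y => (Tq ω n x y).coeff 2) =
      fun y => (∑ j : Fin 2, k2 ((rows ω n x y).1 j))
        + (∑ j : Fin 2, k2 ((rows ω n x y).2 j)) := by
    funext y
    rw [Tq, finset_sum_coeff]
    simp only [coeff_add, k2_eq, Finset.sum_add_distrib]
  rw [e, intervalIntegral.integral_add
      ((continuous_finset_sum _ fun j _ => cont_k2_y1 ω n x j).intervalIntegrable 0 1)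
      ((continuous_finset_sum _ fun j _ => cont_k2_y2 ω n x j).intervalIntegrable 0 1)]
  exact KL ω n x

noncomputable def Iv (ω : ℝ) (n m : ℕ) : ℝ :=
  ∫ x in (0:ℝ)..1, ∫ y in (0:ℝ)..1, (Tq ω n x y).coeff m

lemma Tq_coeff_cont_y (ω : ℝ) (n m : ℕ) (x : ℝ) :
    Continuous fun y => (Tq ω n x y).coeff m := by
  have h := (Tq_coeff_cont ω n m).comp' (continuous_const.prodMk (f := fun _ : ℝ => x) continuous_id')
  exact h

lemma P_expand (ω : ℝ) (n : ℕ) (lam : ℝ) :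
    P ω n lam = ∑ m ∈ Finset.range (2 * n + 1), Iv ω n m * lam ^ m := by
  unfold P
  have e1 : ∀ x y : ℝ, Matrix.trace ((M ω lam n x y)ᵀ * M ω lam n x y) =
      ∑ m ∈ Finset.range (2 * n + 1), (Tq ω n x y).coeff m * lam ^ m := by
    intro x y
    rw [trace_eq]
    exact eval_eq_sum_range' (Nat.lt_succ_of_le (Tq_natDegree ω n x y)) lam
  have e2 : ∀ x : ℝ, (∫ y in (0:ℝ)..1,
      Matrix.trace ((M ω lam n x y)ᵀ * M ω lam n x y)) =
      ∑ m ∈ Finset.range (2 * n + 1),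
        (∫ y in (0:ℝ)..1, (Tq ω n x y).coeff m) * lam ^ m := by
    intro x
    rw [intervalIntegral.integral_congr (g := fun y =>
      ∑ m ∈ Finset.range (2 * n + 1), (Tq ω n x y).coeff m * lam ^ m)
      (fun y _ => e1 x y)]
    rw [intervalIntegral.integral_finset_sum fun m _ =>
      ((Tq_coeff_cont_y ω n m x).fun_mul continuous_const).intervalIntegrable 0 1]
    exact Finset.sum_congr rfl fun m _ => intervalIntegral.integral_mul_const _ _
  rw [intervalIntegral.integral_congr (fun x _ => e2 x)]
  rw [intervalIntegral.integral_finset_sum fun m _ => ?_]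
  · exact Finset.sum_congr rfl fun m _ => by
      rw [intervalIntegral.integral_mul_const]; rfl
  · refine Continuous.intervalIntegrable ?_ 0 1
    exact (intervalIntegral.continuous_parametric_intervalIntegral_of_continuous'
      (f := fun x y => (Tq ω n x y).coeff m) (Tq_coeff_cont ω n m) 0 1).mul continuous_const

lemma Iv_odd (ω : ℝ) (n m : ℕ) (hm : Odd m) : Iv ω n m = 0 := by
  set g : ℝ → ℝ := fun x => ∫ y in (0:ℝ)..1, (Tq ω n x y).coeff m with hg
  have hper : Function.Periodic g 1 := by
    intro x
    simp only [hg]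
    exact intervalIntegral.integral_congr fun y _ => by rw [Tq_periodic]
  have hneg : ∀ x, g (x + 1/2) = -g x := by
    intro x
    simp only [hg]
    rw [intervalIntegral.integral_congr (g := fun y => -(Tq ω n x y).coeff m)
      (fun y _ => by rw [Tq_neg, hm.neg_one_pow]; ring), intervalIntegral.integral_neg]
  have h1 : (∫ x in (0:ℝ)..1, g (x + 1/2)) = ∫ x in (1/2:ℝ)..(3/2:ℝ), g x := by
    rw [intervalIntegral.integral_comp_add_right g (1/2)]
    norm_num
  have h2 : (∫ x in (1/2:ℝ)..(3/2:ℝ), g x) = ∫ x in (0:ℝ)..1, g x := by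
    have := hper.intervalIntegral_add_eq (1/2) 0
    norm_num at this
    convert this using 2 <;> norm_num
  have h3 : (∫ x in (0:ℝ)..1, g (x + 1/2)) = -∫ x in (0:ℝ)..1, g x := by
    rw [intervalIntegral.integral_congr (g := fun x => -g x) (fun x _ => hneg x),
      intervalIntegral.integral_neg]
  have h4 : Iv ω n m = ∫ x in (0:ℝ)..1, g x := rfl
  rw [h4]
  linarith [h1, h2, h3]

lemma even_sum (f : ℕ → ℝ) (h : ∀ m, Odd m → f m = 0) (t : ℝ) (n : ℕ) :
    ∑ m ∈ Finset.range (2 * n + 1), f m * t ^ m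
      = ∑ k ∈ Finset.range (n + 1), f (2 * k) * t ^ (2 * k) := by
  induction n with
  | zero => simp
  | succ n ih =>
      rw [show 2 * (n + 1) + 1 = (2 * n + 1) + 1 + 1 by ring, Finset.sum_range_succ,
        Finset.sum_range_succ, ih, h (2 * n + 1) ⟨n, by ring⟩, Finset.sum_range_succ]
      rw [show 2 * n + 1 + 1 = 2 * (n + 1) by ring, Finset.sum_range_succ,
        Finset.sum_range_succ]
      ring


end SkewAux

/-- `P_n` is an even polynomial of degree `2n` in `λ`, with `λ²`-coefficient `α₂ = 2n`. -/
theorem stmt_1 (ω : ℝ) (n : ℕ) (hn : 1 ≤ n) :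
    ∃ α : ℕ → ℝ,
      (∀ lam' : ℝ, P ω n lam' = ∑ k ∈ Finset.range (n + 1), α k * lam' ^ (2 * k)) ∧
      α 1 = 2 * n := by
  refine ⟨fun k => Iv ω n (2 * k), fun lam' => ?_, ?_⟩
  · rw [P_expand, even_sum (Iv ω n) (Iv_odd ω n) lam' n]
  · show Iv ω n 2 = 2 * n
    unfold Iv
    rw [intervalIntegral.integral_congr (g := fun _ => (2 * n : ℝ))
      (fun x _ => int_Tq_coeff2 ω n x), intervalIntegral.integral_const]
    norm_num
end

section
/- There exist constants c₁ > 0 and c₂ > 0 such that for every ω ∈ ℝ, every λ ∈ ℝ and every integer n ≥ 1, if α_0, α_2, …, α_{2n} are real numbers satisfying P_n(λ') = ∑_{k=0}^{n} α_{2k} (λ')^{2k} for all λ' ∈ ℝ, then α_{2n} ≥ c₁ⁿ and α_{2n−2} ≥ c₂ⁿ. -/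
open MeasureTheory Real
open scoped Matrix

namespace SkewAux

open Polynomial

noncomputable def Ap (ω : ℝ) (j : ℕ) (x y : ℝ) : Matrix (Fin 2) (Fin 2) (Polynomial ℝ) :=
  !![-(C (v ω j x y) * X), -1; 1, 0]

noncomputable def Mp (ω : ℝ) : ℕ → ℝ → ℝ → Matrix (Fin 2) (Fin 2) (Polynomial ℝ)
  | 0, _, _ => 1
  | n + 1, x, y => Ap ω (n + 1) x y * Mp ω n x y

lemma Ap_map (ω lam : ℝ) (j : ℕ) (x y : ℝ) :
    (Ap ω j x y).map (⇑(evalRingHom lam)) = A ω lam j x y := by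
  ext i k
  rw [Matrix.map_apply]
  fin_cases i <;> fin_cases k <;>
    · show Polynomial.eval lam _ = _
      simp [Ap, A]
      try ring

lemma Mp_map (ω lam : ℝ) (n : ℕ) (x y : ℝ) :
    (Mp ω n x y).map (⇑(evalRingHom lam)) = M ω lam n x y := by
  induction n with
  | zero =>
      show (1 : Matrix (Fin 2) (Fin 2) (Polynomial ℝ)).map _ = 1
      rw [Matrix.map_one _ (map_zero _) (map_one _)]
  | succ n ih =>
      show ((Ap ω (n+1) x y * Mp ω n x y).map _) = A ω lam (n+1) x y * M ω lam n x y
      rw [Matrix.map_mul, Ap_map, ih]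

lemma Mp_succ_00 (ω : ℝ) (n : ℕ) (x y : ℝ) :
    Mp ω (n+1) x y 0 0
      = -(C (v ω (n+1) x y) * X) * Mp ω n x y 0 0 - Mp ω n x y 1 0 := by
  show (Ap ω (n+1) x y * Mp ω n x y) 0 0 = _
  simp [Ap, Matrix.mul_apply, Fin.sum_univ_two]
  ring

lemma Mp_succ_01 (ω : ℝ) (n : ℕ) (x y : ℝ) :
    Mp ω (n+1) x y 0 1
      = -(C (v ω (n+1) x y) * X) * Mp ω n x y 0 1 - Mp ω n x y 1 1 := by
  show (Ap ω (n+1) x y * Mp ω n x y) 0 1 = _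
  simp [Ap, Matrix.mul_apply, Fin.sum_univ_two]
  ring

lemma Mp_succ_10 (ω : ℝ) (n : ℕ) (x y : ℝ) :
    Mp ω (n+1) x y 1 0 = Mp ω n x y 0 0 := by
  show (Ap ω (n+1) x y * Mp ω n x y) 1 0 = _
  simp [Ap, Matrix.mul_apply, Fin.sum_univ_two]

lemma Mp_succ_11 (ω : ℝ) (n : ℕ) (x y : ℝ) :
    Mp ω (n+1) x y 1 1 = Mp ω n x y 0 1 := by
  show (Ap ω (n+1) x y * Mp ω n x y) 1 1 = _
  simp [Ap, Matrix.mul_apply, Fin.sum_univ_two]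

lemma Mp_zero (ω : ℝ) (x y : ℝ) : Mp ω 0 x y = 1 := rfl

lemma Mp_deg (ω : ℝ) (n : ℕ) (x y : ℝ) :
    (Mp ω n x y 0 0).natDegree ≤ n ∧ (Mp ω n x y 0 1).natDegree ≤ n - 1 ∧
    (Mp ω n x y 1 0).natDegree ≤ n - 1 ∧ (Mp ω n x y 1 1).natDegree ≤ n - 2 := by
  induction n with
  | zero =>
      simp [Mp_zero, Matrix.one_apply]
  | succ n ih =>
      obtain ⟨h00, h01, h10, h11⟩ := ih
      have hdeg : ∀ p : ℝ[X], ∀ m : ℕ, p.natDegree ≤ m →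
          ∀ c : ℝ, ∀ q : ℝ[X], q.natDegree ≤ m + 1 →
          (-(C c * X) * p - q).natDegree ≤ m + 1 := by
        intro p m hp c q hq
        refine (natDegree_sub_le _ _).trans (max_le ?_ hq)
        rw [neg_mul, natDegree_neg]
        refine (natDegree_mul_le).trans ?_
        have h1 : (C c * X).natDegree ≤ 1 := natDegree_mul_le.trans (by simp)
        omega
      refine ⟨?_, ?_, ?_, ?_⟩
      · rw [Mp_succ_00]
        refine hdeg _ n h00 _ _ ?_
        exact h10.trans (by omega)
      · rw [Mp_succ_01]
        cases n with
        | zero =>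
            have e0 : Mp ω 0 x y 0 1 = 0 := by simp [Mp_zero, Matrix.one_apply]
            have e1 : Mp ω 0 x y 1 1 = 1 := by simp [Mp_zero, Matrix.one_apply]
            rw [e0, e1]
            simp
        | succ m =>
            refine le_trans (hdeg _ m (by omega) _ _ (by omega)) (by omega)
      · rw [Mp_succ_10]; exact h00.trans (by omega)
      · rw [Mp_succ_11]; exact h01.trans (by omega)

lemma coeff_top (ω : ℝ) (n : ℕ) (x y : ℝ) :
    (Mp ω n x y 0 0).coeff n = ∏ j ∈ Finset.Icc 1 n, (-(v ω j x y)) := by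
  induction n with
  | zero => simp [Mp_zero, Matrix.one_apply]
  | succ n ih =>
      rw [Mp_succ_00, Finset.prod_Icc_succ_top (by omega)]
      have h10 : (Mp ω n x y 1 0).coeff (n+1) = 0 := by
        apply coeff_eq_zero_of_natDegree_lt
        exact lt_of_le_of_lt (Mp_deg ω n x y).2.2.1 (by omega)
      rw [coeff_sub, h10, sub_zero, neg_mul, coeff_neg, mul_assoc, coeff_C_mul,
        coeff_X_mul, ih]
      ring

lemma coeff_parity (ω : ℝ) (n : ℕ) (x y : ℝ) :
    (∀ k, (n + k) % 2 = 1 → (Mp ω n x y 0 0).coeff k = 0) ∧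
    (∀ k, (n + k) % 2 = 0 → (Mp ω n x y 1 0).coeff k = 0) := by
  induction n with
  | zero =>
      constructor
      · intro k hk
        have : k ≠ 0 := by omega
        show ((1 : Matrix (Fin 2) (Fin 2) ℝ[X]) 0 0).coeff k = 0
        simp [Matrix.one_apply, coeff_one, this]
      · intro k _
        show ((1 : Matrix (Fin 2) (Fin 2) ℝ[X]) 1 0).coeff k = 0
        simp [Matrix.one_apply]
  | succ n ih =>
      obtain ⟨ih0, ih1⟩ := ih
      constructor
      · intro k hk
        rw [Mp_succ_00, coeff_sub, neg_mul, coeff_neg, mul_assoc, coeff_C_mul]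
        rw [ih1 k (by omega)]
        cases k with
        | zero =>
            rw [sub_zero, mul_coeff_zero]
            simp
        | succ k =>
            rw [coeff_X_mul, ih0 k (by omega)]
            simp
      · intro k hk
        rw [Mp_succ_10]
        exact ih0 k (by omega)

lemma v_shift (ω : ℝ) (j : ℕ) (x y : ℝ) :
    v ω j x (y + 1/2) = (-1)^j * v ω j x y := by
  unfold v
  have h : 2 * π * ((j:ℝ) * ((j:ℝ)-1)/2 * ω + (j:ℝ) * (y + 1/2) + x)
      = 2 * π * ((j:ℝ) * ((j:ℝ)-1)/2 * ω + (j:ℝ) * y + x) + (j:ℕ) * π := by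
    ring
  rw [h, Real.cos_add_nat_mul_pi]
  ring

lemma v_periodic (ω : ℝ) (j : ℕ) (x y : ℝ) :
    v ω j x (y + 1) = v ω j x y := by
  unfold v
  have h : 2 * π * ((j:ℝ) * ((j:ℝ)-1)/2 * ω + (j:ℝ) * (y + 1) + x)
      = 2 * π * ((j:ℝ) * ((j:ℝ)-1)/2 * ω + (j:ℝ) * y + x) + (j:ℤ) * (2*π) := by
    push_cast
    ring
  rw [h, Real.cos_add_int_mul_two_pi]

lemma Ap_periodic (ω : ℝ) (j : ℕ) (x y : ℝ) : Ap ω j x (y+1) = Ap ω j x y := by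
  unfold Ap
  rw [v_periodic]

lemma Mp_periodic (ω : ℝ) (n : ℕ) (x y : ℝ) : Mp ω n x (y+1) = Mp ω n x y := by
  induction n with
  | zero => rfl
  | succ n ih =>
      show Ap ω (n+1) x (y+1) * Mp ω n x (y+1) = Ap ω (n+1) x y * Mp ω n x y
      rw [Ap_periodic, ih]

noncomputable def eps (n : ℕ) : ℝ := (-1)^(∑ j ∈ Finset.Icc 1 n, j)

lemma eps_succ (n : ℕ) : eps (n+1) = (-1)^(n+1) * eps n := by
  unfold eps
  rw [Finset.sum_Icc_succ_top (by omega), pow_add]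
  ring

lemma eps_sq (n : ℕ) : eps n * eps n = 1 := by
  unfold eps
  rw [← pow_add]
  exact Even.neg_one_pow ⟨_, rfl⟩

lemma top_shift (ω : ℝ) (n : ℕ) (x y : ℝ) :
    (Mp ω n x (y + 1/2) 0 0).coeff n = eps n * (Mp ω n x y 0 0).coeff n := by
  rw [coeff_top, coeff_top]
  unfold eps
  rw [← Finset.prod_pow_eq_pow_sum, ← Finset.prod_mul_distrib]
  apply Finset.prod_congr rfl
  intro j _
  rw [v_shift]
  ring

lemma coeff_zero_M2 (ω : ℝ) (x y : ℝ) : (Mp ω 2 x y 0 0).coeff 0 = -1 := by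
  have h2 : Mp ω 2 x y 0 0
      = -(C (v ω 2 x y) * X) * Mp ω 1 x y 0 0 - Mp ω 1 x y 1 0 := Mp_succ_00 ω 1 x y
  have h1 : Mp ω 1 x y 1 0 = Mp ω 0 x y 0 0 := Mp_succ_10 ω 0 x y
  rw [h2, h1, Mp_zero]
  simp [Matrix.one_apply, coeff_sub, mul_coeff_zero, coeff_neg, coeff_C_mul, coeff_X_zero]

lemma sub_shift (ω : ℝ) (m : ℕ) (x y : ℝ) :
    (Mp ω (m+2) x (y + 1/2) 0 0).coeff m
      = -(eps (m+2)) * (Mp ω (m+2) x y 0 0).coeff m := by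
  induction m with
  | zero =>
      rw [coeff_zero_M2, coeff_zero_M2]
      have h2 : eps 2 = -1 := by
        have h3 : (∑ j ∈ Finset.Icc 1 2, j) = 3 := by decide
        unfold eps
        rw [h3]
        norm_num
      rw [h2]
      norm_num
  | succ m ih =>
      have hrec : ∀ z, (Mp ω (m+3) x z 0 0).coeff (m+1)
          = -(v ω (m+3) x z * (Mp ω (m+2) x z 0 0).coeff m)
            - (Mp ω (m+1) x z 0 0).coeff (m+1) := by
        intro z
        rw [show m+3 = (m+2)+1 from rfl, Mp_succ_00, coeff_sub, Mp_succ_10,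
          neg_mul, coeff_neg, mul_assoc, coeff_C_mul, coeff_X_mul]
      show (Mp ω (m+3) x (y+1/2) 0 0).coeff (m+1)
          = -(eps (m+3)) * (Mp ω (m+3) x y 0 0).coeff (m+1)
      rw [hrec, hrec, v_shift, ih, top_shift]
      have h1 : eps (m+3) = (-1)^(m+3) * eps (m+2) := eps_succ (m+2)
      have h2 : eps (m+1) = -eps (m+3) := by
        rw [eps_succ (m+2), eps_succ (m+1), ← mul_assoc, ← pow_add]
        have ho : (-1:ℝ)^(m+3+(m+2)) = -1 := Odd.neg_one_pow ⟨m+2, by ring⟩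
        rw [ho]
        ring
      rw [h2, h1]
      ring

lemma v_cont (ω : ℝ) (j : ℕ) : Continuous fun p : ℝ × ℝ => v ω j p.1 p.2 := by
  unfold v
  fun_prop

lemma Ap_coeff_cont (ω : ℝ) (j : ℕ) (k : ℕ) (i l : Fin 2) :
    Continuous fun p : ℝ × ℝ => ((Ap ω j p.1 p.2) i l).coeff k := by
  have hv := v_cont ω j
  fin_cases i <;> fin_cases l <;> simp only [Ap, Fin.zero_eta, Fin.mk_one, Fin.isValue, Matrix.of_apply, Matrix.cons_val_zero, Matrix.cons_val_one, Matrix.cons_val_fin_one]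
  · show Continuous fun p : ℝ × ℝ => ((-(C (v ω j p.1 p.2) * X) : ℝ[X])).coeff k
    simp only [coeff_neg, coeff_C_mul, coeff_X]
    split_ifs with h
    · simp only [mul_one]; exact hv.neg
    · simp only [mul_zero, neg_zero]
      exact continuous_const
  · show Continuous fun _ : ℝ × ℝ => ((-1 : ℝ[X])).coeff k
    exact continuous_const
  · show Continuous fun _ : ℝ × ℝ => ((1 : ℝ[X])).coeff k
    exact continuous_const
  · show Continuous fun _ : ℝ × ℝ => ((0 : ℝ[X])).coeff k
    exact continuous_const

lemma Mp_coeff_cont (ω : ℝ) (n : ℕ) :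
    ∀ (k : ℕ) (i l : Fin 2), Continuous fun p : ℝ × ℝ => ((Mp ω n p.1 p.2) i l).coeff k := by
  induction n with
  | zero =>
      intro k i l
      simp only [Mp_zero]
      exact continuous_const
  | succ n ih =>
      intro k i l
      have heq : (fun p : ℝ × ℝ => ((Mp ω (n+1) p.1 p.2) i l).coeff k)
          = fun p => ∑ m : Fin 2, ∑ q ∈ Finset.HasAntidiagonal.antidiagonal k,
              ((Ap ω (n+1) p.1 p.2) i m).coeff q.1 * ((Mp ω n p.1 p.2) m l).coeff q.2 := by
        funext p
        show ((Ap ω (n+1) p.1 p.2 * Mp ω n p.1 p.2) i l).coeff k = _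
        rw [Matrix.mul_apply, finset_sum_coeff]
        exact Finset.sum_congr rfl fun m _ => coeff_mul _ _ _
      rw [heq]
      apply continuous_finset_sum
      intro m _
      apply continuous_finset_sum
      intro q _
      exact (Ap_coeff_cont ω (n+1) q.1 i m).mul (ih q.2 m l)

noncomputable def T (ω : ℝ) (n : ℕ) (x y : ℝ) : Polynomial ℝ :=
  (Mp ω n x y 0 0)^2 + (Mp ω n x y 0 1)^2 + (Mp ω n x y 1 0)^2 + (Mp ω n x y 1 1)^2

lemma T_eval (ω lam : ℝ) (n : ℕ) (x y : ℝ) :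
    Polynomial.eval lam (T ω n x y)
      = Matrix.trace ((M ω lam n x y)ᵀ * M ω lam n x y) := by
  rw [← Mp_map ω lam n x y]
  simp [T, Matrix.trace_fin_two, Matrix.mul_apply, Matrix.transpose_apply, Fin.sum_univ_two,
    Matrix.map_apply, sq]
  ring

lemma T_natDegree (ω : ℝ) (n : ℕ) (x y : ℝ) : (T ω n x y).natDegree ≤ 2*n := by
  obtain ⟨h00, h01, h10, h11⟩ := Mp_deg ω n x y
  have hsq : ∀ (p : ℝ[X]) (m : ℕ), p.natDegree ≤ m → (p^2).natDegree ≤ 2*m := by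
    intro p m hp
    rw [sq]
    exact natDegree_mul_le.trans (by omega)
  have b1 : ((Mp ω n x y 0 0)^2).natDegree ≤ 2*n := hsq _ n h00
  have b2 : ((Mp ω n x y 0 1)^2).natDegree ≤ 2*n := le_trans (hsq _ (n-1) h01) (by omega)
  have b3 : ((Mp ω n x y 1 0)^2).natDegree ≤ 2*n := le_trans (hsq _ (n-1) h10) (by omega)
  have b4 : ((Mp ω n x y 1 1)^2).natDegree ≤ 2*n := le_trans (hsq _ (n-2) h11) (by omega)
  unfold T
  exact (natDegree_add_le _ _).trans (max_le ((natDegree_add_le _ _).trans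
    (max_le ((natDegree_add_le _ _).trans (max_le b1 b2)) b3)) b4)

lemma T_coeff_cont (ω : ℝ) (n k : ℕ) :
    Continuous fun p : ℝ × ℝ => (T ω n p.1 p.2).coeff k := by
  simp only [T, sq, coeff_add, coeff_mul]
  apply Continuous.add
  apply Continuous.add
  apply Continuous.add
  all_goals
    exact continuous_finset_sum _ fun q _ =>
      (Mp_coeff_cont ω n q.1 _ _).mul (Mp_coeff_cont ω n q.2 _ _)

lemma T_coeff_top (ω : ℝ) (n : ℕ) (hn : 1 ≤ n) (x y : ℝ) :
    (T ω n x y).coeff (2*n) = ((Mp ω n x y 0 0).coeff n)^2 := by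
  obtain ⟨h00, h01, h10, h11⟩ := Mp_deg ω n x y
  have hz : ∀ p : ℝ[X], p.natDegree ≤ n - 1 → (p^2).coeff (2*n) = 0 := by
    intro p hp
    apply coeff_eq_zero_of_natDegree_lt
    rw [sq]
    exact lt_of_le_of_lt natDegree_mul_le (by omega)
  simp only [T, coeff_add, hz _ h01, hz _ h10, hz _ (h11.trans (by omega)), add_zero]
  rw [sq, show 2*n = n + n by ring, coeff_mul_add_eq_of_natDegree_le h00 h00, sq]

lemma sq_coeff (p : ℝ[X]) (d : ℕ) (hp : p.natDegree ≤ d + 2) :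
    (p^2).coeff (2*d+2)
      = 2*(p.coeff (d+2) * p.coeff d) + (p.coeff (d+1))^2 := by
  rw [sq, coeff_mul, Finset.Nat.sum_antidiagonal_eq_sum_range_succ_mk]
  have hsub : ({d, d+1, d+2} : Finset ℕ) ⊆ Finset.range (2*d+2+1) := by
    intro i hi
    simp only [Finset.mem_insert, Finset.mem_singleton] at hi
    rw [Finset.mem_range]
    omega
  rw [← Finset.sum_subset hsub ?_]
  · rw [Finset.sum_insert (by simp), Finset.sum_insert (by simp), Finset.sum_singleton]
    have e1 : 2*d+2-d = d+2 := by omega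
    have e2 : 2*d+2-(d+1) = d+1 := by omega
    have e3 : 2*d+2-(d+2) = d := by omega
    rw [e1, e2, e3]
    ring
  · intro i _ hin
    simp only [Finset.mem_insert, Finset.mem_singleton] at hin
    push_neg at hin
    rcases lt_or_ge i d with h | h
    · have hc : p.coeff (2*d+2-i) = 0 := coeff_eq_zero_of_natDegree_lt (by omega)
      rw [hc, mul_zero]
    · have hc : p.coeff i = 0 := coeff_eq_zero_of_natDegree_lt (by omega)
      rw [hc, zero_mul]

lemma T_coeff_sub (ω : ℝ) (m : ℕ) (x y : ℝ) :
    (T ω (m+2) x y).coeff (2*m+2)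
      = 2*((Mp ω (m+2) x y 0 0).coeff (m+2) * (Mp ω (m+2) x y 0 0).coeff m)
        + ((Mp ω (m+2) x y 0 1).coeff (m+1))^2
        + ((Mp ω (m+1) x y 0 0).coeff (m+1))^2 := by
  obtain ⟨h00, h01, h10, h11⟩ := Mp_deg ω (m+2) x y
  have hpar : (Mp ω (m+2) x y 0 0).coeff (m+1) = 0 :=
    (coeff_parity ω (m+2) x y).1 (m+1) (by omega)
  have e00 : ((Mp ω (m+2) x y 0 0)^2).coeff (2*m+2)
      = 2*((Mp ω (m+2) x y 0 0).coeff (m+2) * (Mp ω (m+2) x y 0 0).coeff m) := by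
    rw [sq_coeff _ m h00, hpar]
    ring
  have e01 : ((Mp ω (m+2) x y 0 1)^2).coeff (2*m+2)
      = ((Mp ω (m+2) x y 0 1).coeff (m+1))^2 := by
    rw [sq, show 2*m+2 = (m+1)+(m+1) by ring,
      coeff_mul_add_eq_of_natDegree_le (h01.trans (by omega)) (h01.trans (by omega)), sq]
  have e10 : ((Mp ω (m+2) x y 1 0)^2).coeff (2*m+2)
      = ((Mp ω (m+1) x y 0 0).coeff (m+1))^2 := by
    have hd : (Mp ω (m+1) x y 0 0).natDegree ≤ m+1 := (Mp_deg ω (m+1) x y).1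
    rw [show m+2 = (m+1)+1 from rfl, Mp_succ_10, sq, show 2*m+2 = (m+1)+(m+1) by ring,
      coeff_mul_add_eq_of_natDegree_le hd hd, sq]
  have e11 : ((Mp ω (m+2) x y 1 1)^2).coeff (2*m+2) = 0 := by
    apply coeff_eq_zero_of_natDegree_lt
    rw [sq]
    exact lt_of_le_of_lt natDegree_mul_le (by omega)
  simp only [T, coeff_add, e00, e01, e10, e11, add_zero]

lemma shift_integral_zero (g : ℝ → ℝ)
    (hper : ∀ y, g (y + 1) = g y) (hshift : ∀ y, g (y + 1/2) = -g y) :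
    ∫ y in (0:ℝ)..1, g y = 0 := by
  have hp : Function.Periodic g 1 := hper
  have h1 : ∫ y in (1/2:ℝ)..(1/2+1), g y = ∫ y in (0:ℝ)..(0+1), g y :=
    hp.intervalIntegral_add_eq (1/2) 0
  have h2 : (∫ y in (0:ℝ)..1, g (y + 1/2)) = ∫ y in (0+1/2:ℝ)..(1+1/2), g y :=
    intervalIntegral.integral_comp_add_right g (1/2)
  have h3 : (∫ y in (0:ℝ)..1, g (y + 1/2)) = -∫ y in (0:ℝ)..1, g y := by
    simp only [hshift]
    exact intervalIntegral.integral_neg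
  have e : (0:ℝ)+1/2 = 1/2 := by norm_num
  have e2 : (1:ℝ)+1/2 = 1/2+1 := by norm_num
  have e3 : (0:ℝ)+1 = 1 := by norm_num
  rw [e, e2, h1, e3] at h2
  rw [h2] at h3
  linarith

lemma abs_exp_add_one (t : ℝ) :
    ‖Complex.exp ((t:ℂ) * Complex.I) + 1‖ = |2 * Real.cos (t/2)| := by
  have h : Complex.exp ((t:ℂ) * Complex.I) + 1
      = Complex.exp (((t/2 : ℝ):ℂ) * Complex.I) * (2 * Complex.cos (((t/2 : ℝ):ℂ))) := by
    rw [Complex.two_cos, mul_add, ← Complex.exp_add, ← Complex.exp_add]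
    have e1 : ((t/2 : ℝ):ℂ) * Complex.I + ((t/2 : ℝ):ℂ) * Complex.I = (t:ℂ) * Complex.I := by
      push_cast
      ring
    have e2 : ((t/2 : ℝ):ℂ) * Complex.I + -((t/2 : ℝ):ℂ) * Complex.I = 0 := by
      push_cast
      ring
    rw [e1, e2, Complex.exp_zero]
  rw [h, norm_mul, Complex.norm_exp_ofReal_mul_I, one_mul]
  have e3 : 2 * Complex.cos (((t/2 : ℝ):ℂ)) = ((2 * Real.cos (t/2) : ℝ) : ℂ) := by
    rw [Complex.ofReal_mul, Complex.ofReal_cos]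
    norm_num
  rw [e3, Complex.norm_real, Real.norm_eq_abs]

lemma sq_integral_ge_one (f : ℝ → ℝ) (hfc : Continuous f)
    (h1 : 1 ≤ ∫ y in (0:ℝ)..1, |f y|) :
    1 ≤ ∫ y in (0:ℝ)..1, (f y)^2 := by
  set I1 : ℝ := ∫ y in (0:ℝ)..1, |f y| with hI1
  have hint1 : IntervalIntegrable (fun y => |f y|) volume 0 1 :=
    (hfc.abs).intervalIntegrable 0 1
  have hint2 : IntervalIntegrable (fun y => (f y)^2) volume 0 1 :=
    (hfc.pow 2).intervalIntegrable 0 1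
  have key : 0 ≤ ∫ y in (0:ℝ)..1, (|f y| - I1)^2 :=
    intervalIntegral.integral_nonneg (by norm_num) (fun u _ => sq_nonneg _)
  have expand : ∫ y in (0:ℝ)..1, (|f y| - I1)^2
      = (∫ y in (0:ℝ)..1, (f y)^2) - 2*I1*I1 + I1^2 := by
    have hpt : ∀ y : ℝ, (|f y| - I1)^2 = (f y)^2 - (2*I1) * |f y| + I1^2 := by
      intro y
      rw [sub_sq, sq_abs]
      ring
    simp only [hpt]
    rw [intervalIntegral.integral_add (hint2.sub (hint1.const_mul (2*I1)))
        intervalIntegrable_const,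
      intervalIntegral.integral_sub hint2 (hint1.const_mul (2*I1)),
      intervalIntegral.integral_const_mul, intervalIntegral.integral_const]
    simp only [← hI1]
    norm_num
  rw [expand] at key
  nlinarith [h1, sq_nonneg (I1 - 1)]

lemma parseval (m : ℕ) (φ : ℕ → ℝ) :
    1 ≤ ∫ y in (0:ℝ)..1,
        (∏ j ∈ Finset.Icc 1 m, (2 * Real.cos (2*π*(φ j + (j:ℝ)*y))))^2 := by
  apply sq_integral_ge_one _ (by apply continuous_finset_prod; intro j _; fun_prop)
  set F : ℝ → ℂ := fun y => ∏ j ∈ Finset.Icc 1 m,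
      (Complex.exp (((4*π*(φ j + (j:ℝ)*y) : ℝ) : ℂ) * Complex.I) + 1) with hFdef
  have hexp_cont : ∀ t : Finset ℕ, Continuous fun y : ℝ =>
      ∏ j ∈ t, Complex.exp (((4*π*(φ j + (j:ℝ)*y) : ℝ) : ℂ) * Complex.I) := by
    intro t
    apply continuous_finset_prod
    intro j _
    fun_prop
  have hFc : Continuous F := by
    rw [hFdef]
    apply continuous_finset_prod
    intro j _
    fun_prop
  have hF1 : (∫ y in (0:ℝ)..1, F y) = 1 := by
    have hFe : ∀ y, F y = ∑ t ∈ (Finset.Icc 1 m).powerset,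
        ∏ j ∈ t, Complex.exp (((4*π*(φ j + (j:ℝ)*y) : ℝ) : ℂ) * Complex.I) := by
      intro y
      simp only [hFdef]
      rw [Finset.prod_add]
      simp
    simp only [hFe]
    rw [intervalIntegral.integral_finset_sum
      (fun t _ => (hexp_cont t).intervalIntegrable 0 1)]
    rw [Finset.sum_eq_single_of_mem ∅ (Finset.empty_mem_powerset _)]
    · simp
    · intro t ht htne
      have hsub := Finset.mem_powerset.1 ht
      obtain ⟨j0, hj0⟩ := Finset.nonempty_iff_ne_empty.2 htne
      have h1j : 1 ≤ j0 := (Finset.mem_Icc.1 (hsub hj0)).1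
      set S : ℕ := ∑ j ∈ t, j with hSdef
      have hSpos : 0 < S :=
        lt_of_lt_of_le h1j (Finset.single_le_sum (fun i _ => Nat.zero_le i) hj0)
      set c : ℂ := ((4*π*(S:ℝ) : ℝ) : ℂ) * Complex.I with hcdef
      set K : ℂ := ∑ j ∈ t, ((4*π*(φ j) : ℝ) : ℂ) * Complex.I with hKdef
      have hprod : ∀ y : ℝ,
          (∏ j ∈ t, Complex.exp (((4*π*(φ j + (j:ℝ)*y) : ℝ) : ℂ) * Complex.I))
          = Complex.exp K * Complex.exp (c * (y:ℂ)) := by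
        intro y
        rw [← Complex.exp_sum, ← Complex.exp_add]
        congr 1
        have hterm : ∀ j ∈ t, (((4*π*(φ j + (j:ℝ)*y) : ℝ) : ℂ) * Complex.I)
            = ((4*π*(φ j) : ℝ) : ℂ) * Complex.I
              + (((4*π*(j:ℝ) : ℝ) : ℂ) * Complex.I) * (y:ℂ) := by
          intro j _
          push_cast
          ring
        rw [Finset.sum_congr rfl hterm, Finset.sum_add_distrib]
        have hr : ∑ j ∈ t, (4*π*(j:ℝ)) = 4*π*((S:ℕ):ℝ) := by
          rw [hSdef, Nat.cast_sum, Finset.mul_sum]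
        have hsum : ∑ j ∈ t, ((4*π*(j:ℝ) : ℝ) : ℂ) * Complex.I = c := by
          rw [← Finset.sum_mul, ← Complex.ofReal_sum, hr, hcdef]
        congr 1
        rw [← Finset.sum_mul, hsum]
      rw [intervalIntegral.integral_congr
        (g := fun y : ℝ => Complex.exp K * Complex.exp (c * (y:ℂ))) (fun y _ => hprod y)]
      rw [intervalIntegral.integral_const_mul]
      have hcne : c ≠ 0 := by
        rw [hcdef]
        apply mul_ne_zero _ Complex.I_ne_zero
        simp only [ne_eq, Complex.ofReal_eq_zero]
        have := Real.pi_pos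
        have : (0:ℝ) < S := by exact_mod_cast hSpos
        positivity
      rw [integral_exp_mul_complex hcne]
      have hexpc : Complex.exp (c * ((1:ℝ):ℂ)) = 1 := by
        have he : c * ((1:ℝ):ℂ) = ((2*S : ℕ):ℂ) * (2 * (π:ℂ) * Complex.I) := by
          rw [hcdef]
          push_cast
          ring
        rw [he]
        exact Complex.exp_nat_mul_two_pi_mul_I (2*S)
      have hexp0 : Complex.exp (c * ((0:ℝ):ℂ)) = 1 := by
        have he : c * ((0:ℝ):ℂ) = 0 := by
          push_cast
          ring
        rw [he, Complex.exp_zero]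
      rw [hexpc, hexp0]
      simp
  have habs : ∀ y : ℝ, ‖F y‖
      = |∏ j ∈ Finset.Icc 1 m, (2 * Real.cos (2*π*(φ j + (j:ℝ)*y)))| := by
    intro y
    simp only [hFdef]
    rw [norm_prod, Finset.abs_prod]
    apply Finset.prod_congr rfl
    intro j _
    rw [abs_exp_add_one (4*π*(φ j + (j:ℝ)*y))]
    congr 2
    ring
  calc (1:ℝ) = ‖∫ y in (0:ℝ)..1, F y‖ := by rw [hF1]; norm_num
    _ ≤ ∫ y in (0:ℝ)..1, ‖F y‖ :=
        intervalIntegral.norm_integral_le_integral_norm (by norm_num)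
    _ = ∫ y in (0:ℝ)..1, |∏ j ∈ Finset.Icc 1 m, (2 * Real.cos (2*π*(φ j + (j:ℝ)*y)))| :=
        intervalIntegral.integral_congr (fun y _ => habs y)

lemma P_eq (ω : ℝ) (n : ℕ) (lam : ℝ) :
    P ω n lam = ∑ k ∈ Finset.range (2*n+1),
      (∫ x in (0:ℝ)..1, ∫ y in (0:ℝ)..1, (T ω n x y).coeff k) * lam^k := by
  have hpt : ∀ x y : ℝ, Matrix.trace ((M ω lam n x y)ᵀ * M ω lam n x y)
      = ∑ k ∈ Finset.range (2*n+1), (T ω n x y).coeff k * lam^k := by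
    intro x y
    rw [← T_eval, Polynomial.eval_eq_sum_range' (Nat.lt_succ_of_le (T_natDegree ω n x y))]
  have hycont : ∀ (k : ℕ) (x : ℝ), Continuous fun y => (T ω n x y).coeff k := by
    intro k x
    have h := (T_coeff_cont ω n k).comp (Continuous.prodMk_right x)
    simp only [Function.comp_def] at h
    exact h
  have hin : ∀ x : ℝ, (∫ y in (0:ℝ)..1, ∑ k ∈ Finset.range (2*n+1),
      (T ω n x y).coeff k * lam^k)
      = ∑ k ∈ Finset.range (2*n+1), (∫ y in (0:ℝ)..1, (T ω n x y).coeff k) * lam^k := by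
    intro x
    rw [intervalIntegral.integral_finset_sum
      (fun k _ => ((hycont k x).fun_mul continuous_const).intervalIntegrable 0 1)]
    exact Finset.sum_congr rfl fun k _ => intervalIntegral.integral_mul_const _ _
  have hxcont : ∀ k : ℕ, Continuous fun x => ∫ y in (0:ℝ)..1, (T ω n x y).coeff k := by
    intro k
    exact intervalIntegral.continuous_parametric_intervalIntegral_of_continuous'
      (f := fun x y => (T ω n x y).coeff k) (T_coeff_cont ω n k) 0 1
  show (∫ x in (0:ℝ)..1, ∫ y in (0:ℝ)..1,
      Matrix.trace ((M ω lam n x y)ᵀ * M ω lam n x y)) = _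
  simp only [hpt, hin]
  rw [intervalIntegral.integral_finset_sum
    (fun k _ => ((hxcont k).fun_mul continuous_const).intervalIntegrable 0 1)]
  exact Finset.sum_congr rfl fun k _ => intervalIntegral.integral_mul_const _ _

lemma coeff_match (n : ℕ) (hn : 1 ≤ n) (α γ : ℕ → ℝ)
    (h : ∀ lam : ℝ, (∑ k ∈ Finset.range (n+1), α k * lam^(2*k))
        = ∑ k ∈ Finset.range (2*n+1), γ k * lam^k) :
    α n = γ (2*n) ∧ α (n-1) = γ (2*n-2) := by
  have hpq : (∑ k ∈ Finset.range (n+1), Polynomial.C (α k) * Polynomial.X^(2*k))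
      = ∑ k ∈ Finset.range (2*n+1), Polynomial.C (γ k) * Polynomial.X^k := by
    apply Polynomial.funext
    intro lam
    rw [Polynomial.eval_finset_sum, Polynomial.eval_finset_sum]
    simp only [Polynomial.eval_mul, Polynomial.eval_C, Polynomial.eval_pow, Polynomial.eval_X]
    exact h lam
  have hq : ∀ j : ℕ, j < 2*n+1 →
      (∑ k ∈ Finset.range (2*n+1), Polynomial.C (γ k) * Polynomial.X^k).coeff j = γ j := by
    intro j hj
    rw [Polynomial.finset_sum_coeff]
    rw [Finset.sum_eq_single_of_mem j (Finset.mem_range.2 hj)]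
    · simp
    · intro b _ hb
      rw [Polynomial.coeff_C_mul, Polynomial.coeff_X_pow, if_neg (by omega), mul_zero]
  have hp : ∀ j : ℕ, ∀ i : ℕ, i < n+1 → 2*i = j →
      (∑ k ∈ Finset.range (n+1), Polynomial.C (α k) * Polynomial.X^(2*k)).coeff j = α i := by
    intro j i hi hij
    rw [Polynomial.finset_sum_coeff]
    rw [Finset.sum_eq_single_of_mem i (Finset.mem_range.2 hi)]
    · rw [Polynomial.coeff_C_mul, Polynomial.coeff_X_pow, if_pos (by omega), mul_one]
    · intro b _ hb
      rw [Polynomial.coeff_C_mul, Polynomial.coeff_X_pow, if_neg (by omega), mul_zero]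
  constructor
  · rw [← hp (2*n) n (by omega) (by omega), hpq, hq (2*n) (by omega)]
  · rw [← hp (2*n-2) (n-1) (by omega) (by omega), hpq, hq (2*n-2) (by omega)]

lemma inner_top (ω : ℝ) (n : ℕ) (hn : 1 ≤ n) (x : ℝ) :
    1 ≤ ∫ y in (0:ℝ)..1, (T ω n x y).coeff (2*n) := by
  have hfun : ∀ y : ℝ, (T ω n x y).coeff (2*n)
      = (∏ j ∈ Finset.Icc 1 n,
          (2 * Real.cos (2*π*(((j:ℝ)*((j:ℝ)-1)/2*ω + x) + (j:ℝ)*y))))^2 := by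
    intro y
    rw [T_coeff_top ω n hn, coeff_top]
    have hterm : ∀ j ∈ Finset.Icc 1 n, (-(v ω j x y))^2
        = (2 * Real.cos (2*π*(((j:ℝ)*((j:ℝ)-1)/2*ω + x) + (j:ℝ)*y)))^2 := by
      intro j _
      rw [neg_sq]
      unfold v
      have harg : 2*π*((j:ℝ)*((j:ℝ)-1)/2*ω + (j:ℝ)*y + x)
          = 2*π*(((j:ℝ)*((j:ℝ)-1)/2*ω + x) + (j:ℝ)*y) := by ring
      rw [harg]
    rw [← Finset.prod_pow, Finset.prod_congr rfl hterm, Finset.prod_pow]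
  simp only [hfun]
  exact parseval n (fun j => (j:ℝ)*((j:ℝ)-1)/2*ω + x)

lemma inner_prev (ω : ℝ) (m : ℕ) (x : ℝ) :
    1 ≤ ∫ y in (0:ℝ)..1, ((Mp ω (m+1) x y 0 0).coeff (m+1))^2 := by
  have hfun : ∀ y : ℝ, ((Mp ω (m+1) x y 0 0).coeff (m+1))^2
      = (∏ j ∈ Finset.Icc 1 (m+1),
          (2 * Real.cos (2*π*(((j:ℝ)*((j:ℝ)-1)/2*ω + x) + (j:ℝ)*y))))^2 := by
    intro y
    rw [coeff_top]
    have hterm : ∀ j ∈ Finset.Icc 1 (m+1), (-(v ω j x y))^2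
        = (2 * Real.cos (2*π*(((j:ℝ)*((j:ℝ)-1)/2*ω + x) + (j:ℝ)*y)))^2 := by
      intro j _
      rw [neg_sq]
      unfold v
      have harg : 2*π*((j:ℝ)*((j:ℝ)-1)/2*ω + (j:ℝ)*y + x)
          = 2*π*(((j:ℝ)*((j:ℝ)-1)/2*ω + x) + (j:ℝ)*y) := by ring
      rw [harg]
    rw [← Finset.prod_pow, Finset.prod_congr rfl hterm, Finset.prod_pow]
  simp only [hfun]
  exact parseval (m+1) (fun j => (j:ℝ)*((j:ℝ)-1)/2*ω + x)

lemma Ap_coeff_cont_y (ω : ℝ) (x : ℝ) (j k : ℕ) (i l : Fin 2) :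
    Continuous fun y : ℝ => ((Ap ω j x y) i l).coeff k := by
  have hv : Continuous fun y : ℝ => v ω j x y := by
    unfold v
    fun_prop
  fin_cases i <;> fin_cases l <;> simp only [Ap, Fin.zero_eta, Fin.mk_one, Fin.isValue, Matrix.of_apply, Matrix.cons_val_zero, Matrix.cons_val_one, Matrix.cons_val_fin_one]
  · show Continuous fun y : ℝ => ((-(C (v ω j x y) * X) : ℝ[X])).coeff k
    simp only [coeff_neg, coeff_C_mul, coeff_X]
    split_ifs with h
    · simp only [mul_one]; exact hv.neg
    · simp only [mul_zero, neg_zero]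
      exact continuous_const
  · exact continuous_const
  · exact continuous_const
  · exact continuous_const

lemma Mp_coeff_cont_y (ω : ℝ) (x : ℝ) (n : ℕ) :
    ∀ (k : ℕ) (i l : Fin 2), Continuous fun y : ℝ => ((Mp ω n x y) i l).coeff k := by
  induction n with
  | zero =>
      intro k i l
      simp only [Mp_zero]
      exact continuous_const
  | succ n ih =>
      intro k i l
      have heq : (fun y : ℝ => ((Mp ω (n+1) x y) i l).coeff k)
          = fun y => ∑ m : Fin 2, ∑ q ∈ Finset.HasAntidiagonal.antidiagonal k,
              ((Ap ω (n+1) x y) i m).coeff q.1 * ((Mp ω n x y) m l).coeff q.2 := by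
        funext y
        show ((Ap ω (n+1) x y * Mp ω n x y) i l).coeff k = _
        rw [Matrix.mul_apply, finset_sum_coeff]
        exact Finset.sum_congr rfl fun m _ => coeff_mul _ _ _
      rw [heq]
      apply continuous_finset_sum
      intro m _
      apply continuous_finset_sum
      intro q _
      exact (Ap_coeff_cont_y ω x (n+1) q.1 i m).mul (ih q.2 m l)

set_option maxHeartbeats 1000000 in
lemma inner_sub (ω : ℝ) (m : ℕ) (x : ℝ) :
    1 ≤ ∫ y in (0:ℝ)..1, (T ω (m+2) x y).coeff (2*m+2) := by
  have c1 : Continuous fun y : ℝ =>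
      2*((Mp ω (m+2) x y 0 0).coeff (m+2) * (Mp ω (m+2) x y 0 0).coeff m) :=
    continuous_const.mul
      ((Mp_coeff_cont_y ω x (m+2) (m+2) 0 0).mul (Mp_coeff_cont_y ω x (m+2) m 0 0))
  have c2 : Continuous fun y : ℝ => ((Mp ω (m+2) x y 0 1).coeff (m+1))^2 :=
    (Mp_coeff_cont_y ω x (m+2) (m+1) 0 1).pow 2
  have c3 : Continuous fun y : ℝ => ((Mp ω (m+1) x y 0 0).coeff (m+1))^2 :=
    (Mp_coeff_cont_y ω x (m+1) (m+1) 0 0).pow 2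
  have hgz : (∫ y in (0:ℝ)..1,
      2*((Mp ω (m+2) x y 0 0).coeff (m+2) * (Mp ω (m+2) x y 0 0).coeff m)) = 0 := by
    apply shift_integral_zero
    · intro y
      rw [Mp_periodic]
    · intro y
      rw [top_shift, sub_shift]
      have h := eps_sq (m+2)
      linear_combination
        (-2 * ((Mp ω (m+2) x y 0 0).coeff (m+2)) * ((Mp ω (m+2) x y 0 0).coeff m)) * h
  have hb2 : 0 ≤ ∫ y in (0:ℝ)..1, ((Mp ω (m+2) x y 0 1).coeff (m+1))^2 :=
    intervalIntegral.integral_nonneg (by norm_num) (fun u _ => sq_nonneg _)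
  have ha2 : 1 ≤ ∫ y in (0:ℝ)..1, ((Mp ω (m+1) x y 0 0).coeff (m+1))^2 :=
    inner_prev ω m x
  have hdecomp : ∀ y : ℝ, (T ω (m+2) x y).coeff (2*m+2)
      = 2*((Mp ω (m+2) x y 0 0).coeff (m+2) * (Mp ω (m+2) x y 0 0).coeff m)
        + ((Mp ω (m+2) x y 0 1).coeff (m+1))^2
        + ((Mp ω (m+1) x y 0 0).coeff (m+1))^2 := fun y => T_coeff_sub ω m x y
  simp only [hdecomp]
  rw [intervalIntegral.integral_add ((c1.fun_add c2).intervalIntegrable 0 1)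
      (c3.intervalIntegrable 0 1),
    intervalIntegral.integral_add (c1.intervalIntegrable 0 1) (c2.intervalIntegrable 0 1),
    hgz]
  linarith

lemma gamma_top (ω : ℝ) (n : ℕ) (hn : 1 ≤ n) :
    1 ≤ ∫ x in (0:ℝ)..1, ∫ y in (0:ℝ)..1, (T ω n x y).coeff (2*n) := by
  have hcont : Continuous fun x => ∫ y in (0:ℝ)..1, (T ω n x y).coeff (2*n) :=
    intervalIntegral.continuous_parametric_intervalIntegral_of_continuous'
      (f := fun x y => (T ω n x y).coeff (2*n)) (T_coeff_cont ω n (2*n)) 0 1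
  calc (1:ℝ) = ∫ _x in (0:ℝ)..1, (1:ℝ) := by simp
  _ ≤ ∫ x in (0:ℝ)..1, ∫ y in (0:ℝ)..1, (T ω n x y).coeff (2*n) :=
      intervalIntegral.integral_mono_on (by norm_num) intervalIntegrable_const
        (hcont.intervalIntegrable 0 1) (fun x _ => inner_top ω n hn x)

lemma gamma_sub (ω : ℝ) (m : ℕ) :
    1 ≤ ∫ x in (0:ℝ)..1, ∫ y in (0:ℝ)..1, (T ω (m+2) x y).coeff (2*m+2) := by
  have hcont : Continuous fun x => ∫ y in (0:ℝ)..1, (T ω (m+2) x y).coeff (2*m+2) :=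
    intervalIntegral.continuous_parametric_intervalIntegral_of_continuous'
      (f := fun x y => (T ω (m+2) x y).coeff (2*m+2)) (T_coeff_cont ω (m+2) (2*m+2)) 0 1
  calc (1:ℝ) = ∫ _x in (0:ℝ)..1, (1:ℝ) := by simp
  _ ≤ ∫ x in (0:ℝ)..1, ∫ y in (0:ℝ)..1, (T ω (m+2) x y).coeff (2*m+2) :=
      intervalIntegral.integral_mono_on (by norm_num) intervalIntegrable_const
        (hcont.intervalIntegrable 0 1) (fun x _ => inner_sub ω m x)

lemma T_coeff_zero_one (ω : ℝ) (x y : ℝ) : (T ω 1 x y).coeff 0 = 2 := by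
  have ea : (Mp ω 1 x y 0 0).coeff 0 = 0 := (coeff_parity ω 1 x y).1 0 (by omega)
  have eb : Mp ω 1 x y 0 1 = -1 := by
    have h := Mp_succ_01 ω 0 x y
    have h01 : Mp ω 0 x y 0 1 = 0 := by simp [Mp_zero, Matrix.one_apply]
    have h11 : Mp ω 0 x y 1 1 = 1 := by simp [Mp_zero, Matrix.one_apply]
    rw [show Mp ω 1 x y 0 1 = _ from h, h01, h11]
    ring
  have ec : Mp ω 1 x y 1 0 = 1 := by
    have h := Mp_succ_10 ω 0 x y
    rw [show Mp ω 1 x y 1 0 = _ from h]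
    simp [Mp_zero, Matrix.one_apply]
  have ed : Mp ω 1 x y 1 1 = 0 := by
    have h := Mp_succ_11 ω 0 x y
    rw [show Mp ω 1 x y 1 1 = _ from h]
    simp [Mp_zero, Matrix.one_apply]
  simp only [T, sq, Polynomial.coeff_add, Polynomial.mul_coeff_zero, eb, ec, ed, ea,
    Polynomial.coeff_neg, Polynomial.coeff_one]
  norm_num

lemma gamma_sub_one (ω : ℝ) :
    1 ≤ ∫ x in (0:ℝ)..1, ∫ y in (0:ℝ)..1, (T ω 1 x y).coeff 0 := by
  have hfun : ∀ x y : ℝ, (T ω 1 x y).coeff 0 = 2 := T_coeff_zero_one ω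
  simp only [hfun]
  norm_num

end SkewAux

/-- The top coefficients of `P_n` satisfy `α_{2n} ≥ c₁ⁿ` and `α_{2n-2} ≥ c₂ⁿ` for
universal constants `c₁, c₂ > 0` (here `α k` denotes the coefficient `α_{2k}`). -/
theorem stmt_3 :
    ∃ c₁ > (0 : ℝ), ∃ c₂ > (0 : ℝ),
      ∀ (ω : ℝ) (n : ℕ), 1 ≤ n →
        ∀ α : ℕ → ℝ,
          (∀ lam' : ℝ, P ω n lam' = ∑ k ∈ Finset.range (n + 1), α k * lam' ^ (2 * k)) →
          c₁ ^ n ≤ α n ∧ c₂ ^ n ≤ α (n - 1) := by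
  refine ⟨1, one_pos, 1, one_pos, ?_⟩
  intro ω n hn α hα
  have hmatch := SkewAux.coeff_match n hn α
    (fun k => ∫ x in (0:ℝ)..1, ∫ y in (0:ℝ)..1, (SkewAux.T ω n x y).coeff k)
    (fun lam => (hα lam).symm.trans (SkewAux.P_eq ω n lam))
  have htop : 1 ≤ ∫ x in (0:ℝ)..1, ∫ y in (0:ℝ)..1, (SkewAux.T ω n x y).coeff (2*n) :=
    SkewAux.gamma_top ω n hn
  have hsub : 1 ≤ ∫ x in (0:ℝ)..1, ∫ y in (0:ℝ)..1, (SkewAux.T ω n x y).coeff (2*n-2) := by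
    obtain ⟨k, rfl⟩ : ∃ k, n = k + 1 := ⟨n - 1, by omega⟩
    rcases k with _ | m
    · have h0 : 2*(0+1)-2 = 0 := by omega
      rw [h0]
      exact SkewAux.gamma_sub_one ω
    · have h0 : 2*(m+1+1)-2 = 2*m+2 := by omega
      rw [h0]
      exact SkewAux.gamma_sub ω m
  simp only [one_pow]
  exact ⟨hmatch.1.symm ▸ htop, hmatch.2.symm ▸ hsub⟩
end

section
/- For every ω ∈ ℝ and every integer n ≥ 1, the following integral vanishes: ∫₀¹∫₀¹ ∑_{1≤j₁<j₂<j₃≤n} [ 1{j₁,j₂ even, j₃ odd}·v_{j₁}v_{j₂}v_{j₃}² + 1{j₁ even, j₂,j₃ odd}·v_{j₁}²v_{j₂}v_{j₃} + 1{j₁,j₂ odd, j₃ even}·v_{j₁}v_{j₂}v_{j₃}² + 1{j₁ odd, j₂,j₃ even}·v_{j₁}²v_{j₂}v_{j₃} ](x,y) dx dy = 0. -/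
open MeasureTheory Real

lemma cosInt (a : ℝ) (K : ℤ) (hK : K ≠ 0) : ∫ y in (0:ℝ)..1, Real.cos (a + 2*π*K*y) = 0 := by
  have hKr : ((K:ℝ)) ≠ 0 := Int.cast_ne_zero.mpr hK
  have h2 : (2*π*(K:ℝ)) ≠ 0 := mul_ne_zero (mul_ne_zero two_ne_zero Real.pi_ne_zero) hKr
  have hc : ∀ y : ℝ, Real.cos (a + 2*π*K*y) = Real.cos (2*π*K*y + a) := by intro y; ring_nf
  rw [intervalIntegral.integral_congr (g := fun y => Real.cos (2*π*(K:ℝ)*y + a)) (fun y _ => hc y)]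
  rw [intervalIntegral.integral_comp_mul_add Real.cos h2 a, integral_cos]
  have : 2*π*(K:ℝ)*1 + a = (1*a + 0*π) + (K:ℤ) * (2*π) := by ring
  rw [this, Real.sin_add_int_mul_two_pi]
  simp

lemma int2cos (r a : ℝ) (K : ℤ) (hK : K ≠ 0) : ∫ y in (0:ℝ)..1, r * Real.cos (a + 2*π*K*y) = 0 := by
  rw [intervalIntegral.integral_const_mul, cosInt a K hK, mul_zero]

lemma ii2 (r a b : ℝ) : IntervalIntegrable (fun y : ℝ => r * Real.cos (a + b*y)) volume 0 1 :=
  (by fun_prop : Continuous fun y : ℝ => r * Real.cos (a + b*y)).intervalIntegrable 0 1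

lemma int2cosIf (r a : ℝ) (K : ℤ) : ∫ y in (0:ℝ)..1, r * Real.cos (a + 2*π*K*y)
    = if K = 0 then r * Real.cos a else 0 := by
  by_cases h : K = 0
  · simp [h]
  · simp [h, int2cos r a K h]

lemma key1 (A B C : ℝ) : (2*cos A)*(2*cos B)*(2*cos C)^2 =
    2*cos (A+B+(C+C)) + 2*cos (A+B-(C+C)) + 2*cos (A-B+(C+C)) + 2*cos (A-B-(C+C))
    + 4*cos (A+B) + 4*cos (A-B) := by
  simp only [Real.cos_add, Real.cos_sub, Real.sin_add, Real.sin_sub]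
  linear_combination (8*Real.cos A*Real.cos B) * (Real.sin_sq_add_cos_sq C)

lemma key2 (A B C : ℝ) : (2*cos A)^2*(2*cos B)*(2*cos C) =
    2*cos ((A+A)+(B+C)) + 2*cos ((A+A)-(B+C)) + 2*cos ((A+A)+(B-C)) + 2*cos ((A+A)-(B-C))
    + 4*cos (B+C) + 4*cos (B-C) := by
  simp only [Real.cos_add, Real.cos_sub, Real.sin_add, Real.sin_sub]
  linear_combination (8*Real.cos B*Real.cos C) * (Real.sin_sq_add_cos_sq A)

lemma inner1 (ω : ℝ) (j1 j2 j3 : ℕ) (h12 : j1 < j2) (h23 : j2 < j3) (x : ℝ) :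
    ∫ y in (0:ℝ)..1, v ω j1 x y * v ω j2 x y * (v ω j3 x y)^2 = 0 := by
  set C1 : ℝ := (j1:ℝ)*((j1:ℝ)-1)/2*ω with hC1
  set C2 : ℝ := (j2:ℝ)*((j2:ℝ)-1)/2*ω with hC2
  set C3 : ℝ := (j3:ℝ)*((j3:ℝ)-1)/2*ω with hC3
  have e12 : (j1:ℤ) < (j2:ℤ) := by exact_mod_cast h12
  have e23 : (j2:ℤ) < (j3:ℤ) := by exact_mod_cast h23
  have e1 : (0:ℤ) ≤ j1 := Int.ofNat_nonneg j1
  have expand : ∀ y : ℝ, v ω j1 x y * v ω j2 x y * (v ω j3 x y)^2 =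
      2*cos (2*π*(C1+C2+2*C3+4*x) + 2*π*(((j1:ℤ)+j2+2*j3 : ℤ):ℝ)*y)
      + 2*cos (2*π*(C1+C2-2*C3) + 2*π*(((j1:ℤ)+j2-2*j3 : ℤ):ℝ)*y)
      + 2*cos (2*π*(C1-C2+2*C3+2*x) + 2*π*(((j1:ℤ)-j2+2*j3 : ℤ):ℝ)*y)
      + 2*cos (2*π*(C1-C2-2*C3-2*x) + 2*π*(((j1:ℤ)-j2-2*j3 : ℤ):ℝ)*y)
      + 4*cos (2*π*(C1+C2+2*x) + 2*π*(((j1:ℤ)+j2 : ℤ):ℝ)*y)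
      + 4*cos (2*π*(C1-C2) + 2*π*(((j1:ℤ)-j2 : ℤ):ℝ)*y) := by
    intro y
    show (2*cos (2*π*(C1 + (j1:ℝ)*y + x)))*(2*cos (2*π*(C2 + (j2:ℝ)*y + x)))
        *(2*cos (2*π*(C3 + (j3:ℝ)*y + x)))^2 = _
    rw [key1]
    have h₁ : 2*π*(C1 + (j1:ℝ)*y + x) + 2*π*(C2 + (j2:ℝ)*y + x) + (2*π*(C3 + (j3:ℝ)*y + x) + 2*π*(C3 + (j3:ℝ)*y + x))
        = 2*π*(C1+C2+2*C3+4*x) + 2*π*(((j1:ℤ)+j2+2*j3 : ℤ):ℝ)*y := by push_cast; ring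
    have h₂ : 2*π*(C1 + (j1:ℝ)*y + x) + 2*π*(C2 + (j2:ℝ)*y + x) - (2*π*(C3 + (j3:ℝ)*y + x) + 2*π*(C3 + (j3:ℝ)*y + x))
        = 2*π*(C1+C2-2*C3) + 2*π*(((j1:ℤ)+j2-2*j3 : ℤ):ℝ)*y := by push_cast; ring
    have h₃ : 2*π*(C1 + (j1:ℝ)*y + x) - 2*π*(C2 + (j2:ℝ)*y + x) + (2*π*(C3 + (j3:ℝ)*y + x) + 2*π*(C3 + (j3:ℝ)*y + x))
        = 2*π*(C1-C2+2*C3+2*x) + 2*π*(((j1:ℤ)-j2+2*j3 : ℤ):ℝ)*y := by push_cast; ring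
    have h₄ : 2*π*(C1 + (j1:ℝ)*y + x) - 2*π*(C2 + (j2:ℝ)*y + x) - (2*π*(C3 + (j3:ℝ)*y + x) + 2*π*(C3 + (j3:ℝ)*y + x))
        = 2*π*(C1-C2-2*C3-2*x) + 2*π*(((j1:ℤ)-j2-2*j3 : ℤ):ℝ)*y := by push_cast; ring
    have h₅ : 2*π*(C1 + (j1:ℝ)*y + x) + 2*π*(C2 + (j2:ℝ)*y + x)
        = 2*π*(C1+C2+2*x) + 2*π*(((j1:ℤ)+j2 : ℤ):ℝ)*y := by push_cast; ring
    have h₆ : 2*π*(C1 + (j1:ℝ)*y + x) - 2*π*(C2 + (j2:ℝ)*y + x)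
        = 2*π*(C1-C2) + 2*π*(((j1:ℤ)-j2 : ℤ):ℝ)*y := by push_cast; ring
    rw [h₁, h₂, h₃, h₄, h₅, h₆]
  rw [intervalIntegral.integral_congr (fun y _ => expand y)]
  rw [intervalIntegral.integral_add (((((ii2 _ _ _).add (ii2 _ _ _)).add (ii2 _ _ _)).add (ii2 _ _ _)).add (ii2 _ _ _)) (ii2 _ _ _),
      intervalIntegral.integral_add ((((ii2 _ _ _).add (ii2 _ _ _)).add (ii2 _ _ _)).add (ii2 _ _ _)) (ii2 _ _ _),
      intervalIntegral.integral_add (((ii2 _ _ _).add (ii2 _ _ _)).add (ii2 _ _ _)) (ii2 _ _ _),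
      intervalIntegral.integral_add ((ii2 _ _ _).add (ii2 _ _ _)) (ii2 _ _ _),
      intervalIntegral.integral_add (ii2 _ _ _) (ii2 _ _ _)]
  rw [int2cos _ _ _ (by omega), int2cos _ _ _ (by omega), int2cos _ _ _ (by omega),
      int2cos _ _ _ (by omega), int2cos _ _ _ (by omega), int2cos _ _ _ (by omega)]
  ring

lemma inner2 (ω : ℝ) (j1 j2 j3 : ℕ) (h12 : j1 < j2) (h23 : j2 < j3) (x : ℝ) :
    ∫ y in (0:ℝ)..1, (v ω j1 x y)^2 * v ω j2 x y * v ω j3 x y =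
    if 2*j1 + j2 = j3 then
      2*Real.cos (2*π*((j1:ℝ)*((j1:ℝ)-1)*ω + (j2:ℝ)*((j2:ℝ)-1)/2*ω - (j3:ℝ)*((j3:ℝ)-1)/2*ω + 2*x))
    else 0 := by
  set C1 : ℝ := (j1:ℝ)*((j1:ℝ)-1)/2*ω with hC1
  set C2 : ℝ := (j2:ℝ)*((j2:ℝ)-1)/2*ω with hC2
  set C3 : ℝ := (j3:ℝ)*((j3:ℝ)-1)/2*ω with hC3
  have e12 : (j1:ℤ) < (j2:ℤ) := by exact_mod_cast h12
  have e23 : (j2:ℤ) < (j3:ℤ) := by exact_mod_cast h23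
  have e1 : (0:ℤ) ≤ j1 := Int.ofNat_nonneg j1
  have expand : ∀ y : ℝ, (v ω j1 x y)^2 * v ω j2 x y * v ω j3 x y =
      2*cos (2*π*(2*C1+C2+C3+4*x) + 2*π*((2*(j1:ℤ)+j2+j3 : ℤ):ℝ)*y)
      + 2*cos (2*π*(2*C1-C2-C3) + 2*π*((2*(j1:ℤ)-j2-j3 : ℤ):ℝ)*y)
      + 2*cos (2*π*(2*C1+C2-C3+2*x) + 2*π*((2*(j1:ℤ)+j2-j3 : ℤ):ℝ)*y)
      + 2*cos (2*π*(2*C1-C2+C3+2*x) + 2*π*((2*(j1:ℤ)-j2+j3 : ℤ):ℝ)*y)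
      + 4*cos (2*π*(C2+C3+2*x) + 2*π*(((j2:ℤ)+j3 : ℤ):ℝ)*y)
      + 4*cos (2*π*(C2-C3) + 2*π*(((j2:ℤ)-j3 : ℤ):ℝ)*y) := by
    intro y
    show (2*cos (2*π*(C1 + (j1:ℝ)*y + x)))^2*(2*cos (2*π*(C2 + (j2:ℝ)*y + x)))
        *(2*cos (2*π*(C3 + (j3:ℝ)*y + x))) = _
    rw [key2]
    have h₁ : (2*π*(C1 + (j1:ℝ)*y + x) + 2*π*(C1 + (j1:ℝ)*y + x)) + (2*π*(C2 + (j2:ℝ)*y + x) + 2*π*(C3 + (j3:ℝ)*y + x))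
        = 2*π*(2*C1+C2+C3+4*x) + 2*π*((2*(j1:ℤ)+j2+j3 : ℤ):ℝ)*y := by push_cast; ring
    have h₂ : (2*π*(C1 + (j1:ℝ)*y + x) + 2*π*(C1 + (j1:ℝ)*y + x)) - (2*π*(C2 + (j2:ℝ)*y + x) + 2*π*(C3 + (j3:ℝ)*y + x))
        = 2*π*(2*C1-C2-C3) + 2*π*((2*(j1:ℤ)-j2-j3 : ℤ):ℝ)*y := by push_cast; ring
    have h₃ : (2*π*(C1 + (j1:ℝ)*y + x) + 2*π*(C1 + (j1:ℝ)*y + x)) + (2*π*(C2 + (j2:ℝ)*y + x) - 2*π*(C3 + (j3:ℝ)*y + x))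
        = 2*π*(2*C1+C2-C3+2*x) + 2*π*((2*(j1:ℤ)+j2-j3 : ℤ):ℝ)*y := by push_cast; ring
    have h₄ : (2*π*(C1 + (j1:ℝ)*y + x) + 2*π*(C1 + (j1:ℝ)*y + x)) - (2*π*(C2 + (j2:ℝ)*y + x) - 2*π*(C3 + (j3:ℝ)*y + x))
        = 2*π*(2*C1-C2+C3+2*x) + 2*π*((2*(j1:ℤ)-j2+j3 : ℤ):ℝ)*y := by push_cast; ring
    have h₅ : 2*π*(C2 + (j2:ℝ)*y + x) + 2*π*(C3 + (j3:ℝ)*y + x)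
        = 2*π*(C2+C3+2*x) + 2*π*(((j2:ℤ)+j3 : ℤ):ℝ)*y := by push_cast; ring
    have h₆ : 2*π*(C2 + (j2:ℝ)*y + x) - 2*π*(C3 + (j3:ℝ)*y + x)
        = 2*π*(C2-C3) + 2*π*(((j2:ℤ)-j3 : ℤ):ℝ)*y := by push_cast; ring
    rw [h₁, h₂, h₃, h₄, h₅, h₆]
  rw [intervalIntegral.integral_congr (fun y _ => expand y)]
  rw [intervalIntegral.integral_add (((((ii2 _ _ _).add (ii2 _ _ _)).add (ii2 _ _ _)).add (ii2 _ _ _)).add (ii2 _ _ _)) (ii2 _ _ _),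
      intervalIntegral.integral_add ((((ii2 _ _ _).add (ii2 _ _ _)).add (ii2 _ _ _)).add (ii2 _ _ _)) (ii2 _ _ _),
      intervalIntegral.integral_add (((ii2 _ _ _).add (ii2 _ _ _)).add (ii2 _ _ _)) (ii2 _ _ _),
      intervalIntegral.integral_add ((ii2 _ _ _).add (ii2 _ _ _)) (ii2 _ _ _),
      intervalIntegral.integral_add (ii2 _ _ _) (ii2 _ _ _)]
  rw [int2cosIf 2 (2*π*(2*C1+C2-C3+2*x)) (2*(j1:ℤ)+j2-j3)]
  rw [int2cos _ _ _ (by omega), int2cos _ _ _ (by omega),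
      int2cos _ _ _ (by omega), int2cos _ _ _ (by omega), int2cos _ _ _ (by omega)]
  have hcond : (2*(j1:ℤ)+(j2:ℤ)-(j3:ℤ) = 0) ↔ (2*j1+j2 = j3) := by omega
  simp only [hcond]
  have harg : 2*π*(2*C1+C2-C3+2*x)
      = 2*π*((j1:ℝ)*((j1:ℝ)-1)*ω + C2 - C3 + 2*x) := by
    rw [hC1]; ring
  rw [harg]
  ring

/-- the value of the inner `y`-integral of one summand -/
noncomputable def gterm (ω : ℝ) (j1 j2 j3 : ℕ) (x : ℝ) : ℝ :=
  if (j1 < j2 ∧ j2 < j3) ∧ 2*j1 + j2 = j3 ∧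
      ((Even j1 ∧ Odd j2 ∧ Odd j3) ∨ (Odd j1 ∧ Even j2 ∧ Even j3)) then
    2*Real.cos (2*π*((j1:ℝ)*((j1:ℝ)-1)*ω + (j2:ℝ)*((j2:ℝ)-1)/2*ω - (j3:ℝ)*((j3:ℝ)-1)/2*ω + 2*x))
  else 0

lemma contT (ω x : ℝ) (j1 j2 j3 : ℕ) : Continuous (fun y : ℝ =>
    if j1 < j2 ∧ j2 < j3 then
      (if Even j1 ∧ Even j2 ∧ Odd j3 then
          v ω j1 x y * v ω j2 x y * (v ω j3 x y) ^ 2 else 0)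
      + (if Even j1 ∧ Odd j2 ∧ Odd j3 then
          (v ω j1 x y) ^ 2 * v ω j2 x y * v ω j3 x y else 0)
      + (if Odd j1 ∧ Odd j2 ∧ Even j3 then
          v ω j1 x y * v ω j2 x y * (v ω j3 x y) ^ 2 else 0)
      + (if Odd j1 ∧ Even j2 ∧ Even j3 then
          (v ω j1 x y) ^ 2 * v ω j2 x y * v ω j3 x y else 0)
    else 0) := by
  simp only [← Nat.not_even_iff_odd]
  by_cases h0 : j1 < j2 ∧ j2 < j3 <;>
  by_cases hE1 : Even j1 <;> by_cases hE2 : Even j2 <;> by_cases hE3 : Even j3 <;>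
  simp only [h0, hE1, hE2, hE3, not_true, not_false_iff, true_and, and_true, false_and,
    and_false, if_true, if_false, add_zero, zero_add, v] <;>
  fun_prop

lemma innerT (ω x : ℝ) (j1 j2 j3 : ℕ) :
    (∫ y in (0:ℝ)..1,
      if j1 < j2 ∧ j2 < j3 then
        (if Even j1 ∧ Even j2 ∧ Odd j3 then
            v ω j1 x y * v ω j2 x y * (v ω j3 x y) ^ 2 else 0)
        + (if Even j1 ∧ Odd j2 ∧ Odd j3 then
            (v ω j1 x y) ^ 2 * v ω j2 x y * v ω j3 x y else 0)
        + (if Odd j1 ∧ Odd j2 ∧ Even j3 then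
            v ω j1 x y * v ω j2 x y * (v ω j3 x y) ^ 2 else 0)
        + (if Odd j1 ∧ Even j2 ∧ Even j3 then
            (v ω j1 x y) ^ 2 * v ω j2 x y * v ω j3 x y else 0)
      else 0) = gterm ω j1 j2 j3 x := by
  by_cases hord : j1 < j2 ∧ j2 < j3
  swap
  · simp [hord, gterm]
  obtain ⟨h12, h23⟩ := hord
  simp only [if_pos (And.intro h12 h23), ← Nat.not_even_iff_odd]
  by_cases hE1 : Even j1 <;> by_cases hE2 : Even j2 <;> by_cases hE3 : Even j3 <;>
  simp only [hE1, hE2, hE3, not_true, not_false_iff, true_and, and_true, false_and,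
    and_false, if_true, if_false, add_zero, zero_add] <;>
  first
  | (rw [inner1 ω j1 j2 j3 h12 h23 x]
     simp [gterm, hE1, hE2, hE3, ← Nat.not_even_iff_odd, h12, h23])
  | (rw [inner2 ω j1 j2 j3 h12 h23 x]
     simp [gterm, hE1, hE2, hE3, ← Nat.not_even_iff_odd, h12, h23])
  | simp [gterm, hE1, hE2, hE3, ← Nat.not_even_iff_odd, h12, h23]

lemma intg0 (ω : ℝ) (j1 j2 j3 : ℕ) : ∫ x in (0:ℝ)..1, gterm ω j1 j2 j3 x = 0 := by
  by_cases hc : (j1 < j2 ∧ j2 < j3) ∧ 2*j1 + j2 = j3 ∧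
      ((Even j1 ∧ Odd j2 ∧ Odd j3) ∨ (Odd j1 ∧ Even j2 ∧ Even j3))
  · have hg : ∀ x : ℝ, gterm ω j1 j2 j3 x
        = 2*Real.cos ((2*π*((j1:ℝ)*((j1:ℝ)-1)*ω + (j2:ℝ)*((j2:ℝ)-1)/2*ω - (j3:ℝ)*((j3:ℝ)-1)/2*ω)) + 2*π*(((2:ℤ)):ℝ)*x) := by
      intro x
      unfold gterm
      rw [if_pos hc]
      congr 1
      push_cast; ring
    rw [intervalIntegral.integral_congr
      (g := fun x => 2*Real.cos ((2*π*((j1:ℝ)*((j1:ℝ)-1)*ω + (j2:ℝ)*((j2:ℝ)-1)/2*ω - (j3:ℝ)*((j3:ℝ)-1)/2*ω)) + 2*π*(((2:ℤ)):ℝ)*x))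
      (fun x _ => hg x)]
    exact int2cos 2 _ 2 (by norm_num)
  · simp [gterm, hc]

/-- The mixed third/first power parity terms integrate to zero:
`∫₀¹∫₀¹ ∑_{1≤j₁<j₂<j₃≤n} [1{eeo}·v_{j₁}v_{j₂}v_{j₃}² + 1{eoo}·v_{j₁}²v_{j₂}v_{j₃}
  + 1{ooe}·v_{j₁}v_{j₂}v_{j₃}² + 1{oee}·v_{j₁}²v_{j₂}v_{j₃}] dx dy = 0`. -/
theorem stmt_4 (ω : ℝ) (n : ℕ) (hn : 1 ≤ n) :
    (∫ x in (0:ℝ)..1, ∫ y in (0:ℝ)..1,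
      ∑ j₁ ∈ Finset.Icc 1 n, ∑ j₂ ∈ Finset.Icc 1 n, ∑ j₃ ∈ Finset.Icc 1 n,
        if j₁ < j₂ ∧ j₂ < j₃ then
          (if Even j₁ ∧ Even j₂ ∧ Odd j₃ then
              v ω j₁ x y * v ω j₂ x y * (v ω j₃ x y) ^ 2 else 0)
          + (if Even j₁ ∧ Odd j₂ ∧ Odd j₃ then
              (v ω j₁ x y) ^ 2 * v ω j₂ x y * v ω j₃ x y else 0)
          + (if Odd j₁ ∧ Odd j₂ ∧ Even j₃ then
              v ω j₁ x y * v ω j₂ x y * (v ω j₃ x y) ^ 2 else 0)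
          + (if Odd j₁ ∧ Even j₂ ∧ Even j₃ then
              (v ω j₁ x y) ^ 2 * v ω j₂ x y * v ω j₃ x y else 0)
        else 0) = 0 := by
  have hinner : ∀ x : ℝ, (∫ y in (0:ℝ)..1,
      ∑ j₁ ∈ Finset.Icc 1 n, ∑ j₂ ∈ Finset.Icc 1 n, ∑ j₃ ∈ Finset.Icc 1 n,
        if j₁ < j₂ ∧ j₂ < j₃ then
          (if Even j₁ ∧ Even j₂ ∧ Odd j₃ then
              v ω j₁ x y * v ω j₂ x y * (v ω j₃ x y) ^ 2 else 0)
          + (if Even j₁ ∧ Odd j₂ ∧ Odd j₃ then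
              (v ω j₁ x y) ^ 2 * v ω j₂ x y * v ω j₃ x y else 0)
          + (if Odd j₁ ∧ Odd j₂ ∧ Even j₃ then
              v ω j₁ x y * v ω j₂ x y * (v ω j₃ x y) ^ 2 else 0)
          + (if Odd j₁ ∧ Even j₂ ∧ Even j₃ then
              (v ω j₁ x y) ^ 2 * v ω j₂ x y * v ω j₃ x y else 0)
        else 0) = ∑ j₁ ∈ Finset.Icc 1 n, ∑ j₂ ∈ Finset.Icc 1 n, ∑ j₃ ∈ Finset.Icc 1 n,
          gterm ω j₁ j₂ j₃ x := by
    intro x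
    rw [intervalIntegral.integral_finset_sum (fun j₁ _ =>
      ((continuous_finset_sum _ fun j₂ _ => continuous_finset_sum _ fun j₃ _ =>
        contT ω x j₁ j₂ j₃).intervalIntegrable 0 1))]
    refine Finset.sum_congr rfl fun j₁ _ => ?_
    rw [intervalIntegral.integral_finset_sum (fun j₂ _ =>
      ((continuous_finset_sum _ fun j₃ _ => contT ω x j₁ j₂ j₃).intervalIntegrable 0 1))]
    refine Finset.sum_congr rfl fun j₂ _ => ?_
    rw [intervalIntegral.integral_finset_sum (fun j₃ _ =>
      ((contT ω x j₁ j₂ j₃).intervalIntegrable 0 1))]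
    exact Finset.sum_congr rfl fun j₃ _ => innerT ω x j₁ j₂ j₃
  rw [intervalIntegral.integral_congr (fun x _ => hinner x)]
  have contg : ∀ j₁ j₂ j₃ : ℕ, Continuous (fun x : ℝ => gterm ω j₁ j₂ j₃ x) := by
    intro j₁ j₂ j₃
    unfold gterm
    by_cases hc : (j₁ < j₂ ∧ j₂ < j₃) ∧ 2*j₁ + j₂ = j₃ ∧
        ((Even j₁ ∧ Odd j₂ ∧ Odd j₃) ∨ (Odd j₁ ∧ Even j₂ ∧ Even j₃))
    · simp only [if_pos hc]; fun_prop
    · simp only [if_neg hc]; fun_prop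
  rw [intervalIntegral.integral_finset_sum (fun j₁ _ =>
    ((continuous_finset_sum _ fun j₂ _ => continuous_finset_sum _ fun j₃ _ =>
      contg j₁ j₂ j₃).intervalIntegrable 0 1))]
  refine Finset.sum_eq_zero fun j₁ _ => ?_
  rw [intervalIntegral.integral_finset_sum (fun j₂ _ =>
    ((continuous_finset_sum _ fun j₃ _ => contg j₁ j₂ j₃).intervalIntegrable 0 1))]
  refine Finset.sum_eq_zero fun j₂ _ => ?_
  rw [intervalIntegral.integral_finset_sum (fun j₃ _ =>
    ((contg j₁ j₂ j₃).intervalIntegrable 0 1))]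
  exact Finset.sum_eq_zero fun j₃ _ => intg0 ω j₁ j₂ j₃
end

section
/- For every ω ∈ ℝ, every integer k ≥ 1 and all positive integers j₁, …, j_k, one has ∫₀¹∫₀¹ ∏_{s=1}^{k} v_{j_s}(x,y) dx dy = Re ∑_{a} exp(πi·ω·∑_{s=1}^{k} a_s j_s²), where the sum ranges over all vectors a = (a₁,…,a_k) ∈ {−1, +1}^k satisfying ∑_{s=1}^{k} a_s = 0 and ∑_{s=1}^{k} a_s j_s = 0. -/
open MeasureTheory Real

lemma prod_v_eq (ω : ℝ) (k : ℕ) (j : Fin k → ℕ) (x y : ℝ) :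
    ((∏ s, v ω (j s) x y : ℝ) : ℂ) =
      ∑ a ∈ Fintype.piFinset (fun _ : Fin k => ({-1, 1} : Finset ℤ)),
        Complex.exp (2 * (Real.pi:ℂ) * Complex.I *
          ((∑ s, (a s : ℂ) * ((j s : ℂ) * ((j s : ℂ) - 1) / 2 * (ω:ℂ))) +
           (∑ s, (a s : ℂ) * (j s : ℂ)) * (y:ℂ) + (∑ s, (a s : ℂ)) * (x:ℂ))) := by
  have hterm : ∀ s : Fin k, ((v ω (j s) x y : ℝ) : ℂ) =
      ∑ a ∈ ({-1, 1} : Finset ℤ), Complex.exp (2 * (Real.pi:ℂ) * Complex.I * (a : ℂ) *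
        ((j s : ℂ) * ((j s : ℂ) - 1) / 2 * (ω:ℂ) + (j s : ℂ) * (y:ℂ) + (x:ℂ))) := by
    intro s
    have h1 : ((v ω (j s) x y : ℝ) : ℂ) =
        2 * Complex.cos (2 * (Real.pi:ℂ) *
          ((j s : ℂ) * ((j s : ℂ) - 1) / 2 * (ω:ℂ) + (j s : ℂ) * (y:ℂ) + (x:ℂ))) := by
      unfold v; push_cast; ring_nf
    rw [h1, Complex.two_cos]
    rw [Finset.sum_insert (by decide), Finset.sum_singleton]
    push_cast
    rw [add_comm]; congr 1 <;> congr 1 <;> ring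
  rw [Complex.ofReal_prod]
  simp only [hterm]
  rw [Finset.prod_univ_sum]
  refine Finset.sum_congr rfl fun a _ => ?_
  rw [← Complex.exp_sum]
  congr 1
  simp only [mul_add, Finset.mul_sum, Finset.sum_mul, ← Finset.sum_add_distrib]
  exact Finset.sum_congr rfl fun s _ => by ring

lemma integral_exp_int (n : ℤ) :
    (∫ x in (0:ℝ)..1, Complex.exp (2 * (Real.pi:ℂ) * Complex.I * n * x)) =
      if n = 0 then 1 else 0 := by
  rcases eq_or_ne n 0 with h | h
  · simp [h]
  · rw [if_neg h]
    have hc : (2 * (Real.pi:ℂ) * Complex.I * n) ≠ 0 := by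
      simp [Real.pi_ne_zero, Complex.I_ne_zero, h, Complex.ofReal_ne_zero]
    rw [show (fun x : ℝ => Complex.exp (2 * (Real.pi:ℂ) * Complex.I * n * x)) =
        fun x : ℝ => Complex.exp ((2 * (Real.pi:ℂ) * Complex.I * n) * x) from rfl,
      integral_exp_mul_complex hc]
    have h1 : (2 * (Real.pi:ℂ) * Complex.I * n) * (1:ℝ) = n * (2 * (Real.pi:ℂ) * Complex.I) := by
      push_cast; ring
    rw [h1, Complex.exp_int_mul_two_pi_mul_I]
    simp

lemma inner_integral (ω : ℝ) (k : ℕ) (j : Fin k → ℕ) (x : ℝ) :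
    (∫ y in (0:ℝ)..1, ∏ s, v ω (j s) x y) =
      (∑ a ∈ Fintype.piFinset (fun _ : Fin k => ({-1, 1} : Finset ℤ)),
        if (∑ s, a s * (j s : ℤ)) = 0 then
          Complex.exp (2 * (Real.pi:ℂ) * Complex.I *
            ((∑ s, (a s : ℂ) * ((j s : ℂ) * ((j s : ℂ) - 1) / 2 * (ω:ℂ))) +
              ((∑ s, a s : ℤ) : ℂ) * (x:ℂ)))
        else 0).re := by
  set A := Fintype.piFinset (fun _ : Fin k => ({-1, 1} : Finset ℤ)) with hA
  have hcont : ∀ a : Fin k → ℤ, Continuous (fun y : ℝ =>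
      Complex.exp (2 * (Real.pi:ℂ) * Complex.I *
        ((∑ s, (a s : ℂ) * ((j s : ℂ) * ((j s : ℂ) - 1) / 2 * (ω:ℂ))) +
          (∑ s, (a s : ℂ) * (j s : ℂ)) * (y:ℂ) + (∑ s, (a s : ℂ)) * (x:ℂ)))) := by
    intro a; fun_prop
  have hint : ∀ a ∈ A, IntervalIntegrable (fun y : ℝ =>
      Complex.exp (2 * (Real.pi:ℂ) * Complex.I *
        ((∑ s, (a s : ℂ) * ((j s : ℂ) * ((j s : ℂ) - 1) / 2 * (ω:ℂ))) +
          (∑ s, (a s : ℂ) * (j s : ℂ)) * (y:ℂ) + (∑ s, (a s : ℂ)) * (x:ℂ))))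
      MeasureTheory.volume 0 1 := fun a _ => (hcont a).intervalIntegrable 0 1
  calc (∫ y in (0:ℝ)..1, ∏ s, v ω (j s) x y)
      = ∫ y in (0:ℝ)..1, Complex.reCLM (∑ a ∈ A,
          Complex.exp (2 * (Real.pi:ℂ) * Complex.I *
            ((∑ s, (a s : ℂ) * ((j s : ℂ) * ((j s : ℂ) - 1) / 2 * (ω:ℂ))) +
              (∑ s, (a s : ℂ) * (j s : ℂ)) * (y:ℂ) + (∑ s, (a s : ℂ)) * (x:ℂ)))) := by
        refine intervalIntegral.integral_congr fun y _ => ?_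
        rw [show (∏ s, v ω (j s) x y) = ((∏ s, v ω (j s) x y : ℝ) : ℂ).re from
          (Complex.ofReal_re _).symm, prod_v_eq]
        rfl
    _ = Complex.reCLM (∑ a ∈ A, ∫ y in (0:ℝ)..1,
          Complex.exp (2 * (Real.pi:ℂ) * Complex.I *
            ((∑ s, (a s : ℂ) * ((j s : ℂ) * ((j s : ℂ) - 1) / 2 * (ω:ℂ))) +
              (∑ s, (a s : ℂ) * (j s : ℂ)) * (y:ℂ) + (∑ s, (a s : ℂ)) * (x:ℂ)))) := by
        rw [← intervalIntegral.integral_finset_sum hint,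
          ContinuousLinearMap.intervalIntegral_comp_comm _
            ((continuous_finset_sum A fun a _ => hcont a).intervalIntegrable 0 1)]
    _ = _ := by
        rw [Complex.reCLM_apply]
        congr 1
        refine Finset.sum_congr rfl fun a _ => ?_
        have hM : (∑ s, (a s : ℂ) * (j s : ℂ)) = ((∑ s, a s * (j s : ℤ) : ℤ) : ℂ) := by
          push_cast; ring
        have hN : (∑ s, (a s : ℂ)) = ((∑ s, a s : ℤ) : ℂ) := by push_cast; ring
        have hsplit : ∀ y : ℝ, Complex.exp (2 * (Real.pi:ℂ) * Complex.I *
            ((∑ s, (a s : ℂ) * ((j s : ℂ) * ((j s : ℂ) - 1) / 2 * (ω:ℂ))) +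
              (∑ s, (a s : ℂ) * (j s : ℂ)) * (y:ℂ) + (∑ s, (a s : ℂ)) * (x:ℂ))) =
            Complex.exp (2 * (Real.pi:ℂ) * Complex.I *
              ((∑ s, (a s : ℂ) * ((j s : ℂ) * ((j s : ℂ) - 1) / 2 * (ω:ℂ))) +
                ((∑ s, a s : ℤ) : ℂ) * (x:ℂ))) *
            Complex.exp (2 * (Real.pi:ℂ) * Complex.I * ((∑ s, a s * (j s : ℤ) : ℤ) : ℂ) * (y:ℂ)) := by
          intro y
          rw [← Complex.exp_add, hM, hN]
          congr 1
          ring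
        simp only [hsplit]
        rw [intervalIntegral.integral_const_mul, integral_exp_int]
        split_ifs <;> simp


/-- `∫₀¹∫₀¹ ∏_{s=1}^k v_{j_s} dx dy = Re ∑_{a ∈ {±1}^k, a⊥1, a⊥j} exp(πiω ∑_s a_s j_s²)`. -/
theorem stmt_6 (ω : ℝ) (k : ℕ) (hk : 1 ≤ k) (j : Fin k → ℕ) (hj : ∀ s, 1 ≤ j s) :
    (∫ x in (0:ℝ)..1, ∫ y in (0:ℝ)..1, ∏ s, v ω (j s) x y) =
      (∑ a ∈ Fintype.piFinset (fun _ : Fin k => ({-1, 1} : Finset ℤ)),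
        if (∑ s, a s) = 0 ∧ (∑ s, a s * (j s : ℤ)) = 0 then
          Complex.exp ((Real.pi : ℂ) * Complex.I * (ω : ℂ) *
            (∑ s, (a s : ℂ) * (j s : ℂ) ^ 2))
        else 0).re := by
  set A := Fintype.piFinset (fun _ : Fin k => ({-1, 1} : Finset ℤ)) with hA
  have hcont : ∀ a : Fin k → ℤ, Continuous (fun x : ℝ =>
      if (∑ s, a s * (j s : ℤ)) = 0 then
        Complex.exp (2 * (Real.pi:ℂ) * Complex.I *
          ((∑ s, (a s : ℂ) * ((j s : ℂ) * ((j s : ℂ) - 1) / 2 * (ω:ℂ))) +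
            ((∑ s, a s : ℤ) : ℂ) * (x:ℂ)))
      else 0) := by
    intro a
    by_cases h : (∑ s, a s * (j s : ℤ)) = 0
    · simp only [if_pos h]; fun_prop
    · simp only [if_neg h]; exact continuous_const
  have hint : ∀ a ∈ A, IntervalIntegrable (fun x : ℝ =>
      if (∑ s, a s * (j s : ℤ)) = 0 then
        Complex.exp (2 * (Real.pi:ℂ) * Complex.I *
          ((∑ s, (a s : ℂ) * ((j s : ℂ) * ((j s : ℂ) - 1) / 2 * (ω:ℂ))) +
            ((∑ s, a s : ℤ) : ℂ) * (x:ℂ)))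
      else 0) MeasureTheory.volume 0 1 := fun a _ => (hcont a).intervalIntegrable 0 1
  calc (∫ x in (0:ℝ)..1, ∫ y in (0:ℝ)..1, ∏ s, v ω (j s) x y)
      = ∫ x in (0:ℝ)..1, Complex.reCLM (∑ a ∈ A,
          if (∑ s, a s * (j s : ℤ)) = 0 then
            Complex.exp (2 * (Real.pi:ℂ) * Complex.I *
              ((∑ s, (a s : ℂ) * ((j s : ℂ) * ((j s : ℂ) - 1) / 2 * (ω:ℂ))) +
                ((∑ s, a s : ℤ) : ℂ) * (x:ℂ)))
          else 0) := by
        exact intervalIntegral.integral_congr fun x _ => inner_integral ω k j x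
    _ = Complex.reCLM (∑ a ∈ A, ∫ x in (0:ℝ)..1,
          if (∑ s, a s * (j s : ℤ)) = 0 then
            Complex.exp (2 * (Real.pi:ℂ) * Complex.I *
              ((∑ s, (a s : ℂ) * ((j s : ℂ) * ((j s : ℂ) - 1) / 2 * (ω:ℂ))) +
                ((∑ s, a s : ℤ) : ℂ) * (x:ℂ)))
          else 0) := by
        rw [← intervalIntegral.integral_finset_sum hint,
          ContinuousLinearMap.intervalIntegral_comp_comm _
            ((continuous_finset_sum A fun a _ => hcont a).intervalIntegrable 0 1)]
    _ = _ := by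
        rw [Complex.reCLM_apply]
        congr 1
        refine Finset.sum_congr rfl fun a _ => ?_
        by_cases hM : (∑ s, a s * (j s : ℤ)) = 0
        · simp only [if_pos hM]
          have hsplit : ∀ x : ℝ, Complex.exp (2 * (Real.pi:ℂ) * Complex.I *
              ((∑ s, (a s : ℂ) * ((j s : ℂ) * ((j s : ℂ) - 1) / 2 * (ω:ℂ))) +
                ((∑ s, a s : ℤ) : ℂ) * (x:ℂ))) =
              Complex.exp (2 * (Real.pi:ℂ) * Complex.I *
                (∑ s, (a s : ℂ) * ((j s : ℂ) * ((j s : ℂ) - 1) / 2 * (ω:ℂ)))) *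
              Complex.exp (2 * (Real.pi:ℂ) * Complex.I * ((∑ s, a s : ℤ) : ℂ) * (x:ℂ)) := by
            intro x; rw [← Complex.exp_add]; congr 1; ring
          simp only [hsplit]
          rw [intervalIntegral.integral_const_mul, integral_exp_int]
          by_cases hN : (∑ s, a s) = 0
          · rw [if_pos hN, if_pos ⟨hN, hM⟩, mul_one]
            congr 1
            have hMC : (∑ s, (a s : ℂ) * (j s : ℂ)) = 0 := by
              have : ((∑ s, a s * (j s : ℤ) : ℤ) : ℂ) = 0 := by rw [hM]; norm_num
              push_cast at this
              convert this using 2 with s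
            have h2 : (∑ s, (a s : ℂ) * ((j s : ℂ) * ((j s : ℂ) - 1) / 2 * (ω:ℂ))) * 2
                = (ω:ℂ) * (∑ s, (a s : ℂ) * (j s : ℂ) ^ 2)
                  - (ω:ℂ) * (∑ s, (a s : ℂ) * (j s : ℂ)) := by
              rw [Finset.sum_mul, Finset.mul_sum, Finset.mul_sum, ← Finset.sum_sub_distrib]
              exact Finset.sum_congr rfl fun s _ => by ring
            linear_combination (Real.pi : ℂ) * Complex.I * h2
              - (Real.pi : ℂ) * Complex.I * (ω:ℂ) * hMC
          · rw [if_neg hN, if_neg (fun h => hN h.1), mul_zero]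
        · simp only [if_neg hM, if_neg (fun h : _ ∧ _ => hM h.2),
            intervalIntegral.integral_zero]
end
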